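/- arXiv:1907.01127 — 10 statements merged into one kernel-verified Lean document; each statement's English description precedes it below -/
import Mathlib

section
/- Let Γ_{ij} ∈ ℝ^{d×d} have strictly positive entries and Γ_i ∈ ℝ^d have strictly positive entries. Over all pairs (A,v) with A ∈ ℝ^{d×d}_{≥0}, v ∈ ℝ^d_{≥0}, and A𝟙 = v, the quantity D_Φ(A,Γ_{ij}) + D_Φ(v,Γ_i) is uniquely minimized at A'(x_i,x_j) = Γ_{ij}(x_i,x_j)·√(Γ_i(x_i)/Σ_x Γ_{ij}(x_i,x)) and v'(x_i) = Γ_i(x_i)·√(Σ_x Γ_{ij}(x_i,x)/Γ_i(x_i)). -/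
noncomputable section

/-- Bregman divergence (negative entropy) between two vectors in `ℝ^d_{≥0}`,
the second having strictly positive entries; `0 log 0 = 0`. -/
def bregV {d : ℕ} (p q : Fin d → ℝ) : ℝ :=
  ∑ x, (p x * Real.log (p x / q x) - p x + q x)

/-- Bregman divergence (negative entropy) between two matrices, read
entrywise. -/
def bregM {d : ℕ} (P Q : Fin d → Fin d → ℝ) : ℝ :=
  ∑ x, ∑ y, (P x y * Real.log (P x y / Q x y) - P x y + Q x y)

lemma breg_term_nonneg {p q : ℝ} (hp : 0 ≤ p) (hq : 0 < q) :
    0 ≤ p * Real.log (p / q) - p + q := by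
  rcases eq_or_lt_of_le hp with h | h
  · simp [← h]; linarith
  · have h1 : Real.log (q / p) ≤ q / p - 1 := Real.log_le_sub_one_of_pos (by positivity)
    have h2 : Real.log (p / q) = - Real.log (q / p) := by
      rw [← Real.log_inv]; congr 1; field_simp
    have h3 := mul_le_mul_of_nonneg_left h1 h.le
    have h4 : p * (q / p - 1) = q - p := by field_simp
    nlinarith

lemma breg_term_pos {p q : ℝ} (hp : 0 ≤ p) (hq : 0 < q) (hne : p ≠ q) :
    0 < p * Real.log (p / q) - p + q := by
  rcases eq_or_lt_of_le hp with h | h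
  · simp [← h]; linarith
  · have hne' : q / p ≠ 1 := by
      intro hc; apply hne; field_simp at hc; linarith
    have h1 : Real.log (q / p) < q / p - 1 := Real.log_lt_sub_one_of_pos (by positivity) hne'
    have h2 : Real.log (p / q) = - Real.log (q / p) := by
      rw [← Real.log_inv]; congr 1; field_simp
    have h3 := mul_lt_mul_of_pos_left h1 h
    have h4 : p * (q / p - 1) = q - p := by field_simp
    nlinarith

lemma mul_log_div_split {p q r : ℝ} (hp : 0 ≤ p) (hq : 0 < q) (hr : 0 < r) :
    p * Real.log (p / q) = p * Real.log (p / r) + p * Real.log (r / q) := by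
  rcases eq_or_lt_of_le hp with h | h
  · simp [← h]
  · rw [← mul_add, ← Real.log_mul (by positivity) (by positivity)]
    congr 2
    field_simp

/-- The Bregman projection enforcing the row-consistency
constraint `A𝟙 = v` has the stated closed form, and it is the unique
minimizer. -/
theorem stmt_3 {d : ℕ} (hd : 1 ≤ d)
    (Γij : Fin d → Fin d → ℝ) (Γi : Fin d → ℝ)
    (hΓij : ∀ x y, 0 < Γij x y) (hΓi : ∀ x, 0 < Γi x)
    (A' : Fin d → Fin d → ℝ) (v' : Fin d → ℝ)
    (hA' : ∀ x y, A' x y = Γij x y * Real.sqrt (Γi x / ∑ z, Γij x z))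
    (hv' : ∀ x, v' x = Γi x * Real.sqrt ((∑ z, Γij x z) / Γi x)) :
    (∀ x y, 0 ≤ A' x y) ∧ (∀ x, 0 ≤ v' x) ∧ (∀ x, ∑ y, A' x y = v' x) ∧
    ∀ A : Fin d → Fin d → ℝ, ∀ v : Fin d → ℝ,
      (∀ x y, 0 ≤ A x y) → (∀ x, 0 ≤ v x) → (∀ x, ∑ y, A x y = v x) →
      (A, v) ≠ (A', v') →
      bregM A' Γij + bregV v' Γi < bregM A Γij + bregV v Γi := by
  have hne : Nonempty (Fin d) := ⟨⟨0, hd⟩⟩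
  set s : Fin d → ℝ := fun x => ∑ z, Γij x z with hs_def
  have hs : ∀ x, 0 < s x := fun x =>
    Finset.sum_pos (fun z _ => hΓij x z) Finset.univ_nonempty
  set t : Fin d → ℝ := fun x => Real.sqrt (Γi x / s x) with ht_def
  have ht : ∀ x, 0 < t x := fun x => Real.sqrt_pos.2 (div_pos (hΓi x) (hs x))
  have ht2 : ∀ x, t x ^ 2 = Γi x / s x := fun x =>
    Real.sq_sqrt (div_pos (hΓi x) (hs x)).le
  have hinv : ∀ x, Real.sqrt (s x / Γi x) = (t x)⁻¹ := by
    intro x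
    rw [show s x / Γi x = (Γi x / s x)⁻¹ by rw [inv_div], Real.sqrt_inv]
  set c : Fin d → ℝ := fun x => Real.log (t x) with hc_def
  have hA'eq : ∀ x y, A' x y = Γij x y * t x := fun x y => hA' x y
  have hv'eq : ∀ x, v' x = Γi x * (t x)⁻¹ := by
    intro x; rw [hv' x, hinv x]
  have hA'pos : ∀ x y, 0 < A' x y := by
    intro x y; rw [hA'eq x y]; exact mul_pos (hΓij x y) (ht x)
  have hv'pos : ∀ x, 0 < v' x := by
    intro x; rw [hv'eq x]; exact mul_pos (hΓi x) (inv_pos.2 (ht x))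
  have hlogA' : ∀ x y, Real.log (A' x y / Γij x y) = c x := by
    intro x y
    rw [hA'eq x y, mul_comm, mul_div_assoc, div_self (hΓij x y).ne', mul_one]
  have hlogv' : ∀ x, Real.log (v' x / Γi x) = - c x := by
    intro x
    rw [hv'eq x, mul_comm, mul_div_assoc, div_self (hΓi x).ne', mul_one,
      Real.log_inv]
  have hrowA' : ∀ x, ∑ y, A' x y = v' x := by
    intro x
    have h1 : ∑ y, A' x y = s x * t x := by
      rw [show (∑ y, A' x y) = ∑ y, Γij x y * t x from
        Finset.sum_congr rfl fun y _ => hA'eq x y, ← Finset.sum_mul]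
    have h2 : s x * t x = Γi x * (t x)⁻¹ := by
      have hg : s x * t x ^ 2 = Γi x := by
        have hsne := (hs x).ne'
        rw [ht2 x]; field_simp
      have htne := (ht x).ne'
      field_simp
      nlinarith [hg]
    rw [h1, h2, ← hv'eq x]
  refine ⟨fun x y => (hA'pos x y).le, fun x => (hv'pos x).le, hrowA', ?_⟩
  intro A v hA hv hrow hneq
  -- key decomposition
  have key : bregM A Γij + bregV v Γi
      = (bregM A' Γij + bregV v' Γi) + (bregM A A' + bregV v v') := by
    unfold bregM bregV
    rw [← Finset.sum_add_distrib, ← Finset.sum_add_distrib, ← Finset.sum_add_distrib,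
      ← Finset.sum_add_distrib]
    refine Finset.sum_congr rfl fun x _ => ?_
    have e1 : ∑ y, (A x y * Real.log (A x y / Γij x y) - A x y + Γij x y)
        = (∑ y, (A x y * Real.log (A x y / A' x y) - A x y + A' x y))
          + (c x * v x + s x - v' x) := by
      have hpt : ∀ y, A x y * Real.log (A x y / Γij x y) - A x y + Γij x y
          = (A x y * Real.log (A x y / A' x y) - A x y + A' x y)
            + (c x * A x y + (Γij x y - A' x y)) := by
        intro y
        rw [mul_log_div_split (hA x y) (hΓij x y) (hA'pos x y), hlogA' x y]
        ring
      have hsum : ∑ y, (c x * A x y + (Γij x y - A' x y))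
          = c x * v x + (s x - v' x) := by
        rw [Finset.sum_add_distrib, ← Finset.mul_sum, Finset.sum_sub_distrib,
          hrow x, hrowA' x]
      rw [Finset.sum_congr rfl fun y _ => hpt y, Finset.sum_add_distrib, hsum]
      ring
    have e2 : ∑ y, (A' x y * Real.log (A' x y / Γij x y) - A' x y + Γij x y)
        = c x * v' x + s x - v' x := by
      have hpt : ∀ y, A' x y * Real.log (A' x y / Γij x y) - A' x y + Γij x y
          = c x * A' x y + (Γij x y - A' x y) := by
        intro y; rw [hlogA' x y]; ring
      have hsum : ∑ y, (c x * A' x y + (Γij x y - A' x y))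
          = c x * v' x + (s x - v' x) := by
        rw [Finset.sum_add_distrib, ← Finset.mul_sum, Finset.sum_sub_distrib,
          hrowA' x]
      rw [Finset.sum_congr rfl fun y _ => hpt y, hsum]
      ring
    have e3 : v x * Real.log (v x / Γi x) - v x + Γi x
        = (v x * Real.log (v x / v' x) - v x + v' x)
          + (- (c x) * v x + (Γi x - v' x)) := by
      rw [mul_log_div_split (hv x) (hΓi x) (hv'pos x), hlogv' x]
      ring
    have e4 : v' x * Real.log (v' x / Γi x) - v' x + Γi x
        = - (c x) * v' x + (Γi x - v' x) := by
      rw [hlogv' x]; ring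
    rw [e1, e2, e3, e4]
    ring
  -- strict positivity of the Bregman remainder
  have hMnn : 0 ≤ bregM A A' :=
    Finset.sum_nonneg fun x _ => Finset.sum_nonneg fun y _ =>
      breg_term_nonneg (hA x y) (hA'pos x y)
  have hVnn : 0 ≤ bregV v v' :=
    Finset.sum_nonneg fun x _ => breg_term_nonneg (hv x) (hv'pos x)
  have hpos : 0 < bregM A A' + bregV v v' := by
    by_cases hAA : A = A'
    · have hvv : v ≠ v' := by
        intro hvv; exact hneq (by rw [hAA, hvv])
      obtain ⟨x, hx⟩ := Function.ne_iff.1 hvv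
      have : 0 < bregV v v' :=
        Finset.sum_pos' (fun x _ => breg_term_nonneg (hv x) (hv'pos x))
          ⟨x, Finset.mem_univ x, breg_term_pos (hv x) (hv'pos x) hx⟩
      linarith
    · obtain ⟨x, hx⟩ := Function.ne_iff.1 hAA
      obtain ⟨y, hy⟩ := Function.ne_iff.1 hx
      have : 0 < bregM A A' :=
        Finset.sum_pos'
          (fun x _ => Finset.sum_nonneg fun y _ =>
            breg_term_nonneg (hA x y) (hA'pos x y))
          ⟨x, Finset.mem_univ x,
            Finset.sum_pos' (fun y _ => breg_term_nonneg (hA x y) (hA'pos x y))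
              ⟨y, Finset.mem_univ y, breg_term_pos (hA x y) (hA'pos x y) hy⟩⟩
      linarith
  linarith [key, hpos]
end
end

section
/- Fix dual variables (λ,ξ) with associated primal variables Γ as in the context, fix an edge ij∈E with j∈N_r(i) (so the constraint at i applies to the rows of Γ_{ij}), and let λ' agree with λ except that λ'_{ij}(x) = λ_{ij}(x) + α*(x) for all x∈χ, where α*(x) = (1/2)·log((Γ_{ij}𝟙)(x)/Γ_i(x)). Then L(λ',ξ) − L(λ,ξ) = 2h²(Γ_{ij}𝟙, Γ_i). -/
noncomputable section

/-- Primal edge variable `Γ_{ij}(x_i,x_j)` determined by the dual variables. -/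
def pEdge {V : Type} {d : ℕ} (η : ℝ) (Ce : V × V → Fin d → Fin d → ℝ)
    (lr lc : V × V → Fin d → ℝ) (xie : V × V → ℝ) (e : V × V) (x y : Fin d) : ℝ :=
  Real.exp (-(η * Ce e x y) - lr e x - lc e y - xie e)

/-- Primal vertex variable `Γ_i(x)` determined by the dual variables.  For an
edge `e = (i,j) ∈ E`, the dual `lr e` constrains the rows of `Γ_e` at `i = e.1`
(`j ∈ N_r(i)`) and `lc e` constrains the columns of `Γ_e` at `j = e.2`
(`i ∈ N_c(j)`). -/
def pVtx {V : Type} [Fintype V] [DecidableEq V] {d : ℕ} (E : Finset (V × V))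
    (η : ℝ) (Cv : V → Fin d → ℝ) (lr lc : V × V → Fin d → ℝ) (xiv : V → ℝ)
    (i : V) (x : Fin d) : ℝ :=
  Real.exp (-(η * Cv i x) - xiv i +
    (∑ e ∈ E.filter (fun e => e.1 = i), lr e x) +
    ∑ e ∈ E.filter (fun e => e.2 = i), lc e x)

/-- The Lyapunov function `L(λ, ξ)`. -/
def Lyap {V : Type} [Fintype V] [DecidableEq V] {d : ℕ} (E : Finset (V × V))
    (η : ℝ) (Cv : V → Fin d → ℝ) (Ce : V × V → Fin d → Fin d → ℝ)
    (lr lc : V × V → Fin d → ℝ) (xie : V × V → ℝ) (xiv : V → ℝ) : ℝ :=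
  -(∑ e ∈ E, ∑ x : Fin d, ∑ y : Fin d, pEdge η Ce lr lc xie e x y)
  - (∑ i : V, ∑ x : Fin d, pVtx E η Cv lr lc xiv i x)
  - (∑ e ∈ E, xie e) - (∑ i : V, xiv i)
  + (∑ e ∈ E, ∑ x : Fin d, ∑ y : Fin d, Real.exp (-(η * Ce e x y)))
  + ∑ i : V, ∑ x : Fin d, Real.exp (-(η * Cv i x))

/-- Squared Hellinger distance of two nonnegative vectors. -/
def hell2 {d : ℕ} (p q : Fin d → ℝ) : ℝ :=
  (1 / 2) * ∑ x, (Real.sqrt (p x) - Real.sqrt (q x)) ^ 2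

/-- The row-consistency dual update on an edge `ij ∈ E`
improves the Lyapunov function by exactly twice the squared Hellinger distance
between the row sums of `Γ_{ij}` and `Γ_i`. -/
theorem stmt_5 {V : Type} [Fintype V] [DecidableEq V] {d : ℕ} (hd : 1 ≤ d)
    (E : Finset (V × V)) (η : ℝ) (hη : 0 < η)
    (Cv : V → Fin d → ℝ) (Ce : V × V → Fin d → Fin d → ℝ)
    (lr lc : V × V → Fin d → ℝ) (xie : V × V → ℝ) (xiv : V → ℝ)
    (e₀ : V × V) (he₀ : e₀ ∈ E)
    (αstar : Fin d → ℝ)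
    (hα : ∀ x, αstar x = (1 / 2) *
      Real.log ((∑ y, pEdge η Ce lr lc xie e₀ x y) / pVtx E η Cv lr lc xiv e₀.1 x))
    (lr' : V × V → Fin d → ℝ)
    (hlr' : lr' = Function.update lr e₀ (fun x => lr e₀ x + αstar x)) :
    Lyap E η Cv Ce lr' lc xie xiv - Lyap E η Cv Ce lr lc xie xiv =
      2 * hell2 (fun x => ∑ y, pEdge η Ce lr lc xie e₀ x y)
        (fun x => pVtx E η Cv lr lc xiv e₀.1 x) := by
  classical
  subst hlr'
  set L := Function.update lr e₀ (fun x => lr e₀ x + αstar x) with hL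
  have hrpos : ∀ x, 0 < ∑ y, pEdge η Ce lr lc xie e₀ x y := fun x =>
    Finset.sum_pos (fun y _ => Real.exp_pos _) ⟨⟨0, hd⟩, Finset.mem_univ _⟩
  have hgpos : ∀ x, 0 < pVtx E η Cv lr lc xiv e₀.1 x := fun x => Real.exp_pos _
  -- exp of αstar
  have hexpα : ∀ x, Real.exp (αstar x) =
      Real.sqrt (∑ y, pEdge η Ce lr lc xie e₀ x y) /
        Real.sqrt (pVtx E η Cv lr lc xiv e₀.1 x) := by
    intro x
    rw [hα x, ← Real.sqrt_div (hrpos x).le, Real.sqrt_eq_rpow,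
      Real.rpow_def_of_pos (div_pos (hrpos x) (hgpos x))]
    ring_nf
  -- edge terms
  have hedge_e₀ : ∀ x y, pEdge η Ce L lc xie e₀ x y =
      pEdge η Ce lr lc xie e₀ x y * Real.exp (-(αstar x)) := by
    intro x y
    simp only [pEdge, hL, Function.update_self, ← Real.exp_add]
    ring_nf
  have hedge_other : ∀ e, e ≠ e₀ → ∀ x y,
      pEdge η Ce L lc xie e x y = pEdge η Ce lr lc xie e x y := by
    intro e hne x y
    simp [pEdge, hL, Function.update_of_ne hne]
  -- vertex terms
  have hvtx_i : ∀ x, pVtx E η Cv L lc xiv e₀.1 x =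
      pVtx E η Cv lr lc xiv e₀.1 x * Real.exp (αstar x) := by
    intro x
    have hf : ∑ e ∈ E.filter (fun e => e.1 = e₀.1), L e x
        = (∑ e ∈ E.filter (fun e => e.1 = e₀.1), lr e x) + αstar x := by
      have h1 : ∑ e ∈ E.filter (fun e => e.1 = e₀.1), L e x
          = ∑ e ∈ E.filter (fun e => e.1 = e₀.1),
              (lr e x + if e = e₀ then αstar x else 0) := by
        refine Finset.sum_congr rfl fun e he => ?_
        by_cases h : e = e₀
        · subst h; simp [hL]
        · simp [hL, Function.update_of_ne h, h]
      rw [h1, Finset.sum_add_distrib, Finset.sum_ite_eq' _ e₀]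
      simp [he₀]
    simp only [pVtx, hf, ← Real.exp_add]
    ring_nf
  have hvtx_other : ∀ i, i ≠ e₀.1 → ∀ x,
      pVtx E η Cv L lc xiv i x = pVtx E η Cv lr lc xiv i x := by
    intro i hi x
    have hf : ∑ e ∈ E.filter (fun e => e.1 = i), L e x
        = ∑ e ∈ E.filter (fun e => e.1 = i), lr e x := by
      refine Finset.sum_congr rfl fun e he => ?_
      have : e ≠ e₀ := by
        rintro rfl; exact hi (Finset.mem_filter.mp he).2.symm
      simp [hL, Function.update_of_ne this]
    simp [pVtx, hf]
  -- sum differences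
  have hE : (∑ e ∈ E, ∑ x : Fin d, ∑ y : Fin d, pEdge η Ce L lc xie e x y)
      - (∑ e ∈ E, ∑ x : Fin d, ∑ y : Fin d, pEdge η Ce lr lc xie e x y)
      = (∑ x : Fin d, ∑ y : Fin d, pEdge η Ce L lc xie e₀ x y)
        - ∑ x : Fin d, ∑ y : Fin d, pEdge η Ce lr lc xie e₀ x y := by
    rw [← Finset.sum_sub_distrib]
    refine Finset.sum_eq_single_of_mem e₀ he₀ fun e he hne => ?_
    simp [hedge_other e hne]
  have hV : (∑ i : V, ∑ x : Fin d, pVtx E η Cv L lc xiv i x)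
      - (∑ i : V, ∑ x : Fin d, pVtx E η Cv lr lc xiv i x)
      = (∑ x : Fin d, pVtx E η Cv L lc xiv e₀.1 x)
        - ∑ x : Fin d, pVtx E η Cv lr lc xiv e₀.1 x := by
    rw [← Finset.sum_sub_distrib]
    refine Finset.sum_eq_single_of_mem e₀.1 (Finset.mem_univ _) fun i _ hne => ?_
    simp [hvtx_other i hne]
  have key : ∀ x : Fin d,
      ((∑ y, pEdge η Ce lr lc xie e₀ x y)
        - (∑ y, pEdge η Ce lr lc xie e₀ x y) * Real.exp (-(αstar x)))
      + (pVtx E η Cv lr lc xiv e₀.1 x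
        - pVtx E η Cv lr lc xiv e₀.1 x * Real.exp (αstar x))
      = (Real.sqrt (∑ y, pEdge η Ce lr lc xie e₀ x y)
          - Real.sqrt (pVtx E η Cv lr lc xiv e₀.1 x)) ^ 2 := by
    intro x
    have ha : 0 < Real.sqrt (∑ y, pEdge η Ce lr lc xie e₀ x y) :=
      Real.sqrt_pos.mpr (hrpos x)
    have hb : 0 < Real.sqrt (pVtx E η Cv lr lc xiv e₀.1 x) :=
      Real.sqrt_pos.mpr (hgpos x)
    have ha2 : Real.sqrt (∑ y, pEdge η Ce lr lc xie e₀ x y) ^ 2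
        = ∑ y, pEdge η Ce lr lc xie e₀ x y := Real.sq_sqrt (hrpos x).le
    have hb2 : Real.sqrt (pVtx E η Cv lr lc xiv e₀.1 x) ^ 2
        = pVtx E η Cv lr lc xiv e₀.1 x := Real.sq_sqrt (hgpos x).le
    rw [Real.exp_neg, hexpα x, ← ha2, ← hb2]
    field_simp
    rw [Real.sqrt_sq ha.le, Real.sqrt_sq hb.le]
    ring
  -- put everything together
  unfold Lyap
  rw [show ∀ a b c e f g a' b' : ℝ,
      (-a' - b' - c - e + f + g) - (-a - b - c - e + f + g)
        = -(a' - a) - (b' - b) by intros; ring]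
  rw [hE, hV]
  have hA : ∑ x : Fin d, ∑ y : Fin d, pEdge η Ce L lc xie e₀ x y
      = ∑ x : Fin d, (∑ y, pEdge η Ce lr lc xie e₀ x y) * Real.exp (-(αstar x)) := by
    refine Finset.sum_congr rfl fun x _ => ?_
    rw [Finset.sum_mul]
    exact Finset.sum_congr rfl fun y _ => hedge_e₀ x y
  have hB : ∑ x : Fin d, pVtx E η Cv L lc xiv e₀.1 x
      = ∑ x : Fin d, pVtx E η Cv lr lc xiv e₀.1 x * Real.exp (αstar x) :=
    Finset.sum_congr rfl fun x _ => hvtx_i x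
  have htot : ∑ x : Fin d,
      (-((∑ y, pEdge η Ce lr lc xie e₀ x y) * Real.exp (-(αstar x))
          - ∑ y, pEdge η Ce lr lc xie e₀ x y)
        - (pVtx E η Cv lr lc xiv e₀.1 x * Real.exp (αstar x)
          - pVtx E η Cv lr lc xiv e₀.1 x))
      = ∑ x : Fin d, (Real.sqrt (∑ y, pEdge η Ce lr lc xie e₀ x y)
          - Real.sqrt (pVtx E η Cv lr lc xiv e₀.1 x)) ^ 2 :=
    Finset.sum_congr rfl fun x _ => by linarith [key x]
  simp only [Finset.sum_sub_distrib, Finset.sum_neg_distrib] at htot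
  rw [hA, hB]
  simp only [hell2]
  linarith [htot]
end
end

section
/- Fix dual variables (λ,ξ) with associated primal variables Γ as in the context, fix an edge ij∈E, and let ξ' agree with ξ except that ξ'_{ij} = ξ_{ij} + log s₁ and ξ'_i = ξ_i + log s₂, where s₁ = Σ_{x_i,x_j} Γ_{ij}(x_i,x_j) > 0 and s₂ = Σ_x Γ_i(x) > 0. Then L(λ,ξ') − L(λ,ξ) = (s₁ − log s₁ − 1) + (s₂ − log s₂ − 1) ≥ 0; in particular the normalization update does not decrease L. -/
noncomputable section

/-- The normalization dual update on an edge `ij ∈ E`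
(at `i = e₀.1`) changes `L` by `(s₁ − log s₁ − 1) + (s₂ − log s₂ − 1) ≥ 0`. -/
theorem stmt_6 {V : Type} [Fintype V] [DecidableEq V] {d : ℕ} (hd : 1 ≤ d)
    (E : Finset (V × V)) (η : ℝ) (hη : 0 < η)
    (Cv : V → Fin d → ℝ) (Ce : V × V → Fin d → Fin d → ℝ)
    (lr lc : V × V → Fin d → ℝ) (xie : V × V → ℝ) (xiv : V → ℝ)
    (e₀ : V × V) (he₀ : e₀ ∈ E)
    (s₁ s₂ : ℝ)
    (hs₁ : s₁ = ∑ x : Fin d, ∑ y : Fin d, pEdge η Ce lr lc xie e₀ x y)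
    (hs₂ : s₂ = ∑ x : Fin d, pVtx E η Cv lr lc xiv e₀.1 x)
    (hs₁pos : 0 < s₁) (hs₂pos : 0 < s₂)
    (xie' : V × V → ℝ) (hxie' : xie' = Function.update xie e₀ (xie e₀ + Real.log s₁))
    (xiv' : V → ℝ) (hxiv' : xiv' = Function.update xiv e₀.1 (xiv e₀.1 + Real.log s₂)) :
    Lyap E η Cv Ce lr lc xie' xiv' - Lyap E η Cv Ce lr lc xie xiv =
      (s₁ - Real.log s₁ - 1) + (s₂ - Real.log s₂ - 1) ∧
    0 ≤ Lyap E η Cv Ce lr lc xie' xiv' - Lyap E η Cv Ce lr lc xie xiv := by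
  -- auxiliary facts
  have key : ∀ (t : ℝ), 0 < t → 0 ≤ t - Real.log t - 1 := fun t ht => by
    have := Real.log_le_sub_one_of_pos ht; linarith
  have hexp1 : Real.exp (-Real.log s₁) = s₁⁻¹ := by
    rw [Real.exp_neg, Real.exp_log hs₁pos]
  have hexp2 : Real.exp (-Real.log s₂) = s₂⁻¹ := by
    rw [Real.exp_neg, Real.exp_log hs₂pos]
  have hEdge : ∀ x y : Fin d,
      pEdge η Ce lr lc xie' e₀ x y = pEdge η Ce lr lc xie e₀ x y * s₁⁻¹ := by
    intro x y
    simp only [pEdge, hxie', Function.update_self]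
    rw [← hexp1, ← Real.exp_add]
    congr 1; ring
  have hVtx : ∀ x : Fin d,
      pVtx E η Cv lr lc xiv' e₀.1 x = pVtx E η Cv lr lc xiv e₀.1 x * s₂⁻¹ := by
    intro x
    simp only [pVtx, hxiv', Function.update_self]
    rw [← hexp2, ← Real.exp_add]
    congr 1; ring
  have hS1 : ∑ e ∈ E, ∑ x : Fin d, ∑ y : Fin d, pEdge η Ce lr lc xie' e x y
      = (∑ e ∈ E, ∑ x : Fin d, ∑ y : Fin d, pEdge η Ce lr lc xie e x y) - s₁ + 1 := by
    rw [← Finset.sum_erase_add E _ he₀, ← Finset.sum_erase_add E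
      (fun e => ∑ x : Fin d, ∑ y : Fin d, pEdge η Ce lr lc xie e x y) he₀]
    have h1 : ∑ e ∈ E.erase e₀, ∑ x : Fin d, ∑ y : Fin d, pEdge η Ce lr lc xie' e x y
        = ∑ e ∈ E.erase e₀, ∑ x : Fin d, ∑ y : Fin d, pEdge η Ce lr lc xie e x y :=
      Finset.sum_congr rfl fun e he => by
        have hne := Finset.ne_of_mem_erase he
        simp [pEdge, hxie', Function.update_of_ne hne]
    have h2 : ∑ x : Fin d, ∑ y : Fin d, pEdge η Ce lr lc xie' e₀ x y = 1 := by
      simp only [hEdge, ← Finset.sum_mul]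
      rw [← hs₁, mul_inv_cancel₀ (ne_of_gt hs₁pos)]
    rw [h1, h2, hs₁]; ring
  have hS2 : ∑ i : V, ∑ x : Fin d, pVtx E η Cv lr lc xiv' i x
      = (∑ i : V, ∑ x : Fin d, pVtx E η Cv lr lc xiv i x) - s₂ + 1 := by
    rw [← Finset.sum_erase_add Finset.univ _ (Finset.mem_univ e₀.1),
      ← Finset.sum_erase_add Finset.univ
      (fun i => ∑ x : Fin d, pVtx E η Cv lr lc xiv i x) (Finset.mem_univ e₀.1)]
    have h1 : ∑ i ∈ Finset.univ.erase e₀.1, ∑ x : Fin d, pVtx E η Cv lr lc xiv' i x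
        = ∑ i ∈ Finset.univ.erase e₀.1, ∑ x : Fin d, pVtx E η Cv lr lc xiv i x :=
      Finset.sum_congr rfl fun i hi => by
        have hne := Finset.ne_of_mem_erase hi
        simp [pVtx, hxiv', Function.update_of_ne hne]
    have h2 : ∑ x : Fin d, pVtx E η Cv lr lc xiv' e₀.1 x = 1 := by
      simp only [hVtx, ← Finset.sum_mul]
      rw [← hs₂, mul_inv_cancel₀ (ne_of_gt hs₂pos)]
    rw [h1, h2, hs₂]; ring
  have hX1 : ∑ e ∈ E, xie' e = (∑ e ∈ E, xie e) + Real.log s₁ := by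
    rw [← Finset.sum_erase_add E xie' he₀, ← Finset.sum_erase_add E xie he₀]
    have h1 : ∑ e ∈ E.erase e₀, xie' e = ∑ e ∈ E.erase e₀, xie e :=
      Finset.sum_congr rfl fun e he => by
        simp [hxie', Function.update_of_ne (Finset.ne_of_mem_erase he)]
    rw [h1, hxie', Function.update_self]; ring
  have hX2 : ∑ i : V, xiv' i = (∑ i : V, xiv i) + Real.log s₂ := by
    rw [← Finset.sum_erase_add Finset.univ xiv' (Finset.mem_univ e₀.1),
      ← Finset.sum_erase_add Finset.univ xiv (Finset.mem_univ e₀.1)]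
    have h1 : ∑ i ∈ Finset.univ.erase e₀.1, xiv' i
        = ∑ i ∈ Finset.univ.erase e₀.1, xiv i :=
      Finset.sum_congr rfl fun i hi => by
        simp [hxiv', Function.update_of_ne (Finset.ne_of_mem_erase hi)]
    rw [h1, hxiv', Function.update_self]; ring
  have hdiff : Lyap E η Cv Ce lr lc xie' xiv' - Lyap E η Cv Ce lr lc xie xiv =
      (s₁ - Real.log s₁ - 1) + (s₂ - Real.log s₂ - 1) := by
    simp only [Lyap, hS1, hS2, hX1, hX2]; ring
  refine ⟨hdiff, ?_⟩
  rw [hdiff]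
  have := key s₁ hs₁pos
  have := key s₂ hs₂pos
  linarith
end
end

section
/- Suppose the Lyapunov function L attains its maximum at dual variables (λ*,ξ*), and let (λ^(1),ξ^(1)) be given by λ^(1) = 0, ξ^(1)_{ij} = log Σ_{x_i,x_j} exp(−ηC_{ij}(x_i,x_j)) for every ij∈E, and ξ^(1)_i = log Σ_x exp(−ηC_i(x)) for every i∈V (the dual variables after normalizing every component of exp(−ηC)). Then L(λ*,ξ*) − L(λ^(1),ξ^(1)) ≤ S₀. -/
noncomputable section

/-- The quantity `S`. -/
def Sval {V : Type} [Fintype V] {d : ℕ} (E : Finset (V × V)) (η : ℝ)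
    (Cv : V → Fin d → ℝ) (Ce : V × V → Fin d → Fin d → ℝ) : ℝ :=
  (∑ e ∈ E, (Real.log (∑ x : Fin d, ∑ y : Fin d, Real.exp (-(η * Ce e x y))) +
      ∑ x : Fin d, ∑ y : Fin d, η / (d : ℝ) ^ 2 * Ce e x y)) +
  ∑ i : V, (Real.log (∑ x : Fin d, Real.exp (-(η * Cv i x))) +
      ∑ x : Fin d, η / (d : ℝ) * Cv i x)

/-- `‖ηC/d + exp(−ηC)‖₁`. -/
def l1shift {V : Type} [Fintype V] {d : ℕ} (E : Finset (V × V)) (η : ℝ)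
    (Cv : V → Fin d → ℝ) (Ce : V × V → Fin d → Fin d → ℝ) : ℝ :=
  (∑ i : V, ∑ x : Fin d, |η * Cv i x / (d : ℝ) + Real.exp (-(η * Cv i x))|) +
  ∑ e ∈ E, ∑ x : Fin d, ∑ y : Fin d,
    |η * Ce e x y / (d : ℝ) + Real.exp (-(η * Ce e x y))|

/-- `S₀ = min(‖ηC/d + exp(−ηC)‖₁, S)`. -/
def S0 {V : Type} [Fintype V] {d : ℕ} (E : Finset (V × V)) (η : ℝ)
    (Cv : V → Fin d → ℝ) (Ce : V × V → Fin d → Fin d → ℝ) : ℝ :=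
  min (l1shift E η Cv Ce) (Sval E η Cv Ce)



/-- Jensen for exp, elementary: `card * exp(avg) ≤ ∑ exp`. -/
lemma sum_exp_ge {α : Type*} (s : Finset α) (hs : s.Nonempty) (f : α → ℝ) :
    (s.card : ℝ) * Real.exp ((∑ k ∈ s, f k) / s.card) ≤ ∑ k ∈ s, Real.exp (f k) := by
  have hc : (0:ℝ) < s.card := by exact_mod_cast Finset.card_pos.mpr hs
  set m : ℝ := (∑ k ∈ s, f k) / s.card with hm
  have hsum : ∑ k ∈ s, f k = s.card * m := by rw [hm]; field_simp
  have h1 : ∀ k ∈ s, Real.exp m * (1 + (f k - m)) ≤ Real.exp (f k) := by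
    intro k _
    have := Real.add_one_le_exp (f k - m)
    calc Real.exp m * (1 + (f k - m)) ≤ Real.exp m * Real.exp (f k - m) := by
          apply mul_le_mul_of_nonneg_left (by linarith) (Real.exp_nonneg m)
      _ = Real.exp (f k) := by rw [← Real.exp_add]; ring_nf
  have key : ∑ k ∈ s, Real.exp m * (1 + (f k - m)) = (s.card : ℝ) * Real.exp m := by
    rw [← Finset.mul_sum, Finset.sum_add_distrib, Finset.sum_sub_distrib, Finset.sum_const,
      Finset.sum_const, hsum]
    push_cast; ring
  calc (s.card : ℝ) * Real.exp m = ∑ k ∈ s, Real.exp m * (1 + (f k - m)) := key.symm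
    _ ≤ ∑ k ∈ s, Real.exp (f k) := Finset.sum_le_sum h1

/-- log-sum-exp is at least the average. -/
lemma avg_le_log_sum {α : Type*} (s : Finset α) (hs : s.Nonempty) (f : α → ℝ) :
    (∑ k ∈ s, f k) / s.card ≤ Real.log (∑ k ∈ s, Real.exp (f k)) := by
  have hc : (1:ℝ) ≤ s.card := by exact_mod_cast Finset.card_pos.mpr hs
  have h := sum_exp_ge s hs f
  have hpos : (0:ℝ) < (s.card : ℝ) * Real.exp ((∑ k ∈ s, f k) / s.card) :=
    mul_pos (by linarith) (Real.exp_pos _)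
  calc (∑ k ∈ s, f k) / s.card
      ≤ Real.log ((s.card : ℝ) * Real.exp ((∑ k ∈ s, f k) / s.card)) := by
        rw [Real.log_mul (by linarith) (Real.exp_ne_zero _), Real.log_exp]
        have : 0 ≤ Real.log (s.card : ℝ) := Real.log_nonneg hc
        linarith
    _ ≤ Real.log (∑ k ∈ s, Real.exp (f k)) := Real.log_le_log hpos h

/-- Dual key inequality: `-(A e^{-t}) - t ≤ -1 - log A` for `A > 0`. -/
lemma dual_key (A t : ℝ) (hA : 0 < A) : -(A * Real.exp (-t)) - t ≤ -1 - Real.log A := by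
  have h := Real.add_one_le_exp (Real.log A - t)
  rw [Real.exp_sub, Real.exp_log hA] at h
  have : A * Real.exp (-t) = A / Real.exp t := by rw [Real.exp_neg]; ring
  rw [this]; linarith

/-- `log` minus identity is antitone on `[1, ∞)`. -/
lemma log_sub_mono (a b : ℝ) (ha : 1 ≤ a) (hab : a ≤ b) :
    Real.log b - b ≤ Real.log a - a := by
  have ha0 : 0 < a := by linarith
  have hb0 : 0 < b := by linarith
  have h1 : Real.log (b / a) ≤ b / a - 1 :=
    Real.log_le_sub_one_of_pos (div_pos hb0 ha0)
  rw [Real.log_div (ne_of_gt hb0) (ne_of_gt ha0)] at h1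
  have h2 : b / a - 1 ≤ b - a := by
    rw [div_sub_one (ne_of_gt ha0), div_le_iff₀ ha0]
    nlinarith
  linarith

/-- Key per-edge inequality for `S ≤ l1shift`. -/
lemma edge_key (N : ℕ) (hN : 1 ≤ N) (Z u : ℝ)
    (hZJ : (N:ℝ)^2 * Real.exp u ≤ Z) (hZ : 0 < Z) :
    Real.log Z - Z ≤ -(u * ((N:ℝ) - 1)) := by
  have hN1 : (1:ℝ) ≤ (N:ℝ) := by exact_mod_cast hN
  by_cases hcase : u * ((N:ℝ) - 1) ≤ 1
  · have := Real.log_le_sub_one_of_pos hZ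
    linarith
  · push_neg at hcase
    have hu : 0 < u := by nlinarith
    have hNe : (1:ℝ) ≤ (N:ℝ)^2 * Real.exp u := by
      have h1 : (1:ℝ) ≤ Real.exp u := by
        have := Real.add_one_le_exp u; linarith
      nlinarith
    have hmono := log_sub_mono ((N:ℝ)^2 * Real.exp u) Z hNe hZJ
    have hlog : Real.log ((N:ℝ)^2 * Real.exp u) = 2 * Real.log N + u := by
      rw [Real.log_mul (by positivity) (Real.exp_ne_zero _), Real.log_exp,
        Real.log_pow]
      push_cast; ring
    rw [hlog] at hmono
    -- need: 2 log N + u - N² e^u ≤ -u(N-1), i.e. N² e^u ≥ 2 log N + uN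
    have hlogN : Real.log (N:ℝ) ≤ (N:ℝ) - 1 := by
      have := Real.log_le_sub_one_of_pos (show (0:ℝ) < N by linarith)
      linarith
    have hexp : 1 + u ≤ Real.exp u := by have := Real.add_one_le_exp u; linarith
    have : 2 * Real.log N + u * (N:ℝ) ≤ (N:ℝ)^2 * Real.exp u := by nlinarith
    linarith

lemma sum_arg_edge {d : ℕ} (η : ℝ) (f : Fin d → Fin d → ℝ) (a b : Fin d → ℝ) :
    ∑ x : Fin d, ∑ y : Fin d, (-(η * f x y) - a x - b y)
      = -(η * ∑ x : Fin d, ∑ y : Fin d, f x y) - d * (∑ x, a x) - d * (∑ y, b y) := by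
  have e1 : ∀ x : Fin d, ∑ y : Fin d, (-(η * f x y) - a x - b y)
      = -(η * ∑ y : Fin d, f x y) - d * a x - ∑ y, b y := by
    intro x
    rw [Finset.sum_sub_distrib, Finset.sum_sub_distrib, Finset.sum_const,
      Finset.sum_neg_distrib, ← Finset.mul_sum]
    simp [nsmul_eq_mul]
  rw [Finset.sum_congr rfl (fun x _ => e1 x)]
  rw [Finset.sum_sub_distrib, Finset.sum_sub_distrib, Finset.sum_const,
    Finset.sum_neg_distrib, ← Finset.mul_sum, ← Finset.mul_sum]
  simp [nsmul_eq_mul]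

lemma edge_Z_pos {d : ℕ} (hd : 1 ≤ d) (g : Fin d → Fin d → ℝ) :
    0 < ∑ x : Fin d, ∑ y : Fin d, Real.exp (g x y) := by
  have huniv : (Finset.univ : Finset (Fin d)).Nonempty := ⟨⟨0, hd⟩, Finset.mem_univ _⟩
  exact Finset.sum_pos (fun x _ => Finset.sum_pos (fun y _ => Real.exp_pos _) huniv) huniv

lemma vtx_Z_pos {d : ℕ} (hd : 1 ≤ d) (g : Fin d → ℝ) :
    0 < ∑ x : Fin d, Real.exp (g x) := by
  have huniv : (Finset.univ : Finset (Fin d)).Nonempty := ⟨⟨0, hd⟩, Finset.mem_univ _⟩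
  exact Finset.sum_pos (fun x _ => Real.exp_pos _) huniv

/-- Jensen for the double sum: `d² exp(-η ΣΣf / d²) ≤ ΣΣ exp(-ηf)`. -/
lemma edge_jensen {d : ℕ} (hd : 1 ≤ d) (η : ℝ) (f : Fin d → Fin d → ℝ) :
    (d:ℝ)^2 * Real.exp (-(η * ∑ x : Fin d, ∑ y : Fin d, f x y) / (d:ℝ)^2)
      ≤ ∑ x : Fin d, ∑ y : Fin d, Real.exp (-(η * f x y)) := by
  have hne : Nonempty (Fin d) := ⟨⟨0, hd⟩⟩
  have h := sum_exp_ge (Finset.univ : Finset (Fin d × Fin d)) Finset.univ_nonempty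
    (fun p => -(η * f p.1 p.2))
  rw [Fintype.sum_prod_type (f := fun p => Real.exp (-(η * f p.1 p.2)))] at h
  rw [Fintype.sum_prod_type (f := fun p => -(η * f p.1 p.2))] at h
  simp only [Finset.card_univ, Fintype.card_prod, Fintype.card_fin] at h
  have hc : ((d * d : ℕ) : ℝ) = (d:ℝ)^2 := by push_cast; ring
  rw [hc] at h
  have harg : ∑ x : Fin d, ∑ y : Fin d, -(η * f x y)
      = -(η * ∑ x : Fin d, ∑ y : Fin d, f x y) := by
    simp [Finset.sum_neg_distrib, Finset.mul_sum]
  rw [harg] at h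
  exact h

/-- Upper bound for the starred edge term. -/
lemma edge_star_bound {d : ℕ} (hd : 1 ≤ d) (η : ℝ) (f : Fin d → Fin d → ℝ)
    (a b : Fin d → ℝ) (t : ℝ) :
    -(∑ x : Fin d, ∑ y : Fin d, Real.exp (-(η * f x y) - a x - b y - t)) - t
    ≤ -1 + η / (d:ℝ)^2 * (∑ x : Fin d, ∑ y : Fin d, f x y)
      + (∑ x, a x) / (d:ℝ) + (∑ x, b x) / (d:ℝ) := by
  have hne : Nonempty (Fin d) := ⟨⟨0, hd⟩⟩
  have hdpos : (0:ℝ) < d := by exact_mod_cast hd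
  set A := ∑ x : Fin d, ∑ y : Fin d, Real.exp (-(η * f x y) - a x - b y) with hA
  have hApos : 0 < A := edge_Z_pos hd _
  have h1 : ∑ x : Fin d, ∑ y : Fin d, Real.exp (-(η * f x y) - a x - b y - t)
      = A * Real.exp (-t) := by
    rw [hA]
    simp_rw [Real.exp_sub (-(η * f _ _) - a _ - b _) t, ← Finset.sum_div,
      Real.exp_neg, div_eq_mul_inv]
  have h2 := dual_key A t hApos
  -- lower bound on log A
  have h3 := avg_le_log_sum (Finset.univ : Finset (Fin d × Fin d)) Finset.univ_nonempty
    (fun p => -(η * f p.1 p.2) - a p.1 - b p.2)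
  rw [Fintype.sum_prod_type (f := fun p => Real.exp (-(η * f p.1 p.2) - a p.1 - b p.2))] at h3
  rw [Fintype.sum_prod_type (f := fun p => -(η * f p.1 p.2) - a p.1 - b p.2)] at h3
  simp only [Finset.card_univ, Fintype.card_prod, Fintype.card_fin] at h3
  rw [sum_arg_edge η f a b] at h3
  have hc : ((d * d : ℕ) : ℝ) = (d:ℝ)^2 := by push_cast; ring
  rw [hc, ← hA] at h3
  have h4 : (-(η * ∑ x : Fin d, ∑ y : Fin d, f x y) - d * (∑ x, a x) - d * (∑ y, b y)) / (d:ℝ)^2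
      = -(η / (d:ℝ)^2 * (∑ x : Fin d, ∑ y : Fin d, f x y)) - (∑ x, a x)/(d:ℝ) - (∑ x, b x)/(d:ℝ) := by
    field_simp
  rw [h4] at h3
  rw [h1]
  linarith

/-- The initial edge term equals `-1 - log Z`. -/
lemma init_edge_val {d : ℕ} (hd : 1 ≤ d) (η : ℝ) (f : Fin d → Fin d → ℝ) :
    -(∑ x : Fin d, ∑ y : Fin d, Real.exp (-(η * f x y)
        - Real.log (∑ x : Fin d, ∑ y : Fin d, Real.exp (-(η * f x y)))))
      - Real.log (∑ x : Fin d, ∑ y : Fin d, Real.exp (-(η * f x y)))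
    = -1 - Real.log (∑ x : Fin d, ∑ y : Fin d, Real.exp (-(η * f x y))) := by
  have hZ : 0 < ∑ x : Fin d, ∑ y : Fin d, Real.exp (-(η * f x y)) := edge_Z_pos hd _
  simp_rw [Real.exp_sub, ← Finset.sum_div, Real.exp_log hZ, div_self (ne_of_gt hZ)]

lemma sum_arg_vtx {d : ℕ} (η : ℝ) (g p : Fin d → ℝ) :
    ∑ x : Fin d, (-(η * g x) + p x) = -(η * ∑ x, g x) + ∑ x, p x := by
  rw [Finset.sum_add_distrib, Finset.sum_neg_distrib, ← Finset.mul_sum]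

/-- Upper bound for the starred vertex term. -/
lemma vtx_star_bound {d : ℕ} (hd : 1 ≤ d) (η : ℝ) (g p : Fin d → ℝ) (t : ℝ) :
    -(∑ x : Fin d, Real.exp (-(η * g x) - t + p x)) - t
    ≤ -1 + η / (d:ℝ) * (∑ x, g x) - (∑ x, p x) / (d:ℝ) := by
  have hne : Nonempty (Fin d) := ⟨⟨0, hd⟩⟩
  have hdpos : (0:ℝ) < d := by exact_mod_cast hd
  set B := ∑ x : Fin d, Real.exp (-(η * g x) + p x) with hB
  have hBpos : 0 < B := vtx_Z_pos hd _
  have h1 : ∑ x : Fin d, Real.exp (-(η * g x) - t + p x) = B * Real.exp (-t) := by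
    rw [hB]
    have : ∀ x : Fin d, -(η * g x) - t + p x = (-(η * g x) + p x) - t := by intro x; ring
    simp_rw [this, Real.exp_sub, ← Finset.sum_div, Real.exp_neg, div_eq_mul_inv]
  have h2 := dual_key B t hBpos
  have h3 := avg_le_log_sum (Finset.univ : Finset (Fin d)) Finset.univ_nonempty
    (fun x => -(η * g x) + p x)
  simp only [Finset.card_univ, Fintype.card_fin] at h3
  rw [sum_arg_vtx η g p, ← hB] at h3
  have h4 : (-(η * ∑ x, g x) + ∑ x, p x) / (d:ℝ)
      = -(η / (d:ℝ) * (∑ x, g x)) + (∑ x, p x) / (d:ℝ) := by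
    field_simp
  rw [h4] at h3
  rw [h1]
  linarith

/-- The initial vertex term equals `-1 - log Z`. -/
lemma init_vtx_val {d : ℕ} (hd : 1 ≤ d) (η : ℝ) (g : Fin d → ℝ) :
    -(∑ x : Fin d, Real.exp (-(η * g x)
        - Real.log (∑ x : Fin d, Real.exp (-(η * g x)))))
      - Real.log (∑ x : Fin d, Real.exp (-(η * g x)))
    = -1 - Real.log (∑ x : Fin d, Real.exp (-(η * g x))) := by
  have hZ : 0 < ∑ x : Fin d, Real.exp (-(η * g x)) := vtx_Z_pos hd _
  simp_rw [Real.exp_sub, ← Finset.sum_div, Real.exp_log hZ, div_self (ne_of_gt hZ)]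

/-- Per-edge inequality `S`-term ≤ `l1`-term. -/
lemma edge_S_le_l1 {d : ℕ} (hd : 1 ≤ d) (η : ℝ) (f : Fin d → Fin d → ℝ) :
    Real.log (∑ x : Fin d, ∑ y : Fin d, Real.exp (-(η * f x y)))
      + η / (d:ℝ)^2 * (∑ x : Fin d, ∑ y : Fin d, f x y)
    ≤ ∑ x : Fin d, ∑ y : Fin d, |η * f x y / (d:ℝ) + Real.exp (-(η * f x y))| := by
  have hdpos : (0:ℝ) < d := by exact_mod_cast hd
  set Z := ∑ x : Fin d, ∑ y : Fin d, Real.exp (-(η * f x y)) with hZdef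
  have hZ : 0 < Z := edge_Z_pos hd _
  set s := ∑ x : Fin d, ∑ y : Fin d, f x y with hsdef
  set u := -(η * s) / (d:ℝ)^2 with hu
  have hJ : (d:ℝ)^2 * Real.exp u ≤ Z := edge_jensen hd η f
  have hkey : Real.log Z - Z ≤ -(u * ((d:ℝ) - 1)) := edge_key d hd Z u hJ hZ
  have habs : ∑ x : Fin d, ∑ y : Fin d, (η * f x y / (d:ℝ) + Real.exp (-(η * f x y)))
      ≤ ∑ x : Fin d, ∑ y : Fin d, |η * f x y / (d:ℝ) + Real.exp (-(η * f x y))| :=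
    Finset.sum_le_sum (fun x _ => Finset.sum_le_sum (fun y _ => le_abs_self _))
  have hsum : ∑ x : Fin d, ∑ y : Fin d, (η * f x y / (d:ℝ) + Real.exp (-(η * f x y)))
      = η * s / (d:ℝ) + Z := by
    simp_rw [Finset.sum_add_distrib, ← Finset.sum_div, ← Finset.mul_sum]
    rw [hsdef, hZdef]
  rw [hsum] at habs
  have h1 : η / (d:ℝ)^2 * s = -u := by rw [hu]; field_simp
  have h2 : η * s / (d:ℝ) = -(u * (d:ℝ)) := by rw [hu]; field_simp
  -- goal: log Z + η/d²·s ≤ Σ|..|; from log Z - Z ≤ -u(d-1) and Σ|..| ≥ -(ud) + Z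
  rw [h1]
  rw [h2] at habs
  linarith

/-- Per-vertex inequality `S`-term ≤ `l1`-term. -/
lemma vtx_S_le_l1 {d : ℕ} (hd : 1 ≤ d) (η : ℝ) (g : Fin d → ℝ) :
    Real.log (∑ x : Fin d, Real.exp (-(η * g x))) + η / (d:ℝ) * (∑ x, g x)
    ≤ ∑ x : Fin d, |η * g x / (d:ℝ) + Real.exp (-(η * g x))| := by
  have hdpos : (0:ℝ) < d := by exact_mod_cast hd
  have hZ : 0 < ∑ x : Fin d, Real.exp (-(η * g x)) := vtx_Z_pos hd _
  have habs : ∑ x : Fin d, (η * g x / (d:ℝ) + Real.exp (-(η * g x)))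
      ≤ ∑ x : Fin d, |η * g x / (d:ℝ) + Real.exp (-(η * g x))| :=
    Finset.sum_le_sum (fun x _ => le_abs_self _)
  have hsum : ∑ x : Fin d, (η * g x / (d:ℝ) + Real.exp (-(η * g x)))
      = η * (∑ x, g x) / (d:ℝ) + ∑ x : Fin d, Real.exp (-(η * g x)) := by
    simp_rw [Finset.sum_add_distrib, ← Finset.sum_div, ← Finset.mul_sum]
  rw [hsum] at habs
  have hlog := Real.log_le_sub_one_of_pos hZ
  have : η / (d:ℝ) * (∑ x, g x) = η * (∑ x, g x) / (d:ℝ) := by ring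
  rw [this]
  linarith
/-- The gap between the maximal Lyapunov value and its value
at the initial duals (those normalizing every component of `exp(−ηC)`) is at
most `S₀`. -/
theorem stmt_7 {V : Type} [Fintype V] [DecidableEq V] {d : ℕ} (hd : 1 ≤ d)
    (E : Finset (V × V))
    (hcover : ∀ i : V, ∃ e ∈ E, e.1 = i ∨ e.2 = i)
    (η : ℝ) (hη : 0 < η)
    (Cv : V → Fin d → ℝ) (Ce : V × V → Fin d → Fin d → ℝ)
    (lrS lcS : V × V → Fin d → ℝ) (xieS : V × V → ℝ) (xivS : V → ℝ)
    (hmax : ∀ (lr lc : V × V → Fin d → ℝ) (xie : V × V → ℝ) (xiv : V → ℝ),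
      Lyap E η Cv Ce lr lc xie xiv ≤ Lyap E η Cv Ce lrS lcS xieS xivS)
    (xie1 : V × V → ℝ)
    (hxie1 : ∀ e, xie1 e = Real.log (∑ x : Fin d, ∑ y : Fin d, Real.exp (-(η * Ce e x y))))
    (xiv1 : V → ℝ)
    (hxiv1 : ∀ i, xiv1 i = Real.log (∑ x : Fin d, Real.exp (-(η * Cv i x)))) :
    Lyap E η Cv Ce lrS lcS xieS xivS - Lyap E η Cv Ce 0 0 xie1 xiv1 ≤
      S0 E η Cv Ce := by
  have hgap : Lyap E η Cv Ce lrS lcS xieS xivS - Lyap E η Cv Ce 0 0 xie1 xiv1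
      = (∑ e ∈ E, ((-(∑ x : Fin d, ∑ y : Fin d, pEdge η Ce lrS lcS xieS e x y) - xieS e)
          - (-(∑ x : Fin d, ∑ y : Fin d, pEdge η Ce 0 0 xie1 e x y) - xie1 e)))
      + ∑ i : V, ((-(∑ x : Fin d, pVtx E η Cv lrS lcS xivS i x) - xivS i)
          - (-(∑ x : Fin d, pVtx E η Cv 0 0 xiv1 i x) - xiv1 i)) := by
    unfold Lyap
    simp only [sub_eq_add_neg, neg_add_rev, neg_neg, Finset.sum_add_distrib,
      Finset.sum_neg_distrib]
    ring
  -- per-edge bound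
  have hedge : ∀ e ∈ E,
      ((-(∑ x : Fin d, ∑ y : Fin d, pEdge η Ce lrS lcS xieS e x y) - xieS e)
        - (-(∑ x : Fin d, ∑ y : Fin d, pEdge η Ce 0 0 xie1 e x y) - xie1 e))
      ≤ Real.log (∑ x : Fin d, ∑ y : Fin d, Real.exp (-(η * Ce e x y)))
        + η / (d:ℝ)^2 * (∑ x : Fin d, ∑ y : Fin d, Ce e x y)
        + (∑ x, lrS e x) / (d:ℝ) + (∑ x, lcS e x) / (d:ℝ) := by
    intro e _
    have hstar := edge_star_bound hd η (Ce e) (lrS e) (lcS e) (xieS e)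
    have hinit : -(∑ x : Fin d, ∑ y : Fin d, Real.exp (-(η * Ce e x y) - xie1 e)) - xie1 e
        = -1 - Real.log (∑ x : Fin d, ∑ y : Fin d, Real.exp (-(η * Ce e x y))) := by
      rw [hxie1 e]
      exact init_edge_val hd η (Ce e)
    simp only [pEdge, Pi.zero_apply, sub_zero]
    linarith [hstar, hinit]
  -- per-vertex bound
  have hvtx : ∀ i : V,
      ((-(∑ x : Fin d, pVtx E η Cv lrS lcS xivS i x) - xivS i)
        - (-(∑ x : Fin d, pVtx E η Cv 0 0 xiv1 i x) - xiv1 i))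
      ≤ Real.log (∑ x : Fin d, Real.exp (-(η * Cv i x)))
        + η / (d:ℝ) * (∑ x, Cv i x)
        - (∑ x : Fin d, ((∑ e ∈ E.filter (fun e => e.1 = i), lrS e x)
            + ∑ e ∈ E.filter (fun e => e.2 = i), lcS e x)) / (d:ℝ) := by
    intro i
    have hstar := vtx_star_bound hd η (Cv i)
      (fun x => (∑ e ∈ E.filter (fun e => e.1 = i), lrS e x)
        + ∑ e ∈ E.filter (fun e => e.2 = i), lcS e x) (xivS i)
    have hinit : -(∑ x : Fin d, Real.exp (-(η * Cv i x) - xiv1 i)) - xiv1 i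
        = -1 - Real.log (∑ x : Fin d, Real.exp (-(η * Cv i x))) := by
      rw [hxiv1 i]
      exact init_vtx_val hd η (Cv i)
    simp only [pVtx, Pi.zero_apply, Finset.sum_const_zero, add_zero, add_assoc]
    linarith [hstar, hinit]
  -- summed bound
  have hgap2 : Lyap E η Cv Ce lrS lcS xieS xivS - Lyap E η Cv Ce 0 0 xie1 xiv1
      ≤ (∑ e ∈ E, (Real.log (∑ x : Fin d, ∑ y : Fin d, Real.exp (-(η * Ce e x y)))
          + η / (d:ℝ)^2 * (∑ x : Fin d, ∑ y : Fin d, Ce e x y)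
          + (∑ x, lrS e x) / (d:ℝ) + (∑ x, lcS e x) / (d:ℝ)))
      + ∑ i : V, (Real.log (∑ x : Fin d, Real.exp (-(η * Cv i x)))
          + η / (d:ℝ) * (∑ x, Cv i x)
          - (∑ x : Fin d, ((∑ e ∈ E.filter (fun e => e.1 = i), lrS e x)
              + ∑ e ∈ E.filter (fun e => e.2 = i), lcS e x)) / (d:ℝ)) := by
    rw [hgap]
    exact add_le_add (Finset.sum_le_sum hedge) (Finset.sum_le_sum (fun i _ => hvtx i))
  -- cancellation of the dual sums
  have hcancel : ∑ i : V, (∑ x : Fin d, ((∑ e ∈ E.filter (fun e => e.1 = i), lrS e x)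
          + ∑ e ∈ E.filter (fun e => e.2 = i), lcS e x)) / (d:ℝ)
      = ∑ e ∈ E, ((∑ x, lrS e x) / (d:ℝ) + (∑ x, lcS e x) / (d:ℝ)) := by
    have h1 : ∀ i : V, ∑ x : Fin d, ∑ e ∈ E.filter (fun e => e.1 = i), lrS e x
        = ∑ e ∈ E.filter (fun e => e.1 = i), ∑ x, lrS e x := fun i => Finset.sum_comm
    have h2 : ∀ i : V, ∑ x : Fin d, ∑ e ∈ E.filter (fun e => e.2 = i), lcS e x
        = ∑ e ∈ E.filter (fun e => e.2 = i), ∑ x, lcS e x := fun i => Finset.sum_comm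
    have hf1 : ∑ i : V, ∑ e ∈ E.filter (fun e => e.1 = i), (∑ x, lrS e x)
        = ∑ e ∈ E, ∑ x, lrS e x := Finset.sum_fiberwise E (fun e => e.1) _
    have hf2 : ∑ i : V, ∑ e ∈ E.filter (fun e => e.2 = i), (∑ x, lcS e x)
        = ∑ e ∈ E, ∑ x, lcS e x := Finset.sum_fiberwise E (fun e => e.2) _
    calc ∑ i : V, (∑ x : Fin d, ((∑ e ∈ E.filter (fun e => e.1 = i), lrS e x)
            + ∑ e ∈ E.filter (fun e => e.2 = i), lcS e x)) / (d:ℝ)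
        = ∑ i : V, ((∑ e ∈ E.filter (fun e => e.1 = i), (∑ x, lrS e x))
            + ∑ e ∈ E.filter (fun e => e.2 = i), (∑ x, lcS e x)) / (d:ℝ) := by
          refine Finset.sum_congr rfl (fun i _ => ?_)
          rw [Finset.sum_add_distrib, h1 i, h2 i]
      _ = ((∑ e ∈ E, ∑ x, lrS e x) + ∑ e ∈ E, ∑ x, lcS e x) / (d:ℝ) := by
          rw [← Finset.sum_div, Finset.sum_add_distrib, hf1, hf2]
      _ = ∑ e ∈ E, ((∑ x, lrS e x) / (d:ℝ) + (∑ x, lcS e x) / (d:ℝ)) := by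
          rw [Finset.sum_add_distrib, ← Finset.sum_div, ← Finset.sum_div, add_div]
  -- gap ≤ Sval
  have hgapS : Lyap E η Cv Ce lrS lcS xieS xivS - Lyap E η Cv Ce 0 0 xie1 xiv1
      ≤ Sval E η Cv Ce := by
    have hSval : Sval E η Cv Ce
        = (∑ e ∈ E, (Real.log (∑ x : Fin d, ∑ y : Fin d, Real.exp (-(η * Ce e x y)))
            + η / (d:ℝ)^2 * (∑ x : Fin d, ∑ y : Fin d, Ce e x y)))
        + ∑ i : V, (Real.log (∑ x : Fin d, Real.exp (-(η * Cv i x)))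
            + η / (d:ℝ) * (∑ x, Cv i x)) := by
      unfold Sval
      simp_rw [← Finset.mul_sum]
    rw [hSval]
    have expand : (∑ e ∈ E, (Real.log (∑ x : Fin d, ∑ y : Fin d, Real.exp (-(η * Ce e x y)))
          + η / (d:ℝ)^2 * (∑ x : Fin d, ∑ y : Fin d, Ce e x y)
          + (∑ x, lrS e x) / (d:ℝ) + (∑ x, lcS e x) / (d:ℝ)))
        = (∑ e ∈ E, (Real.log (∑ x : Fin d, ∑ y : Fin d, Real.exp (-(η * Ce e x y)))
            + η / (d:ℝ)^2 * (∑ x : Fin d, ∑ y : Fin d, Ce e x y)))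
          + ∑ e ∈ E, ((∑ x, lrS e x) / (d:ℝ) + (∑ x, lcS e x) / (d:ℝ)) := by
      rw [← Finset.sum_add_distrib]
      exact Finset.sum_congr rfl (fun e _ => by ring)
    have expand2 : ∑ i : V, (Real.log (∑ x : Fin d, Real.exp (-(η * Cv i x)))
          + η / (d:ℝ) * (∑ x, Cv i x)
          - (∑ x : Fin d, ((∑ e ∈ E.filter (fun e => e.1 = i), lrS e x)
              + ∑ e ∈ E.filter (fun e => e.2 = i), lcS e x)) / (d:ℝ))
        = (∑ i : V, (Real.log (∑ x : Fin d, Real.exp (-(η * Cv i x)))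
            + η / (d:ℝ) * (∑ x, Cv i x)))
          - ∑ i : V, (∑ x : Fin d, ((∑ e ∈ E.filter (fun e => e.1 = i), lrS e x)
              + ∑ e ∈ E.filter (fun e => e.2 = i), lcS e x)) / (d:ℝ) := by
      rw [← Finset.sum_sub_distrib]
    rw [expand, expand2, hcancel] at hgap2
    linarith
  -- Sval ≤ l1shift
  have hSl1 : Sval E η Cv Ce ≤ l1shift E η Cv Ce := by
    unfold Sval l1shift
    rw [add_comm (∑ i : V, ∑ x : Fin d, |η * Cv i x / (d : ℝ) + Real.exp (-(η * Cv i x))|)]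
    refine add_le_add (Finset.sum_le_sum (fun e _ => ?_)) (Finset.sum_le_sum (fun i _ => ?_))
    · have h := edge_S_le_l1 hd η (Ce e)
      have : ∑ x : Fin d, ∑ y : Fin d, η / (d : ℝ) ^ 2 * Ce e x y
          = η / (d:ℝ)^2 * (∑ x : Fin d, ∑ y : Fin d, Ce e x y) := by
        simp_rw [← Finset.mul_sum]
      rw [this]
      exact h
    · have h := vtx_S_le_l1 hd η (Cv i)
      have : ∑ x : Fin d, η / (d : ℝ) * Cv i x = η / (d:ℝ) * (∑ x, Cv i x) := by
        simp_rw [← Finset.mul_sum]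
      rw [this]
      exact h
  exact le_min (hgapS.trans hSl1) hgapS
end
end

section
/- Let a, b ∈ Σ_d be two points in the probability simplex and let p ∈ ℝ^d_{≥0} satisfy min(a_i, b_i) ≤ p_i ≤ max(a_i, b_i) for all 1 ≤ i ≤ d, with Σ_i p_i > 0. Let c = p/(Σ_i p_i) ∈ Σ_d. Then max(‖a − c‖₁, ‖b − c‖₁) ≤ ‖a − b‖₁. -/
/-- One side of the estimate: `∑ |a i - p i / s| ≤ ∑ |a i - b i|`. -/
lemma stmt_10_aux {d : ℕ} (a b p : Fin d → ℝ)
    (hb1 : ∑ i, b i = 1)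
    (hp0 : ∀ i, 0 ≤ p i)
    (hp : ∀ i, min (a i) (b i) ≤ p i ∧ p i ≤ max (a i) (b i))
    (hps : 0 < ∑ i, p i) :
    ∑ i, |a i - p i / ∑ j, p j| ≤ ∑ i, |a i - b i| := by
  set s := ∑ j, p j with hs
  have hsne : s ≠ 0 := ne_of_gt hps
  have hbetween : ∀ i, |a i - p i| + |p i - b i| = |a i - b i| := by
    intro i
    obtain ⟨h1, h2⟩ := hp i
    rcases le_total (a i) (b i) with h | h
    · rw [min_eq_left h] at h1; rw [max_eq_right h] at h2
      rw [abs_of_nonpos (by linarith), abs_of_nonpos (by linarith),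
        abs_of_nonpos (by linarith)]; ring
    · rw [min_eq_right h] at h1; rw [max_eq_left h] at h2
      rw [abs_of_nonneg (by linarith), abs_of_nonneg (by linarith),
        abs_of_nonneg (by linarith)]; ring
  have key : ∀ i, |a i - p i / s| ≤ |a i - p i| + p i * (|s - 1| / s) := by
    intro i
    have h1 : a i - p i / s = (a i - p i) + p i * ((s - 1) / s) := by
      field_simp; ring
    rw [h1]
    refine (abs_add_le _ _).trans ?_
    rw [abs_mul, abs_of_nonneg (hp0 i), abs_div, abs_of_nonneg hps.le]
  calc ∑ i, |a i - p i / s| ≤ ∑ i, (|a i - p i| + p i * (|s - 1| / s)) :=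
        Finset.sum_le_sum fun i _ => key i
    _ = ∑ i, |a i - p i| + s * (|s - 1| / s) := by
        rw [Finset.sum_add_distrib, ← Finset.sum_mul]
    _ = ∑ i, |a i - p i| + |s - 1| := by
        rw [mul_div_cancel₀ _ hsne]
    _ ≤ ∑ i, |a i - p i| + ∑ i, |p i - b i| := by
        have h2 : s - 1 = ∑ i, (p i - b i) := by
          rw [Finset.sum_sub_distrib, hb1, hs]
        gcongr
        calc |s - 1| = |∑ i, (p i - b i)| := by rw [h2]
          _ ≤ ∑ i, |p i - b i| := Finset.abs_sum_le_sum_abs _ _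
    _ = ∑ i, |a i - b i| := by
        rw [← Finset.sum_add_distrib]
        exact Finset.sum_congr rfl fun i _ => hbetween i

/-- If `a, b` are in the probability simplex and the
nonnegative vector `p` lies coordinatewise between them (with positive total
mass), then the normalization `c` of `p` satisfies
`max(‖a − c‖₁, ‖b − c‖₁) ≤ ‖a − b‖₁`. -/
theorem stmt_10 {d : ℕ} (a b p : Fin d → ℝ)
    (ha0 : ∀ i, 0 ≤ a i) (ha1 : ∑ i, a i = 1)
    (hb0 : ∀ i, 0 ≤ b i) (hb1 : ∑ i, b i = 1)
    (hp0 : ∀ i, 0 ≤ p i)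
    (hp : ∀ i, min (a i) (b i) ≤ p i ∧ p i ≤ max (a i) (b i))
    (hps : 0 < ∑ i, p i)
    (c : Fin d → ℝ) (hc : ∀ i, c i = p i / ∑ j, p j) :
    max (∑ i, |a i - c i|) (∑ i, |b i - c i|) ≤ ∑ i, |a i - b i| := by
  have hca : ∑ i, |a i - c i| = ∑ i, |a i - p i / ∑ j, p j| :=
    Finset.sum_congr rfl fun i _ => by rw [hc i]
  have hcb : ∑ i, |b i - c i| = ∑ i, |b i - p i / ∑ j, p j| :=
    Finset.sum_congr rfl fun i _ => by rw [hc i]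
  have hab : ∑ i, |b i - a i| = ∑ i, |a i - b i| :=
    Finset.sum_congr rfl fun i _ => abs_sub_comm _ _
  refine max_le ?_ ?_
  · rw [hca]
    exact stmt_10_aux a b p hb1 hp0 hp hps
  · rw [hcb, ← hab]
    exact stmt_10_aux b a p ha1 hp0
      (fun i => by rw [min_comm, max_comm]; exact hp i) hps
end

section
/- Let A ∈ ℝ^{d×d}_{≥0} be a matrix with entries a_{ij} whose row sums r(A)_i are all strictly positive, and let p ∈ Σ_d. Define the matrix Ã with entries Ã_{ij} = (1/z)·a_{ij}·√(p_i/r(A)_i), where z = Σ_{i,j} a_{ij}√(p_i/r(A)_i) > 0 is the normalization constant making the entries of Ã sum to 1. Then ‖c(Ã) − c(A)‖₁ ≤ ‖r(Ã) − r(A)‖₁, where r(·) and c(·) denote the vectors of row sums and column sums respectively. -/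
/-- For a nonnegative matrix `A` with positive row sums and
a simplex point `p`, the normalized reweighted matrix `Ã` with entries
`a_{ij}√(p_i/r(A)_i)/z` satisfies `‖c(Ã) − c(A)‖₁ ≤ ‖r(Ã) − r(A)‖₁`. -/
theorem stmt_11 {d : ℕ} (A : Fin d → Fin d → ℝ) (p : Fin d → ℝ)
    (hA0 : ∀ i j, 0 ≤ A i j) (hr : ∀ i, 0 < ∑ j, A i j)
    (hp0 : ∀ i, 0 ≤ p i) (hp1 : ∑ i, p i = 1)
    (z : ℝ) (hz : z = ∑ i, ∑ j, A i j * Real.sqrt (p i / ∑ k, A i k))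
    (hzpos : 0 < z)
    (At : Fin d → Fin d → ℝ)
    (hAt : ∀ i j, At i j = A i j * Real.sqrt (p i / ∑ k, A i k) / z) :
    ∑ j, |(∑ i, At i j) - ∑ i, A i j| ≤ ∑ i, |(∑ j, At i j) - ∑ j, A i j| := by
  set t : Fin d → ℝ := fun i => Real.sqrt (p i / ∑ k, A i k) / z with ht
  have key : ∀ i j, At i j = A i j * t i := by
    intro i j; rw [hAt, ht]; ring
  calc ∑ j, |(∑ i, At i j) - ∑ i, A i j|
      = ∑ j, |∑ i, A i j * (t i - 1)| := by
        refine Finset.sum_congr rfl fun j _ => ?_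
        congr 1
        rw [← Finset.sum_sub_distrib]
        exact Finset.sum_congr rfl fun i _ => by rw [key]; ring
    _ ≤ ∑ j, ∑ i, |A i j * (t i - 1)| :=
        Finset.sum_le_sum fun j _ => Finset.abs_sum_le_sum_abs _ _
    _ = ∑ i, ∑ j, A i j * |t i - 1| := by
        rw [Finset.sum_comm]
        refine Finset.sum_congr rfl fun i _ => Finset.sum_congr rfl fun j _ => ?_
        rw [abs_mul, abs_of_nonneg (hA0 i j)]
    _ = ∑ i, |(∑ j, At i j) - ∑ j, A i j| := by
        refine Finset.sum_congr rfl fun i _ => ?_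
        have h1 : ∑ j, At i j = (∑ j, A i j) * t i := by
          rw [Finset.sum_mul]
          exact Finset.sum_congr rfl fun j _ => key i j
        rw [← Finset.sum_mul, h1,
          show (∑ j, A i j) * t i - ∑ j, A i j = (∑ j, A i j) * (t i - 1) by ring,
          abs_mul, abs_of_nonneg (le_of_lt (hr i))]
end

section
/- Let ν and ν' be two slack vectors with ‖ν'‖_∞ ≤ 1/(2d), and let Γ ∈ 𝕃₂^ν. If for every edge ij∈E both Γ_i + ν'_{ij} ∈ Σ_d and Γ_j + ν'_{ji} ∈ Σ_d, then there exists a marginal vector Γ' ∈ 𝕃₂^{ν'} such that ‖Γ − Γ'‖₁ ≤ 2‖ν − ν'‖₁. -/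
noncomputable section

/-- A marginal vector: a vector `Γ_i ∈ ℝ^d` for every vertex and a matrix
`Γ_{ij} ∈ ℝ^{d×d}` for every edge (components outside `E` are ignored). -/
abbrev MV (V : Type) (d : ℕ) : Type :=
  (V → Fin d → ℝ) × ((V × V) → Fin d → Fin d → ℝ)

/-- `‖Γ‖₁`: the sum of absolute values of all entries of `Γ`. -/
def mvL1 {V : Type} [Fintype V] {d : ℕ} (E : Finset (V × V)) (Γ : MV V d) : ℝ :=
  (∑ i : V, ∑ x : Fin d, |Γ.1 i x|) + ∑ e ∈ E, ∑ x : Fin d, ∑ y : Fin d, |Γ.2 e x y|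

/-- A slack vector: for each edge `ij`, vectors `ν_{ij}` (first component)
and `ν_{ji}` (second component) in `ℝ^d`. -/
abbrev Slk (V : Type) (d : ℕ) : Type :=
  ((V × V) → Fin d → ℝ) × ((V × V) → Fin d → ℝ)

/-- Slack vectors have zero coordinate sums on every edge. -/
def isSlack {V : Type} {d : ℕ} (E : Finset (V × V)) (ν : Slk V d) : Prop :=
  ∀ e ∈ E, (∑ x, ν.1 e x = 0) ∧ (∑ x, ν.2 e x = 0)

/-- `‖ν‖₁`: the sum of absolute values of all entries of the slack vector. -/
def slkL1 {V : Type} {d : ℕ} (E : Finset (V × V)) (ν : Slk V d) : ℝ :=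
  ∑ e ∈ E, ((∑ x, |ν.1 e x|) + ∑ x, |ν.2 e x|)

/-- Membership in the slack polytope `𝕃₂^ν`; the local polytope `𝕃₂` is
`𝕃₂^0`. -/
def memSL2 {V : Type} [Fintype V] {d : ℕ} (E : Finset (V × V)) (ν : Slk V d)
    (Γ : MV V d) : Prop :=
  (∀ i x, 0 ≤ Γ.1 i x) ∧ (∀ i, ∑ x, Γ.1 i x = 1) ∧
  (∀ e ∈ E, ∀ x y, 0 ≤ Γ.2 e x y) ∧
  (∀ e ∈ E, ∀ x, ∑ y, Γ.2 e x y = Γ.1 e.1 x + ν.1 e x) ∧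
  (∀ e ∈ E, ∀ y, ∑ x, Γ.2 e x y = Γ.1 e.2 y + ν.2 e y) ∧
  (∀ e ∈ E, ∑ x, ∑ y, Γ.2 e x y = 1)

/-- Maximum degree of the graph. -/
def degG {V : Type} [Fintype V] [DecidableEq V] (E : Finset (V × V)) : ℕ :=
  Finset.univ.sup fun i : V => (E.filter fun e => e.1 = i ∨ e.2 = i).card

lemma matFix {d : ℕ} (P : Fin d → Fin d → ℝ) (r c : Fin d → ℝ)
    (hP : ∀ x y, 0 ≤ P x y) (hr : ∀ x, 0 ≤ r x) (hc : ∀ y, 0 ≤ c y)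
    (hrs : ∑ x, r x = 1) (hcs : ∑ y, c y = 1)
    (hPs : ∑ x, ∑ y, P x y = 1) :
    ∃ Q : Fin d → Fin d → ℝ, (∀ x y, 0 ≤ Q x y) ∧ (∀ x, ∑ y, Q x y = r x) ∧
      (∀ y, ∑ x, Q x y = c y) ∧
      ∑ x, ∑ y, |P x y - Q x y| ≤
        (∑ x, |r x - ∑ y, P x y|) + ∑ y, |c y - ∑ x, P x y| := by
  classical
  set a : Fin d → ℝ := fun x => ∑ y, P x y with hadef
  set b : Fin d → ℝ := fun y => ∑ x, P x y with hbdef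
  have ha0 : ∀ x, 0 ≤ a x := fun x => Finset.sum_nonneg fun y _ => hP x y
  have hbsum : ∑ y, b y = 1 := by
    simp only [hbdef]; rw [Finset.sum_comm]; exact hPs
  set M : Fin d → Fin d → ℝ :=
    fun x y => if r x < a x then r x / a x * P x y else P x y with hMdef
  have hapos : ∀ x, r x < a x → 0 < a x := fun x h => lt_of_le_of_lt (hr x) h
  have hM0 : ∀ x y, 0 ≤ M x y := by
    intro x y
    simp only [hMdef]
    split
    · exact mul_nonneg (div_nonneg (hr x) (ha0 x)) (hP x y)
    · exact hP x y
  have hMP : ∀ x y, M x y ≤ P x y := by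
    intro x y
    simp only [hMdef]
    split
    · rename_i h
      have h1 : r x / a x ≤ 1 := (div_le_one (hapos x h)).mpr h.le
      calc r x / a x * P x y ≤ 1 * P x y := mul_le_mul_of_nonneg_right h1 (hP x y)
        _ = P x y := one_mul _
    · exact le_rfl
  have hMrow : ∀ x, ∑ y, M x y = min (r x) (a x) := by
    intro x
    by_cases h : r x < a x
    · rw [min_eq_left h.le]
      simp only [hMdef, if_pos h]
      rw [← Finset.mul_sum]
      exact div_mul_cancel₀ _ (hapos x h).ne'
    · rw [min_eq_right (not_lt.mp h)]
      simp only [hMdef, if_neg h]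
      rfl
  set m : Fin d → ℝ := fun y => ∑ x, M x y with hmdef
  have hm0 : ∀ y, 0 ≤ m y := fun y => Finset.sum_nonneg fun x _ => hM0 x y
  have hmb : ∀ y, m y ≤ b y := by
    intro y
    simp only [hmdef, hbdef]
    exact Finset.sum_le_sum fun x _ => hMP x y
  set N : Fin d → Fin d → ℝ :=
    fun x y => if c y < m y then c y / m y * M x y else M x y with hNdef
  have hmpos : ∀ y, c y < m y → 0 < m y := fun y h => lt_of_le_of_lt (hc y) h
  have hN0 : ∀ x y, 0 ≤ N x y := by
    intro x y
    simp only [hNdef]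
    split
    · exact mul_nonneg (div_nonneg (hc y) (hm0 y)) (hM0 x y)
    · exact hM0 x y
  have hNM : ∀ x y, N x y ≤ M x y := by
    intro x y
    simp only [hNdef]
    split
    · rename_i h
      have h1 : c y / m y ≤ 1 := (div_le_one (hmpos y h)).mpr h.le
      calc c y / m y * M x y ≤ 1 * M x y := mul_le_mul_of_nonneg_right h1 (hM0 x y)
        _ = M x y := one_mul _
    · exact le_rfl
  have hNcol : ∀ y, ∑ x, N x y = min (c y) (m y) := by
    intro y
    by_cases h : c y < m y
    · rw [min_eq_left h.le]
      simp only [hNdef, if_pos h]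
      rw [← Finset.mul_sum]
      exact div_mul_cancel₀ _ (hmpos y h).ne'
    · rw [min_eq_right (not_lt.mp h)]
      simp only [hNdef, if_neg h]
      rfl
  -- row and column sums of N
  have hnr : ∀ x, ∑ y, N x y ≤ r x := by
    intro x
    calc ∑ y, N x y ≤ ∑ y, M x y := Finset.sum_le_sum fun y _ => hNM x y
      _ = min (r x) (a x) := hMrow x
      _ ≤ r x := min_le_left _ _
  have hoc : ∀ y, ∑ x, N x y ≤ c y := by
    intro y
    rw [hNcol y]; exact min_le_left _ _
  set D : ℝ := ∑ x, (r x - ∑ y, N x y) with hDdef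
  have hD0 : 0 ≤ D := Finset.sum_nonneg fun x _ => sub_nonneg.2 (hnr x)
  have hD2 : ∑ y, (c y - ∑ x, N x y) = D := by
    rw [hDdef, Finset.sum_sub_distrib, Finset.sum_sub_distrib, hrs, hcs,
      Finset.sum_comm]
  -- the repaired matrix
  set Q : Fin d → Fin d → ℝ :=
    fun x y => N x y + (r x - ∑ y', N x y') * (c y - ∑ x', N x' y) / D with hQdef
  have hQN : ∀ x y, N x y ≤ Q x y := by
    intro x y
    simp only [hQdef]
    have : 0 ≤ (r x - ∑ y', N x y') * (c y - ∑ x', N x' y) / D :=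
      div_nonneg (mul_nonneg (sub_nonneg.2 (hnr x)) (sub_nonneg.2 (hoc y))) hD0
    linarith
  have hQ0 : ∀ x y, 0 ≤ Q x y := fun x y => le_trans (hN0 x y) (hQN x y)
  -- degenerate case helpers
  have hDzero_row : D = 0 → ∀ x, r x - ∑ y, N x y = 0 := by
    intro h x
    have hsum : ∑ x, (r x - ∑ y, N x y) = 0 := by rw [← hDdef]; exact h
    have := (Finset.sum_eq_zero_iff_of_nonneg
      (fun x _ => sub_nonneg.2 (hnr x))).1 hsum
    exact this x (Finset.mem_univ x)
  have hDzero_col : D = 0 → ∀ y, c y - ∑ x, N x y = 0 := by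
    intro h y
    have hsum : ∑ y, (c y - ∑ x, N x y) = 0 := by rw [hD2]; exact h
    have := (Finset.sum_eq_zero_iff_of_nonneg
      (fun y _ => sub_nonneg.2 (hoc y))).1 hsum
    exact this y (Finset.mem_univ y)
  have hQrow : ∀ x, ∑ y, Q x y = r x := by
    intro x
    simp only [hQdef]
    rw [Finset.sum_add_distrib]
    have : ∑ y, (r x - ∑ y', N x y') * (c y - ∑ x', N x' y) / D
        = (r x - ∑ y', N x y') * (D / D) := by
      simp only [mul_div_assoc]
      rw [← Finset.mul_sum, ← Finset.sum_div, hD2]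
    rw [this]
    rcases eq_or_ne D 0 with h | h
    · have h1 := hDzero_row h x
      rw [h1, zero_mul, add_zero]
      linarith
    · rw [div_self h, mul_one]; ring
  have hQcol : ∀ y, ∑ x, Q x y = c y := by
    intro y
    simp only [hQdef]
    rw [Finset.sum_add_distrib]
    have : ∑ x, (r x - ∑ y', N x y') * (c y - ∑ x', N x' y) / D
        = D * ((c y - ∑ x', N x' y) / D) := by
      simp only [mul_div_assoc]
      rw [← Finset.sum_mul, ← hDdef]
    rw [this]
    rcases eq_or_ne D 0 with h | h
    · have h1 := hDzero_col h y
      rw [h, zero_mul, add_zero]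
      linarith
    · have hDD : D * ((c y - ∑ x', N x' y) / D) = c y - ∑ x', N x' y := by
        field_simp
      rw [hDD]
      linarith
  refine ⟨Q, hQ0, hQrow, hQcol, ?_⟩
  -- cost bound
  have hstep : ∀ x y, |P x y - Q x y| ≤
      (P x y - M x y) + (M x y - N x y) + (Q x y - N x y) := by
    intro x y
    have t1 : |P x y - Q x y| ≤ |P x y - M x y| + |M x y - Q x y| :=
      abs_sub_le _ _ _
    have t2 : |M x y - Q x y| ≤ |M x y - N x y| + |N x y - Q x y| :=
      abs_sub_le _ _ _
    have e1 : |P x y - M x y| = P x y - M x y :=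
      abs_of_nonneg (sub_nonneg.2 (hMP x y))
    have e2 : |M x y - N x y| = M x y - N x y :=
      abs_of_nonneg (sub_nonneg.2 (hNM x y))
    have e3 : |N x y - Q x y| = Q x y - N x y := by
      rw [abs_sub_comm]
      exact abs_of_nonneg (sub_nonneg.2 (hQN x y))
    linarith [t1, t2, e1.le, e2.le, e3.le, e1.ge, e2.ge, e3.ge]
  have hsum1 : ∑ x, ∑ y, |P x y - Q x y| ≤
      (∑ x, ∑ y, (P x y - M x y)) + (∑ x, ∑ y, (M x y - N x y))
        + ∑ x, ∑ y, (Q x y - N x y) := by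
    rw [← Finset.sum_add_distrib, ← Finset.sum_add_distrib]
    refine Finset.sum_le_sum fun x _ => ?_
    rw [← Finset.sum_add_distrib, ← Finset.sum_add_distrib]
    exact Finset.sum_le_sum fun y _ => hstep x y
  -- evaluate the three pieces
  have hS1 : ∑ x, ∑ y, (P x y - M x y) = ∑ x, (a x - min (r x) (a x)) := by
    refine Finset.sum_congr rfl fun x _ => ?_
    rw [Finset.sum_sub_distrib, hMrow x]
  have hS2 : ∑ x, ∑ y, (M x y - N x y) = ∑ y, (m y - min (c y) (m y)) := by
    rw [Finset.sum_comm]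
    refine Finset.sum_congr rfl fun y _ => ?_
    rw [Finset.sum_sub_distrib, hNcol y]
  have hS3 : ∑ x, ∑ y, (Q x y - N x y) = D := by
    have hpt : ∀ x, ∑ y, (Q x y - N x y) = (r x - ∑ y', N x y') * (D / D) := by
      intro x
      have : ∀ y, Q x y - N x y
          = (r x - ∑ y', N x y') * ((c y - ∑ x', N x' y) / D) := by
        intro y
        simp only [hQdef]
        ring
      rw [Finset.sum_congr rfl fun y _ => this y, ← Finset.mul_sum,
        ← Finset.sum_div, hD2]
    rw [Finset.sum_congr rfl fun x _ => hpt x, ← Finset.sum_mul, ← hDdef]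
    rcases eq_or_ne D 0 with h | h
    · rw [h]; ring
    · rw [div_self h, mul_one]
  -- D = Σ (r - min r a) + Σ_y (m - min c m)
  have hDsplit : D = (∑ x, (r x - min (r x) (a x))) + ∑ y, (m y - min (c y) (m y)) := by
    have h1 : ∑ x, ∑ y, (M x y - N x y) = ∑ x, (min (r x) (a x) - ∑ y, N x y) := by
      refine Finset.sum_congr rfl fun x _ => ?_
      rw [Finset.sum_sub_distrib, hMrow x]
    rw [hDdef, ← hS2, h1, ← Finset.sum_add_distrib]
    refine Finset.sum_congr rfl fun x _ => ?_
    ring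
  -- pointwise facts
  have habsra : ∀ x, (a x - min (r x) (a x)) + (r x - min (r x) (a x)) = |r x - a x| := by
    intro x
    rcases le_total (r x) (a x) with h | h
    · rw [min_eq_left h, abs_of_nonpos (sub_nonpos.2 h)]; ring
    · rw [min_eq_right h, abs_of_nonneg (sub_nonneg.2 h)]; ring
  have hmono : ∀ y, m y - min (c y) (m y) ≤ max (b y - c y) 0 := by
    intro y
    rcases le_total (c y) (m y) with h | h
    · rw [min_eq_left h]
      exact le_max_of_le_left (by linarith [hmb y])
    · rw [min_eq_right h]
      simp
  have hmax : ∀ y, 2 * max (b y - c y) 0 = (b y - c y) + |b y - c y| := by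
    intro y
    rcases le_total (b y - c y) 0 with h | h
    · rw [max_eq_right h, abs_of_nonpos h]; ring
    · rw [max_eq_left h, abs_of_nonneg h]; ring
  have hbc : ∑ y, ((b y - c y) + |b y - c y|) = ∑ y, |c y - b y| := by
    rw [Finset.sum_add_distrib, Finset.sum_sub_distrib, hbsum, hcs]
    simp [abs_sub_comm]
  have h2S2 : 2 * (∑ y, (m y - min (c y) (m y))) ≤ ∑ y, |c y - b y| := by
    calc 2 * (∑ y, (m y - min (c y) (m y))) = ∑ y, 2 * (m y - min (c y) (m y)) := by
          rw [Finset.mul_sum]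
      _ ≤ ∑ y, 2 * max (b y - c y) 0 :=
          Finset.sum_le_sum fun y _ => by linarith [hmono y]
      _ = ∑ y, ((b y - c y) + |b y - c y|) :=
          Finset.sum_congr rfl fun y _ => hmax y
      _ = ∑ y, |c y - b y| := hbc
  have hra : (∑ x, (a x - min (r x) (a x))) + (∑ x, (r x - min (r x) (a x)))
      = ∑ x, |r x - a x| := by
    rw [← Finset.sum_add_distrib]
    exact Finset.sum_congr rfl fun x _ => habsra x
  calc ∑ x, ∑ y, |P x y - Q x y|
      ≤ (∑ x, ∑ y, (P x y - M x y)) + (∑ x, ∑ y, (M x y - N x y))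
        + ∑ x, ∑ y, (Q x y - N x y) := hsum1
    _ = (∑ x, (a x - min (r x) (a x))) + (∑ y, (m y - min (c y) (m y))) + D := by
        rw [hS1, hS2, hS3]
    _ = (∑ x, (a x - min (r x) (a x))) + (∑ x, (r x - min (r x) (a x)))
        + 2 * (∑ y, (m y - min (c y) (m y))) := by
        rw [hDsplit]; ring
    _ ≤ (∑ x, |r x - a x|) + ∑ y, |c y - b y| := by
        rw [hra] at *
        linarith [h2S2, hra]

/-- Moving from the slack polytope `𝕃₂^ν` to `𝕃₂^{ν'}`,
assuming the perturbed vertex marginals remain in the simplex, can be done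
within `l₁` distance `2‖ν − ν'‖₁`. -/
theorem stmt_12 {V : Type} [Fintype V] [DecidableEq V] {d : ℕ} (hd : 1 ≤ d)
    (E : Finset (V × V))
    (hcover : ∀ i : V, ∃ e ∈ E, e.1 = i ∨ e.2 = i)
    (ν ν' : Slk V d) (hν : isSlack E ν) (hν' : isSlack E ν')
    (hinf : ∀ e ∈ E, ∀ x : Fin d,
      |ν'.1 e x| ≤ 1 / (2 * d) ∧ |ν'.2 e x| ≤ 1 / (2 * d))
    (Γ : MV V d) (hΓ : memSL2 E ν Γ)
    (hsimplex : ∀ e ∈ E,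
      ((∀ x, 0 ≤ Γ.1 e.1 x + ν'.1 e x) ∧ (∑ x, (Γ.1 e.1 x + ν'.1 e x)) = 1) ∧
      ((∀ y, 0 ≤ Γ.1 e.2 y + ν'.2 e y) ∧ (∑ y, (Γ.1 e.2 y + ν'.2 e y)) = 1)) :
    ∃ Γ' : MV V d, memSL2 E ν' Γ' ∧
      mvL1 E (Γ - Γ') ≤ 2 * slkL1 E (ν - ν') := by
  classical
  obtain ⟨hΓ0, hΓ1, hΓe0, hΓrow, hΓcol, hΓtot⟩ := hΓ
  have key : ∀ e ∈ E, ∃ Q : Fin d → Fin d → ℝ,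
      (∀ x y, 0 ≤ Q x y) ∧
      (∀ x, ∑ y, Q x y = Γ.1 e.1 x + ν'.1 e x) ∧
      (∀ y, ∑ x, Q x y = Γ.1 e.2 y + ν'.2 e y) ∧
      ∑ x, ∑ y, |Γ.2 e x y - Q x y| ≤
        (∑ x, |(Γ.1 e.1 x + ν'.1 e x) - ∑ y, Γ.2 e x y|) +
        ∑ y, |(Γ.1 e.2 y + ν'.2 e y) - ∑ x, Γ.2 e x y| := by
    intro e he
    exact matFix (Γ.2 e) (fun x => Γ.1 e.1 x + ν'.1 e x)
      (fun y => Γ.1 e.2 y + ν'.2 e y) (hΓe0 e he)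
      (hsimplex e he).1.1 (hsimplex e he).2.1
      (hsimplex e he).1.2 (hsimplex e he).2.2 (hΓtot e he)
  choose! Q hQ0 hQrow hQcol hQcost using key
  refine ⟨(Γ.1, fun e => if e ∈ E then Q e else Γ.2 e), ?_, ?_⟩
  · refine ⟨hΓ0, hΓ1, ?_, ?_, ?_, ?_⟩
    · intro e he x y
      simp only [if_pos he]
      exact hQ0 e he x y
    · intro e he x
      simp only [if_pos he]
      exact hQrow e he x
    · intro e he y
      simp only [if_pos he]
      exact hQcol e he y
    · intro e he
      simp only [if_pos he]
      have : ∀ x, ∑ y, Q e x y = Γ.1 e.1 x + ν'.1 e x := hQrow e he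
      rw [Finset.sum_congr rfl fun x _ => this x]
      exact (hsimplex e he).1.2
  · have hvert : ∀ i x, (Γ - (Γ.1, fun e => if e ∈ E then Q e else Γ.2 e)).1 i x = 0 := by
      intro i x
      simp [Prod.fst_sub]
    have hedge : ∀ e ∈ E, ∀ x y,
        (Γ - (Γ.1, fun e => if e ∈ E then Q e else Γ.2 e)).2 e x y
          = Γ.2 e x y - Q e x y := by
      intro e he x y
      simp [Prod.snd_sub, if_pos he]
    rw [mvL1]
    have h1 : ∑ i : V, ∑ x : Fin d,
        |(Γ - (Γ.1, fun e => if e ∈ E then Q e else Γ.2 e)).1 i x| = 0 := by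
      refine Finset.sum_eq_zero fun i _ => Finset.sum_eq_zero fun x _ => ?_
      rw [hvert i x, abs_zero]
    rw [h1, zero_add]
    have h2 : ∀ e ∈ E,
        ∑ x : Fin d, ∑ y : Fin d,
          |(Γ - (Γ.1, fun e => if e ∈ E then Q e else Γ.2 e)).2 e x y|
        ≤ (∑ x, |(ν - ν').1 e x|) + ∑ x, |(ν - ν').2 e x| := by
      intro e he
      have hrw : ∑ x : Fin d, ∑ y : Fin d,
          |(Γ - (Γ.1, fun e => if e ∈ E then Q e else Γ.2 e)).2 e x y|
          = ∑ x, ∑ y, |Γ.2 e x y - Q e x y| := by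
        refine Finset.sum_congr rfl fun x _ => Finset.sum_congr rfl fun y _ => ?_
        rw [hedge e he x y]
      rw [hrw]
      refine le_trans (hQcost e he) (le_of_eq ?_)
      congr 1
      · refine Finset.sum_congr rfl fun x _ => ?_
        rw [hΓrow e he x]
        have : Γ.1 e.1 x + ν'.1 e x - (Γ.1 e.1 x + ν.1 e x) = -(ν.1 e x - ν'.1 e x) := by
          ring
        rw [this, abs_neg]
        congr 1
      · refine Finset.sum_congr rfl fun y _ => ?_
        rw [hΓcol e he y]
        have : Γ.1 e.2 y + ν'.2 e y - (Γ.1 e.2 y + ν.2 e y) = -(ν.2 e y - ν'.2 e y) := by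
          ring
        rw [this, abs_neg]
        congr 1
    have h3 : slkL1 E (ν - ν')
        = ∑ e ∈ E, ((∑ x, |(ν - ν').1 e x|) + ∑ x, |(ν - ν').2 e x|) := rfl
    have h4 : 0 ≤ slkL1 E (ν - ν') := by
      rw [h3]
      refine Finset.sum_nonneg fun e _ => ?_
      have := Finset.sum_nonneg (fun x (_ : x ∈ Finset.univ) => abs_nonneg ((ν - ν').1 e x))
      have := Finset.sum_nonneg (fun x (_ : x ∈ Finset.univ) => abs_nonneg ((ν - ν').2 e x))
      linarith
    have h5 : ∑ e ∈ E, ∑ x : Fin d, ∑ y : Fin d,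
        |(Γ - (Γ.1, fun e => if e ∈ E then Q e else Γ.2 e)).2 e x y|
        ≤ slkL1 E (ν - ν') := by
      rw [h3]
      exact Finset.sum_le_sum h2
    linarith
end
end

section
/- Let ν' be a slack vector with ‖ν'‖_∞ ≤ 1/(2d), and let Γ ∈ 𝕃₂ (i.e., Γ ∈ 𝕃₂^ν with ν = 0). Then there exists a marginal vector Γ' ∈ 𝕃₂^{ν'} such that ‖Γ − Γ'‖₁ ≤ 6·d·deg(G)·‖ν'‖₁. -/
noncomputable section

/-- Moving from the local polytope `𝕃₂ = 𝕃₂^0` to the slack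
polytope `𝕃₂^{ν'}` can be done within `l₁` distance `6·d·deg(G)·‖ν'‖₁`. -/
theorem stmt_13 {V : Type} [Fintype V] [DecidableEq V] {d : ℕ} (hd : 1 ≤ d)
    (E : Finset (V × V))
    (hcover : ∀ i : V, ∃ e ∈ E, e.1 = i ∨ e.2 = i)
    (ν' : Slk V d) (hν' : isSlack E ν')
    (hinf : ∀ e ∈ E, ∀ x : Fin d,
      |ν'.1 e x| ≤ 1 / (2 * d) ∧ |ν'.2 e x| ≤ 1 / (2 * d))
    (Γ : MV V d) (hΓ : memSL2 E (0 : Slk V d) Γ) :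
    ∃ Γ' : MV V d, memSL2 E ν' Γ' ∧
      mvL1 E (Γ - Γ') ≤ 6 * d * degG E * slkL1 E ν' := by
  classical
  obtain ⟨hpos1, hsum1, hpos2, hrow, hcol, htot⟩ := hΓ
  have hd1 : (1:ℝ) ≤ (d:ℝ) := by exact_mod_cast hd
  have hd0 : (0:ℝ) < (d:ℝ) := by linarith
  -- local quantities
  set L : V → Fin d → ℝ := fun i x => ∑ e ∈ E,
      ((if e.1 = i then |ν'.1 e x| else 0) + (if e.2 = i then |ν'.2 e x| else 0))
    with hLdef
  set l : V → ℝ := fun i => ∑ x, L i x with hldef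
  set s : V → ℝ := fun i => min 1 (l i) with hsdef
  set lam : V → Fin d → ℝ := fun i x => if l i ≤ 1 then L i x else 1 / d with hlamdef
  have hLnn : ∀ i x, 0 ≤ L i x := by
    intro i x
    apply Finset.sum_nonneg
    intro e _
    positivity
  have hlnn : ∀ i, 0 ≤ l i := by
    intro i; exact Finset.sum_nonneg fun x _ => hLnn i x
  have hs0 : ∀ i, 0 ≤ s i := fun i => le_min zero_le_one (hlnn i)
  have hs1 : ∀ i, s i ≤ 1 := fun i => min_le_left _ _
  have hsl : ∀ i, s i ≤ l i := fun i => min_le_right _ _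
  have hlamnn : ∀ i x, 0 ≤ lam i x := by
    intro i x
    simp only [hlamdef]
    split
    · exact hLnn i x
    · positivity
  have hlamsum : ∀ i, ∑ x, lam i x = s i := by
    intro i
    by_cases h : l i ≤ 1
    · simp only [hlamdef, if_pos h, hsdef]
      rw [min_eq_right h]
    · simp only [hlamdef, if_neg h, hsdef]
      rw [min_eq_left (le_of_not_ge h)]
      rw [Finset.sum_const, Finset.card_univ, Fintype.card_fin, nsmul_eq_mul]
      field_simp
  -- domination of slack entries by lam
  have hlam1 : ∀ e ∈ E, ∀ x, |ν'.1 e x| ≤ lam e.1 x := by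
    intro e he x
    by_cases h : l e.1 ≤ 1
    · simp only [hlamdef, if_pos h]
      calc |ν'.1 e x| ≤ (if e.1 = e.1 then |ν'.1 e x| else 0)
            + (if e.2 = e.1 then |ν'.2 e x| else 0) := by
            have h0 : (if e.1 = e.1 then |ν'.1 e x| else 0) = |ν'.1 e x| := by simp
            have h2 : (0:ℝ) ≤ (if e.2 = e.1 then |ν'.2 e x| else 0) := by positivity
            linarith
        _ ≤ L e.1 x := Finset.single_le_sum (f := fun e' =>
            (if e'.1 = e.1 then |ν'.1 e' x| else 0) + (if e'.2 = e.1 then |ν'.2 e' x| else 0))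
            (fun e' _ => by positivity) he
    · simp only [hlamdef, if_neg h]
      have h1 := (hinf e he x).1
      have : (1:ℝ) / (2 * d) ≤ 1 / d := by
        apply div_le_div_of_nonneg_left one_pos.le hd0
        linarith
      linarith
  have hlam2 : ∀ e ∈ E, ∀ x, |ν'.2 e x| ≤ lam e.2 x := by
    intro e he x
    by_cases h : l e.2 ≤ 1
    · simp only [hlamdef, if_pos h]
      calc |ν'.2 e x| ≤ (if e.1 = e.2 then |ν'.1 e x| else 0)
            + (if e.2 = e.2 then |ν'.2 e x| else 0) := by
            have h0 : (if e.2 = e.2 then |ν'.2 e x| else 0) = |ν'.2 e x| := by simp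
            have h2 : (0:ℝ) ≤ (if e.1 = e.2 then |ν'.1 e x| else 0) := by positivity
            linarith
        _ ≤ L e.2 x := Finset.single_le_sum (f := fun e' =>
            (if e'.1 = e.2 then |ν'.1 e' x| else 0) + (if e'.2 = e.2 then |ν'.2 e' x| else 0))
            (fun e' _ => by positivity) he
    · simp only [hlamdef, if_neg h]
      have h1 := (hinf e he x).2
      have : (1:ℝ) / (2 * d) ≤ 1 / d := by
        apply div_le_div_of_nonneg_left one_pos.le hd0
        linarith
      linarith
  have hmu1 : ∀ e ∈ E, ∀ x, 0 ≤ lam e.1 x + ν'.1 e x := by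
    intro e he x
    have := hlam1 e he x
    have := neg_abs_le (ν'.1 e x)
    linarith
  have hmu2 : ∀ e ∈ E, ∀ y, 0 ≤ lam e.2 y + ν'.2 e y := by
    intro e he y
    have := hlam2 e he y
    have := neg_abs_le (ν'.2 e y)
    linarith
  have hmusum1 : ∀ e ∈ E, ∑ x, (lam e.1 x + ν'.1 e x) = s e.1 := by
    intro e he
    rw [Finset.sum_add_distrib, hlamsum, (hν' e he).1, add_zero]
  have hmusum2 : ∀ e ∈ E, ∑ y, (lam e.2 y + ν'.2 e y) = s e.2 := by
    intro e he
    rw [Finset.sum_add_distrib, hlamsum, (hν' e he).2, add_zero]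
  -- the new marginal vector
  set g1 : V → Fin d → ℝ := fun i x => (1 - s i) * Γ.1 i x + lam i x with hg1def
  set g2 : (V × V) → Fin d → Fin d → ℝ := fun e x y =>
      (1 - s e.1) * (1 - s e.2) * Γ.2 e x y
      + ((1 - s e.1) * Γ.1 e.1 x + (lam e.1 x + ν'.1 e x)) * (lam e.2 y + ν'.2 e y)
      + ((lam e.1 x + ν'.1 e x) * (1 - s e.2)) * Γ.1 e.2 y
    with hg2def
  have hzero1 : ∀ e x, (0 : Slk V d).1 e x = 0 := fun e x => rfl
  have hzero2 : ∀ e y, (0 : Slk V d).2 e y = 0 := fun e y => rfl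
  have hrow' : ∀ e ∈ E, ∀ x, ∑ y, Γ.2 e x y = Γ.1 e.1 x := by
    intro e he x
    have := hrow e he x
    rwa [hzero1, add_zero] at this
  have hcol' : ∀ e ∈ E, ∀ y, ∑ x, Γ.2 e x y = Γ.1 e.2 y := by
    intro e he y
    have := hcol e he y
    rwa [hzero2, add_zero] at this
  have hg1sum : ∀ i, ∑ x, g1 i x = 1 := by
    intro i
    simp only [hg1def]
    rw [Finset.sum_add_distrib, ← Finset.mul_sum, hsum1, hlamsum]
    ring
  have hrowQ : ∀ e ∈ E, ∀ x, ∑ y, g2 e x y = g1 e.1 x + ν'.1 e x := by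
    intro e he x
    simp only [hg2def]
    rw [Finset.sum_add_distrib, Finset.sum_add_distrib, ← Finset.mul_sum,
      ← Finset.mul_sum, ← Finset.mul_sum, hrow' e he x, hmusum2 e he, hsum1]
    simp only [hg1def]
    ring
  have hcolQ : ∀ e ∈ E, ∀ y, ∑ x, g2 e x y = g1 e.2 y + ν'.2 e y := by
    intro e he y
    simp only [hg2def]
    rw [Finset.sum_add_distrib, Finset.sum_add_distrib, ← Finset.mul_sum,
      ← Finset.sum_mul, ← Finset.sum_mul, hcol' e he y]
    have h1 : ∑ x, ((1 - s e.1) * Γ.1 e.1 x + (lam e.1 x + ν'.1 e x)) = 1 := by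
      rw [Finset.sum_add_distrib, ← Finset.mul_sum, hsum1, hmusum1 e he]
      ring
    have h2 : ∑ x, (lam e.1 x + ν'.1 e x) * (1 - s e.2) = s e.1 * (1 - s e.2) := by
      rw [← Finset.sum_mul, hmusum1 e he]
    rw [h1, h2]
    simp only [hg1def]
    ring
  refine ⟨⟨g1, g2⟩, ⟨?_, ?_, ?_, ?_, ?_, ?_⟩, ?_⟩
  · -- vertex nonneg
    intro i x
    have h1 : 0 ≤ (1 - s i) * Γ.1 i x := mul_nonneg (by linarith [hs1 i]) (hpos1 i x)
    have := hlamnn i x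
    simp only [hg1def]
    linarith
  · -- vertex sums
    exact hg1sum
  · -- edge nonneg
    intro e he x y
    have h1 : 0 ≤ (1 - s e.1) * (1 - s e.2) * Γ.2 e x y :=
      mul_nonneg (mul_nonneg (by linarith [hs1 e.1]) (by linarith [hs1 e.2])) (hpos2 e he x y)
    have h2 : 0 ≤ ((1 - s e.1) * Γ.1 e.1 x + (lam e.1 x + ν'.1 e x)) * (lam e.2 y + ν'.2 e y) :=
      mul_nonneg (add_nonneg (mul_nonneg (by linarith [hs1 e.1]) (hpos1 e.1 x)) (hmu1 e he x))
        (hmu2 e he y)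
    have h3 : 0 ≤ ((lam e.1 x + ν'.1 e x) * (1 - s e.2)) * Γ.1 e.2 y :=
      mul_nonneg (mul_nonneg (hmu1 e he x) (by linarith [hs1 e.2])) (hpos1 e.2 y)
    simp only [hg2def]
    linarith
  · -- row sums
    exact hrowQ
  · -- col sums
    exact hcolQ
  · -- total sums
    intro e he
    rw [Finset.sum_congr rfl fun x _ => hrowQ e he x, Finset.sum_add_distrib,
      hg1sum, (hν' e he).1, add_zero]
  · -- the distance bound
    have habs1 : ∀ i, ∑ x, |Γ.1 i x - g1 i x| ≤ 2 * s i := by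
      intro i
      have hpt : ∀ x ∈ Finset.univ, |Γ.1 i x - g1 i x| ≤ s i * Γ.1 i x + lam i x := by
        intro x _
        have h1 : 0 ≤ s i * Γ.1 i x := mul_nonneg (hs0 i) (hpos1 i x)
        have h2 := hlamnn i x
        rw [abs_le]
        constructor <;> simp only [hg1def] <;> [linarith; linarith]
      calc ∑ x, |Γ.1 i x - g1 i x| ≤ ∑ x, (s i * Γ.1 i x + lam i x) :=
            Finset.sum_le_sum hpt
        _ = 2 * s i := by
            rw [Finset.sum_add_distrib, ← Finset.mul_sum, hsum1, hlamsum]; ring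
    have habs2 : ∀ e ∈ E, ∑ x, ∑ y, |Γ.2 e x y - g2 e x y| ≤ 2 * (s e.1 + s e.2) := by
      intro e he
      have hc1 : (1 - s e.1) * (1 - s e.2) ≤ 1 := by
        nlinarith [hs0 e.1, hs0 e.2, hs1 e.1, hs1 e.2]
      have hpt : ∀ x y, |Γ.2 e x y - g2 e x y| ≤
          (1 - (1 - s e.1) * (1 - s e.2)) * Γ.2 e x y
          + ((1 - s e.1) * Γ.1 e.1 x + (lam e.1 x + ν'.1 e x)) * (lam e.2 y + ν'.2 e y)
          + ((lam e.1 x + ν'.1 e x) * (1 - s e.2)) * Γ.1 e.2 y := by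
        intro x y
        have h1 : 0 ≤ (1 - (1 - s e.1) * (1 - s e.2)) * Γ.2 e x y :=
          mul_nonneg (by linarith) (hpos2 e he x y)
        have h2 : 0 ≤ ((1 - s e.1) * Γ.1 e.1 x + (lam e.1 x + ν'.1 e x)) * (lam e.2 y + ν'.2 e y) :=
          mul_nonneg (add_nonneg (mul_nonneg (by linarith [hs1 e.1]) (hpos1 e.1 x))
            (hmu1 e he x)) (hmu2 e he y)
        have h3 : 0 ≤ ((lam e.1 x + ν'.1 e x) * (1 - s e.2)) * Γ.1 e.2 y :=
          mul_nonneg (mul_nonneg (hmu1 e he x) (by linarith [hs1 e.2])) (hpos1 e.2 y)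
        rw [abs_le]
        constructor <;> simp only [hg2def] <;> nlinarith [h1, h2, h3]
      have hBsum : ∑ x, ((1 - s e.1) * Γ.1 e.1 x + (lam e.1 x + ν'.1 e x)) = 1 := by
        rw [Finset.sum_add_distrib, ← Finset.mul_sum, hsum1, hmusum1 e he]; ring
      have hDsum : ∑ x, (lam e.1 x + ν'.1 e x) * (1 - s e.2) = s e.1 * (1 - s e.2) := by
        rw [← Finset.sum_mul, hmusum1 e he]
      calc ∑ x, ∑ y, |Γ.2 e x y - g2 e x y|
          ≤ ∑ x, ∑ y, ((1 - (1 - s e.1) * (1 - s e.2)) * Γ.2 e x y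
            + ((1 - s e.1) * Γ.1 e.1 x + (lam e.1 x + ν'.1 e x)) * (lam e.2 y + ν'.2 e y)
            + ((lam e.1 x + ν'.1 e x) * (1 - s e.2)) * Γ.1 e.2 y) :=
            Finset.sum_le_sum fun x _ => Finset.sum_le_sum fun y _ => hpt x y
        _ = (1 - (1 - s e.1) * (1 - s e.2)) * (∑ x, ∑ y, Γ.2 e x y)
            + (∑ x, ((1 - s e.1) * Γ.1 e.1 x + (lam e.1 x + ν'.1 e x)))
              * (∑ y, (lam e.2 y + ν'.2 e y))
            + (∑ x, (lam e.1 x + ν'.1 e x) * (1 - s e.2)) * (∑ y, Γ.1 e.2 y) := by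
            simp only [Finset.sum_add_distrib, ← Finset.mul_sum, ← Finset.sum_mul]
        _ = (1 - (1 - s e.1) * (1 - s e.2)) + 1 * s e.2 + (s e.1 * (1 - s e.2)) * 1 := by
            rw [htot e he, hBsum, hDsum, hmusum2 e he, hsum1, mul_one]
        _ ≤ 2 * (s e.1 + s e.2) := by
            nlinarith [mul_nonneg (hs0 e.1) (hs0 e.2)]
    have hmv : mvL1 E (Γ - (⟨g1, g2⟩ : MV V d)) =
        (∑ i, ∑ x, |Γ.1 i x - g1 i x|) + ∑ e ∈ E, ∑ x, ∑ y, |Γ.2 e x y - g2 e x y| := by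
      simp only [mvL1, Prod.fst_sub, Prod.snd_sub, Pi.sub_apply]
    have hSnn : 0 ≤ slkL1 E ν' := by
      apply Finset.sum_nonneg; intro e _; positivity
    have hSl : ∑ i, l i = slkL1 E ν' := by
      have hkey : ∀ e ∈ E, ∀ x : Fin d,
          ∑ i, ((if e.1 = i then |ν'.1 e x| else 0) + (if e.2 = i then |ν'.2 e x| else 0))
          = |ν'.1 e x| + |ν'.2 e x| := by
        intro e _ x
        rw [Finset.sum_add_distrib, Finset.sum_ite_eq, Finset.sum_ite_eq]
        simp
      calc ∑ i, l i = ∑ i, ∑ x, ∑ e ∈ E,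
            ((if e.1 = i then |ν'.1 e x| else 0) + (if e.2 = i then |ν'.2 e x| else 0)) := rfl
        _ = ∑ i, ∑ e ∈ E, ∑ x,
            ((if e.1 = i then |ν'.1 e x| else 0) + (if e.2 = i then |ν'.2 e x| else 0)) :=
            Finset.sum_congr rfl fun i _ => Finset.sum_comm
        _ = ∑ e ∈ E, ∑ i, ∑ x,
            ((if e.1 = i then |ν'.1 e x| else 0) + (if e.2 = i then |ν'.2 e x| else 0)) :=
            Finset.sum_comm
        _ = ∑ e ∈ E, ∑ x, ∑ i,
            ((if e.1 = i then |ν'.1 e x| else 0) + (if e.2 = i then |ν'.2 e x| else 0)) :=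
            Finset.sum_congr rfl fun e _ => Finset.sum_comm
        _ = slkL1 E ν' := by
            refine Finset.sum_congr rfl fun e he => ?_
            rw [← Finset.sum_add_distrib]
            exact Finset.sum_congr rfl fun x _ => hkey e he x
    have hfilt1 : ∀ i : V, ((E.filter fun e => e.1 = i).card : ℝ) ≤ (degG E : ℝ) := by
      intro i
      have h1 : (E.filter fun e => e.1 = i).card ≤ (E.filter fun e => e.1 = i ∨ e.2 = i).card := by
        apply Finset.card_le_card
        intro e hee
        simp only [Finset.mem_filter] at hee ⊢
        exact ⟨hee.1, Or.inl hee.2⟩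
      have h2 : (E.filter fun e => e.1 = i ∨ e.2 = i).card ≤ degG E := by
        unfold degG
        exact Finset.le_sup (f := fun i : V => (E.filter fun e => e.1 = i ∨ e.2 = i).card)
          (Finset.mem_univ i)
      exact_mod_cast le_trans h1 h2
    have hfilt2 : ∀ i : V, ((E.filter fun e => e.2 = i).card : ℝ) ≤ (degG E : ℝ) := by
      intro i
      have h1 : (E.filter fun e => e.2 = i).card ≤ (E.filter fun e => e.1 = i ∨ e.2 = i).card := by
        apply Finset.card_le_card
        intro e hee
        simp only [Finset.mem_filter] at hee ⊢
        exact ⟨hee.1, Or.inr hee.2⟩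
      have h2 : (E.filter fun e => e.1 = i ∨ e.2 = i).card ≤ degG E := by
        unfold degG
        exact Finset.le_sup (f := fun i : V => (E.filter fun e => e.1 = i ∨ e.2 = i).card)
          (Finset.mem_univ i)
      exact_mod_cast le_trans h1 h2
    have hb1 : ∑ e ∈ E, s e.1 ≤ (degG E : ℝ) * slkL1 E ν' := by
      calc ∑ e ∈ E, s e.1 ≤ ∑ e ∈ E, l e.1 := Finset.sum_le_sum fun e _ => hsl e.1
        _ = ∑ e ∈ E, ∑ i, (if e.1 = i then l i else 0) := by
            refine Finset.sum_congr rfl fun e _ => ?_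
            rw [Finset.sum_ite_eq]; simp
        _ = ∑ i, ∑ e ∈ E, (if e.1 = i then l i else 0) := Finset.sum_comm
        _ = ∑ i, ((E.filter fun e => e.1 = i).card : ℝ) * l i := by
            refine Finset.sum_congr rfl fun i _ => ?_
            rw [← Finset.sum_filter, Finset.sum_const, nsmul_eq_mul]
        _ ≤ ∑ i, (degG E : ℝ) * l i :=
            Finset.sum_le_sum fun i _ => mul_le_mul_of_nonneg_right (hfilt1 i) (hlnn i)
        _ = (degG E : ℝ) * ∑ i, l i := by rw [Finset.mul_sum]
        _ = (degG E : ℝ) * slkL1 E ν' := by rw [hSl]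
    have hb2 : ∑ e ∈ E, s e.2 ≤ (degG E : ℝ) * slkL1 E ν' := by
      calc ∑ e ∈ E, s e.2 ≤ ∑ e ∈ E, l e.2 := Finset.sum_le_sum fun e _ => hsl e.2
        _ = ∑ e ∈ E, ∑ i, (if e.2 = i then l i else 0) := by
            refine Finset.sum_congr rfl fun e _ => ?_
            rw [Finset.sum_ite_eq]; simp
        _ = ∑ i, ∑ e ∈ E, (if e.2 = i then l i else 0) := Finset.sum_comm
        _ = ∑ i, ((E.filter fun e => e.2 = i).card : ℝ) * l i := by
            refine Finset.sum_congr rfl fun i _ => ?_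
            rw [← Finset.sum_filter, Finset.sum_const, nsmul_eq_mul]
        _ ≤ ∑ i, (degG E : ℝ) * l i :=
            Finset.sum_le_sum fun i _ => mul_le_mul_of_nonneg_right (hfilt2 i) (hlnn i)
        _ = (degG E : ℝ) * ∑ i, l i := by rw [Finset.mul_sum]
        _ = (degG E : ℝ) * slkL1 E ν' := by rw [hSl]
    have hsb : ∑ i, s i ≤ slkL1 E ν' := by
      rw [← hSl]; exact Finset.sum_le_sum fun i _ => hsl i
    have hchain : mvL1 E (Γ - (⟨g1, g2⟩ : MV V d)) ≤
        2 * slkL1 E ν' + 4 * ((degG E : ℝ) * slkL1 E ν') := by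
      rw [hmv]
      have hv : ∑ i, ∑ x, |Γ.1 i x - g1 i x| ≤ 2 * slkL1 E ν' := by
        calc ∑ i, ∑ x, |Γ.1 i x - g1 i x| ≤ ∑ i, 2 * s i :=
              Finset.sum_le_sum fun i _ => habs1 i
          _ = 2 * ∑ i, s i := by rw [Finset.mul_sum]
          _ ≤ 2 * slkL1 E ν' := by linarith [hsb]
      have hee : ∑ e ∈ E, ∑ x, ∑ y, |Γ.2 e x y - g2 e x y| ≤
          4 * ((degG E : ℝ) * slkL1 E ν') := by
        calc ∑ e ∈ E, ∑ x, ∑ y, |Γ.2 e x y - g2 e x y|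
            ≤ ∑ e ∈ E, 2 * (s e.1 + s e.2) := Finset.sum_le_sum habs2
          _ = 2 * ((∑ e ∈ E, s e.1) + ∑ e ∈ E, s e.2) := by
              rw [← Finset.sum_add_distrib, Finset.mul_sum]
          _ ≤ 4 * ((degG E : ℝ) * slkL1 E ν') := by linarith [hb1, hb2]
      linarith
    refine le_trans hchain ?_
    rcases Finset.eq_empty_or_nonempty E with hE | hE
    · have hz : slkL1 E ν' = 0 := by simp [slkL1, hE]
      rw [hz]; ring_nf
      positivity
    · have hdeg1 : (1:ℝ) ≤ (degG E : ℝ) := by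
        obtain ⟨e, he⟩ := hE
        have hmem : e ∈ E.filter fun e' => e'.1 = e.1 ∨ e'.2 = e.1 := by
          simp [he]
        have h1 : 1 ≤ (E.filter fun e' => e'.1 = e.1 ∨ e'.2 = e.1).card :=
          Finset.card_pos.mpr ⟨e, hmem⟩
        have h2 : (E.filter fun e' => e'.1 = e.1 ∨ e'.2 = e.1).card ≤ degG E := by
          unfold degG
          exact Finset.le_sup (f := fun i : V => (E.filter fun e => e.1 = i ∨ e.2 = i).card)
            (Finset.mem_univ e.1)
        exact_mod_cast le_trans h1 h2
      nlinarith [hSnn, hd1, hdeg1, mul_nonneg hSnn (by linarith : (0:ℝ) ≤ (degG E : ℝ) - 1),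
        mul_nonneg (mul_nonneg hSnn (by linarith : (0:ℝ) ≤ (degG E : ℝ))) (by linarith : (0:ℝ) ≤ (d:ℝ) - 1)]
end
end

section
/- Fix τ with 0 < τ ≤ 1/(8d²) and a slack vector ν with ‖ν‖_∞ ≤ 1/(4d). If Γ ∈ 𝕃₂^ν, then there exists a marginal vector Γ' ∈ 𝕃₂ such that Γ'_i(x_i) ≥ τ for all i∈V and x_i∈χ, Γ'_{ij}(x_i,x_j) ≥ τ for all ij∈E and x_i,x_j∈χ, and ‖Γ − Γ'‖₁ ≤ 2‖ν‖₁ + 2(|E|+n)d²τ. -/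
noncomputable section

namespace Stmt14Aux

variable {d : ℕ}

/-- Rescale each row of `A` so that row `x` sums to `r x`. -/
def fixRow (r : Fin d → ℝ) (A : Fin d → Fin d → ℝ) : Fin d → Fin d → ℝ :=
  fun x y => if 0 < ∑ y', A x y' then A x y * (r x / ∑ y', A x y') else r x / d

lemma fixRow_nonneg {r : Fin d → ℝ} {A : Fin d → Fin d → ℝ}
    (hr : ∀ x, 0 ≤ r x) (hA : ∀ x y, 0 ≤ A x y) (x y : Fin d) :
    0 ≤ fixRow r A x y := by
  unfold fixRow
  split_ifs with h
  · exact mul_nonneg (hA x y) (div_nonneg (hr x) h.le)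
  · exact div_nonneg (hr x) (Nat.cast_nonneg d)

lemma fixRow_rowsum (hd : 0 < d) (r : Fin d → ℝ) (A : Fin d → Fin d → ℝ) (x : Fin d) :
    ∑ y, fixRow r A x y = r x := by
  have hd0 : (d : ℝ) ≠ 0 := Nat.cast_ne_zero.mpr hd.ne'
  unfold fixRow
  by_cases h : 0 < ∑ y', A x y'
  · simp only [if_pos h]
    rw [← Finset.sum_mul, mul_comm, div_mul_cancel₀ _ h.ne']
  · simp only [if_neg h]
    rw [Finset.sum_const, Finset.card_univ, Fintype.card_fin, nsmul_eq_mul, mul_comm,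
      div_mul_cancel₀ _ hd0]

lemma fixRow_l1 (hd : 0 < d) {r : Fin d → ℝ} {A : Fin d → Fin d → ℝ}
    (hr : ∀ x, 0 ≤ r x) (hA : ∀ x y, 0 ≤ A x y) (x : Fin d) :
    ∑ y, |A x y - fixRow r A x y| ≤ |(∑ y, A x y) - r x| := by
  have hd0 : (d : ℝ) ≠ 0 := Nat.cast_ne_zero.mpr hd.ne'
  unfold fixRow
  by_cases h : 0 < ∑ y', A x y'
  · simp only [if_pos h]
    have h1 : ∀ y : Fin d, |A x y - A x y * (r x / ∑ y', A x y')|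
        = A x y * |1 - r x / ∑ y', A x y'| := by
      intro y
      calc |A x y - A x y * (r x / ∑ y', A x y')|
          = |A x y * (1 - r x / ∑ y', A x y')| := by rw [mul_one_sub]
        _ = |A x y| * |1 - r x / ∑ y', A x y'| := abs_mul _ _
        _ = A x y * |1 - r x / ∑ y', A x y'| := by rw [abs_of_nonneg (hA x y)]
    rw [Finset.sum_congr rfl (fun y _ => h1 y), ← Finset.sum_mul]
    have h2 : (∑ y', A x y') * |1 - r x / ∑ y', A x y'| = |(∑ y', A x y') - r x| := by
      calc (∑ y', A x y') * |1 - r x / ∑ y', A x y'|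
          = |∑ y', A x y'| * |1 - r x / ∑ y', A x y'| := by rw [abs_of_pos h]
        _ = |(∑ y', A x y') * (1 - r x / ∑ y', A x y')| := (abs_mul _ _).symm
        _ = |(∑ y', A x y') - r x| := by rw [mul_one_sub, mul_div_cancel₀ _ h.ne']
    exact le_of_eq h2
  · have hs0 : ∑ y', A x y' = 0 :=
      le_antisymm (not_lt.mp h) (Finset.sum_nonneg fun y _ => hA x y)
    have hA0 : ∀ y, A x y = 0 := fun y =>
      (Finset.sum_eq_zero_iff_of_nonneg (fun y _ => hA x y)).mp hs0 y (Finset.mem_univ y)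
    simp only [if_neg h]
    have : ∑ y : Fin d, |A x y - r x / d| = r x := by
      have : ∀ y : Fin d, |A x y - r x / d| = r x / d := by
        intro y
        rw [hA0 y, zero_sub, abs_neg, abs_of_nonneg (div_nonneg (hr x) (Nat.cast_nonneg d))]
      rw [Finset.sum_congr rfl (fun y _ => this y), Finset.sum_const, Finset.card_univ,
        Fintype.card_fin, nsmul_eq_mul, mul_comm, div_mul_cancel₀ _ hd0]
    rw [this, hs0, zero_sub, abs_neg, abs_of_nonneg (hr x)]

/-- Column sums. -/
def colsum (B : Fin d → Fin d → ℝ) (y : Fin d) : ℝ := ∑ x, B x y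

def dpos (c : Fin d → ℝ) (B : Fin d → Fin d → ℝ) (y : Fin d) : ℝ :=
  max (c y - colsum B y) 0

def dneg (c : Fin d → ℝ) (B : Fin d → Fin d → ℝ) (y : Fin d) : ℝ :=
  max (colsum B y - c y) 0

def ellr (c : Fin d → ℝ) (B : Fin d → Fin d → ℝ) (x : Fin d) : ℝ :=
  ∑ y, B x y * (dneg c B y / colsum B y)

/-- Fix the column sums to `c` while keeping row sums, by moving mass within rows. -/
def fixCol (c : Fin d → ℝ) (B : Fin d → Fin d → ℝ) : Fin d → Fin d → ℝ :=
  fun x y => B x y * (min (c y) (colsum B y) / colsum B y) +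
    ellr c B x * (dpos c B y / ∑ y', dpos c B y')

section FixCol

variable {c : Fin d → ℝ} {B : Fin d → Fin d → ℝ}

lemma colsum_nonneg (hB : ∀ x y, 0 ≤ B x y) (y : Fin d) : 0 ≤ colsum B y :=
  Finset.sum_nonneg fun x _ => hB x y

lemma B_zero_of_colsum (hB : ∀ x y, 0 ≤ B x y) {y : Fin d} (h : colsum B y = 0)
    (x : Fin d) : B x y = 0 :=
  (Finset.sum_eq_zero_iff_of_nonneg (fun x _ => hB x y)).mp h x (Finset.mem_univ x)

lemma dpos_nonneg (y : Fin d) : 0 ≤ dpos c B y := le_max_right _ _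
lemma dneg_nonneg (y : Fin d) : 0 ≤ dneg c B y := le_max_right _ _

lemma ellr_nonneg (hB : ∀ x y, 0 ≤ B x y) (x : Fin d) : 0 ≤ ellr c B x :=
  Finset.sum_nonneg fun y _ =>
    mul_nonneg (hB x y) (div_nonneg (dneg_nonneg y) (colsum_nonneg hB y))

lemma min_add_dneg (y : Fin d) :
    min (c y) (colsum B y) + dneg c B y = colsum B y := by
  rcases le_total (c y) (colsum B y) with h | h
  · rw [min_eq_left h, dneg, max_eq_left (by linarith)]; ring
  · rw [min_eq_right h, dneg, max_eq_right (by linarith)]; ring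

lemma min_add_dpos (hc : ∀ y, 0 ≤ c y) (y : Fin d) :
    min (c y) (colsum B y) + dpos c B y = c y := by
  rcases le_total (c y) (colsum B y) with h | h
  · rw [min_eq_left h, dpos, max_eq_right (by linarith)]; ring
  · rw [min_eq_right h, dpos, max_eq_left (by linarith)]; ring

/-- Key pointwise identity. -/
lemma key_pointwise (hB : ∀ x y, 0 ≤ B x y) (hc : ∀ y, 0 ≤ c y) (x y : Fin d) :
    B x y * (min (c y) (colsum B y) / colsum B y) + B x y * (dneg c B y / colsum B y)
      = B x y := by
  by_cases h : colsum B y = 0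
  · rw [B_zero_of_colsum hB h x]; ring
  · rw [← mul_add, ← add_div, min_add_dneg, div_self h, mul_one]

lemma dneg_zero_of_colsum_zero (hc : ∀ y, 0 ≤ c y) {y : Fin d}
    (h : colsum B y = 0) : dneg c B y = 0 := by
  rw [dneg, h, max_eq_right (by linarith [hc y])]

lemma sum_dpos_eq_sum_dneg (hc : ∀ y, 0 ≤ c y)
    (htot : ∑ y, c y = ∑ x, ∑ y, B x y) :
    ∑ y, dpos c B y = ∑ y, dneg c B y := by
  have h1 : ∀ y : Fin d, dpos c B y - dneg c B y = c y - colsum B y := by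
    intro y
    rcases le_total (c y) (colsum B y) with h | h
    · rw [dpos, dneg, max_eq_right (by linarith), max_eq_left (by linarith)]; ring
    · rw [dpos, dneg, max_eq_left (by linarith), max_eq_right (by linarith)]; ring
  have h2 : ∑ y, (dpos c B y - dneg c B y) = 0 := by
    rw [Finset.sum_congr rfl (fun y _ => h1 y), Finset.sum_sub_distrib]
    have : ∑ y, colsum B y = ∑ x, ∑ y, B x y := Finset.sum_comm
    rw [this, htot]; ring
  rw [Finset.sum_sub_distrib] at h2
  linarith

lemma sum_ellr (hB : ∀ x y, 0 ≤ B x y) (hc : ∀ y, 0 ≤ c y) :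
    ∑ x, ellr c B x = ∑ y, dneg c B y := by
  unfold ellr
  rw [Finset.sum_comm]
  refine Finset.sum_congr rfl fun y _ => ?_
  rw [← Finset.sum_mul]
  by_cases h : colsum B y = 0
  · rw [show ∑ x, B x y = colsum B y from rfl, h, zero_mul,
      dneg_zero_of_colsum_zero hc h]
  · rw [show ∑ x, B x y = colsum B y from rfl, mul_comm, div_mul_cancel₀ _ h]

lemma fixCol_nonneg (hB : ∀ x y, 0 ≤ B x y) (hc : ∀ y, 0 ≤ c y) (x y : Fin d) :
    0 ≤ fixCol c B x y := by
  unfold fixCol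
  have h1 : 0 ≤ min (c y) (colsum B y) := le_min (hc y) (colsum_nonneg hB y)
  have h2 : 0 ≤ ∑ y', dpos c B y' := Finset.sum_nonneg fun y' _ => dpos_nonneg y'
  exact add_nonneg
    (mul_nonneg (hB x y) (div_nonneg h1 (colsum_nonneg hB y)))
    (mul_nonneg (ellr_nonneg hB x) (div_nonneg (dpos_nonneg y) h2))

lemma fixCol_rowsum (hB : ∀ x y, 0 ≤ B x y) (hc : ∀ y, 0 ≤ c y)
    (htot : ∑ y, c y = ∑ x, ∑ y, B x y) (x : Fin d) :
    ∑ y, fixCol c B x y = ∑ y, B x y := by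
  unfold fixCol
  rw [Finset.sum_add_distrib, ← Finset.mul_sum, ← Finset.sum_div]
  have h1 : ∑ y, B x y * (min (c y) (colsum B y) / colsum B y)
      = (∑ y, B x y) - ellr c B x := by
    unfold ellr
    rw [eq_sub_iff_add_eq, ← Finset.sum_add_distrib]
    exact Finset.sum_congr rfl fun y _ => key_pointwise hB hc x y
  rw [h1]
  by_cases hS : ∑ y', dpos c B y' = 0
  · have h2 := sum_dpos_eq_sum_dneg (c := c) (B := B) hc htot
    rw [hS] at h2
    have hdneg : ∀ y, dneg c B y = 0 := fun y =>
      (Finset.sum_eq_zero_iff_of_nonneg (fun y _ => dneg_nonneg y)).mp h2.symm y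
        (Finset.mem_univ y)
    have hell : ellr c B x = 0 := by
      refine Finset.sum_eq_zero fun y _ => ?_
      rw [hdneg y]
      simp
    rw [hell, hS]
    simp
  · rw [div_self hS, mul_one]
    ring

lemma fixCol_colsum (hB : ∀ x y, 0 ≤ B x y) (hc : ∀ y, 0 ≤ c y)
    (htot : ∑ y, c y = ∑ x, ∑ y, B x y) (y : Fin d) :
    ∑ x, fixCol c B x y = c y := by
  unfold fixCol
  rw [Finset.sum_add_distrib, ← Finset.sum_mul, ← Finset.sum_mul]
  have h1 : (∑ x, B x y) * (min (c y) (colsum B y) / colsum B y)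
      = min (c y) (colsum B y) := by
    by_cases h : colsum B y = 0
    · rw [show (∑ x, B x y) = colsum B y from rfl, h, zero_mul, min_eq_right (hc y)]
    · rw [show (∑ x, B x y) = colsum B y from rfl, mul_comm, div_mul_cancel₀ _ h]
  have h2 : (∑ x, ellr c B x) * (dpos c B y / ∑ y', dpos c B y') = dpos c B y := by
    rw [sum_ellr hB hc, ← sum_dpos_eq_sum_dneg hc htot]
    by_cases hS : ∑ y', dpos c B y' = 0
    · have h3 : dpos c B y = 0 :=
        (Finset.sum_eq_zero_iff_of_nonneg (fun y _ => dpos_nonneg y)).mp hS y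
          (Finset.mem_univ y)
      rw [h3, hS]
      simp
    · rw [mul_comm, div_mul_cancel₀ _ hS]
  rw [h1, h2, min_add_dpos hc]

lemma abs_eq_dpos_add_dneg (y : Fin d) :
    |c y - colsum B y| = dpos c B y + dneg c B y := by
  rcases le_total (c y) (colsum B y) with h | h
  · rw [abs_of_nonpos (by linarith), dpos, dneg, max_eq_right (by linarith),
      max_eq_left (by linarith)]
    ring
  · rw [abs_of_nonneg (by linarith), dpos, dneg, max_eq_left (by linarith),
      max_eq_right (by linarith)]
    ring

lemma fixCol_l1 (hB : ∀ x y, 0 ≤ B x y) (hc : ∀ y, 0 ≤ c y)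
    (htot : ∑ y, c y = ∑ x, ∑ y, B x y) :
    ∑ x, ∑ y, |B x y - fixCol c B x y| ≤ ∑ y, |c y - colsum B y| := by
  have hSnn : (0:ℝ) ≤ ∑ y', dpos c B y' := Finset.sum_nonneg fun y _ => dpos_nonneg y
  have step1 : ∀ x, ∑ y, |B x y - fixCol c B x y| ≤ 2 * ellr c B x := by
    intro x
    have hb : ∀ y, |B x y - fixCol c B x y| ≤
        B x y * (dneg c B y / colsum B y) +
          ellr c B x * (dpos c B y / ∑ y', dpos c B y') := by
      intro y
      have hk := key_pointwise hB hc x y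
      have hdiff : B x y - fixCol c B x y =
          B x y * (dneg c B y / colsum B y) -
            ellr c B x * (dpos c B y / ∑ y', dpos c B y') := by
        simp only [fixCol]
        linarith [hk]
      rw [hdiff]
      have t1 : 0 ≤ B x y * (dneg c B y / colsum B y) :=
        mul_nonneg (hB x y) (div_nonneg (dneg_nonneg y) (colsum_nonneg hB y))
      have t2 : 0 ≤ ellr c B x * (dpos c B y / ∑ y', dpos c B y') :=
        mul_nonneg (ellr_nonneg hB x) (div_nonneg (dpos_nonneg y) hSnn)
      exact abs_le.mpr ⟨by linarith, by linarith⟩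
    calc ∑ y, |B x y - fixCol c B x y|
        ≤ ∑ y, (B x y * (dneg c B y / colsum B y) +
            ellr c B x * (dpos c B y / ∑ y', dpos c B y')) :=
          Finset.sum_le_sum fun y _ => hb y
      _ = ellr c B x + ellr c B x * ((∑ y', dpos c B y') / ∑ y', dpos c B y') := by
          rw [Finset.sum_add_distrib, ← Finset.mul_sum, ← Finset.sum_div]
          rfl
      _ ≤ ellr c B x + ellr c B x * 1 := by
          gcongr
          · exact ellr_nonneg hB x
          · exact div_self_le_one _
      _ = 2 * ellr c B x := by ring
  calc ∑ x, ∑ y, |B x y - fixCol c B x y| ≤ ∑ x, 2 * ellr c B x :=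
        Finset.sum_le_sum fun x _ => step1 x
    _ = 2 * ∑ x, ellr c B x := by rw [← Finset.mul_sum]
    _ = ∑ y, (dpos c B y + dneg c B y) := by
        rw [sum_ellr hB hc, Finset.sum_add_distrib,
          sum_dpos_eq_sum_dneg hc htot]
        ring
    _ = ∑ y, |c y - colsum B y| :=
        Finset.sum_congr rfl fun y _ => (abs_eq_dpos_add_dneg y).symm

end FixCol

/-- Combined per-edge projection: fix rows, then columns. -/
lemma proj_facts (hd : 0 < d) {r c : Fin d → ℝ} {A : Fin d → Fin d → ℝ}
    (hr : ∀ x, 0 ≤ r x) (hc : ∀ y, 0 ≤ c y)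
    (hrs : ∑ x, r x = 1) (hcs : ∑ y, c y = 1)
    (hA : ∀ x y, 0 ≤ A x y) :
    (∀ x y, 0 ≤ fixCol c (fixRow r A) x y) ∧
    (∀ x, ∑ y, fixCol c (fixRow r A) x y = r x) ∧
    (∀ y, ∑ x, fixCol c (fixRow r A) x y = c y) ∧
    (∑ x, ∑ y, |A x y - fixCol c (fixRow r A) x y| ≤
      2 * (∑ x, |(∑ y, A x y) - r x|) + ∑ y, |(∑ x, A x y) - c y|) := by
  set B1 := fixRow r A with hB1def
  have hB1nn : ∀ x y, 0 ≤ B1 x y := fixRow_nonneg hr hA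
  have hB1row : ∀ x, ∑ y, B1 x y = r x := fixRow_rowsum hd r A
  have htot : ∑ y, c y = ∑ x, ∑ y, B1 x y := by
    rw [hcs, Finset.sum_congr rfl fun x _ => hB1row x, hrs]
  refine ⟨fixCol_nonneg hB1nn hc, ?_, fixCol_colsum hB1nn hc htot, ?_⟩
  · intro x
    rw [fixCol_rowsum hB1nn hc htot x, hB1row x]
  · have t1 : ∑ x, ∑ y, |A x y - B1 x y| ≤ ∑ x, |(∑ y, A x y) - r x| :=
      Finset.sum_le_sum fun x _ => fixRow_l1 hd hr hA x
    have t2 : ∑ x, ∑ y, |B1 x y - fixCol c B1 x y| ≤ ∑ y, |c y - colsum B1 y| :=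
      fixCol_l1 hB1nn hc htot
    have t3 : ∀ y, |c y - colsum B1 y| ≤
        |(∑ x, A x y) - c y| + ∑ x, |A x y - B1 x y| := by
      intro y
      have he : c y - colsum B1 y =
          -((∑ x, A x y) - c y) + (∑ x, (A x y - B1 x y)) := by
        rw [Finset.sum_sub_distrib]
        show c y - (∑ x, B1 x y) = _
        ring
      rw [he]
      calc |-((∑ x, A x y) - c y) + (∑ x, (A x y - B1 x y))|
          ≤ |-((∑ x, A x y) - c y)| + |∑ x, (A x y - B1 x y)| := abs_add_le _ _
        _ ≤ |(∑ x, A x y) - c y| + ∑ x, |A x y - B1 x y| := by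
            rw [abs_neg]
            gcongr
            exact Finset.abs_sum_le_sum_abs _ _
    have t4 : ∑ y, |c y - colsum B1 y| ≤
        (∑ y, |(∑ x, A x y) - c y|) + ∑ x, ∑ y, |A x y - B1 x y| := by
      calc ∑ y, |c y - colsum B1 y|
          ≤ ∑ y, (|(∑ x, A x y) - c y| + ∑ x, |A x y - B1 x y|) :=
            Finset.sum_le_sum fun y _ => t3 y
        _ = (∑ y, |(∑ x, A x y) - c y|) + ∑ y, ∑ x, |A x y - B1 x y| :=
            Finset.sum_add_distrib
        _ = (∑ y, |(∑ x, A x y) - c y|) + ∑ x, ∑ y, |A x y - B1 x y| := by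
            rw [Finset.sum_comm]
    calc ∑ x, ∑ y, |A x y - fixCol c B1 x y|
        ≤ ∑ x, ∑ y, (|A x y - B1 x y| + |B1 x y - fixCol c B1 x y|) := by
          refine Finset.sum_le_sum fun x _ => Finset.sum_le_sum fun y _ => ?_
          calc |A x y - fixCol c B1 x y|
              = |(A x y - B1 x y) + (B1 x y - fixCol c B1 x y)| := by ring_nf
            _ ≤ |A x y - B1 x y| + |B1 x y - fixCol c B1 x y| := abs_add_le _ _
      _ = (∑ x, ∑ y, |A x y - B1 x y|) + ∑ x, ∑ y, |B1 x y - fixCol c B1 x y| := by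
          rw [← Finset.sum_add_distrib]
          exact Finset.sum_congr rfl fun x _ => Finset.sum_add_distrib
      _ ≤ (∑ x, ∑ y, |A x y - B1 x y|) + ∑ y, |c y - colsum B1 y| := by linarith
      _ ≤ (∑ x, ∑ y, |A x y - B1 x y|) +
            ((∑ y, |(∑ x, A x y) - c y|) + ∑ x, ∑ y, |A x y - B1 x y|) := by linarith
      _ ≤ 2 * (∑ x, |(∑ y, A x y) - r x|) + ∑ y, |(∑ x, A x y) - c y| := by linarith

end Stmt14Aux

/-- From `Γ ∈ 𝕃₂^ν` with `‖ν‖_∞ ≤ 1/(4d)` one can find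
`Γ' ∈ 𝕃₂` with all entries at least `τ` and
`‖Γ − Γ'‖₁ ≤ 2‖ν‖₁ + 2(|E|+n)d²τ`. -/
theorem stmt_14 {V : Type} [Fintype V] [DecidableEq V] {d : ℕ} (hd : 1 ≤ d)
    (E : Finset (V × V))
    (hcover : ∀ i : V, ∃ e ∈ E, e.1 = i ∨ e.2 = i)
    (τ : ℝ) (hτ0 : 0 < τ) (hτ : τ ≤ 1 / (8 * d ^ 2))
    (ν : Slk V d) (hν : isSlack E ν)
    (hinf : ∀ e ∈ E, ∀ x : Fin d,
      |ν.1 e x| ≤ 1 / (4 * d) ∧ |ν.2 e x| ≤ 1 / (4 * d))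
    (Γ : MV V d) (hΓ : memSL2 E ν Γ) :
    ∃ Γ' : MV V d, memSL2 E (0 : Slk V d) Γ' ∧
      (∀ i x, τ ≤ Γ'.1 i x) ∧
      (∀ e ∈ E, ∀ x y, τ ≤ Γ'.2 e x y) ∧
      mvL1 E (Γ - Γ') ≤
        2 * slkL1 E ν + 2 * ((E.card : ℝ) + Fintype.card V) * d ^ 2 * τ := by
  classical
  obtain ⟨hpos1, hsum1, hpos2, hrow, hcol, htot⟩ := hΓ
  have hd0 : (0:ℝ) < d := by exact_mod_cast Nat.lt_of_lt_of_le Nat.zero_lt_one hd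
  have hdne : (d:ℝ) ≠ 0 := hd0.ne'
  set l : ℝ := (d:ℝ)^2 * τ with hldef
  have hl0 : 0 < l := by positivity
  have hl1 : l ≤ 1 := by
    have h1 : (d:ℝ)^2 * τ ≤ (d:ℝ)^2 * (1/(8*(d:ℝ)^2)) :=
      mul_le_mul_of_nonneg_left (by exact_mod_cast hτ) (by positivity)
    have h2 : (d:ℝ)^2 * (1/(8*(d:ℝ)^2)) = 1/8 := by field_simp
    rw [hldef]
    nlinarith
  have hsum_const : ∀ a : ℝ, ∑ _x : Fin d, a = d * a := by
    intro a
    rw [Finset.sum_const, Finset.card_univ, Fintype.card_fin, nsmul_eq_mul]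
  have hld2 : (d:ℝ) * (l / (d:ℝ)^2) = l / d := by field_simp
  have hld : (d:ℝ) * (l / d) = l := by field_simp
  have hltau : l / (d:ℝ)^2 = τ := by rw [hldef]; field_simp
  -- the projected matrices
  set B : (V × V) → Fin d → Fin d → ℝ :=
    fun e => Stmt14Aux.fixCol (Γ.1 e.2) (Stmt14Aux.fixRow (Γ.1 e.1) (Γ.2 e)) with hBdef
  have hedge : ∀ e ∈ E,
      (∀ x y, 0 ≤ B e x y) ∧
      (∀ x, ∑ y, B e x y = Γ.1 e.1 x) ∧
      (∀ y, ∑ x, B e x y = Γ.1 e.2 y) ∧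
      (∑ x, ∑ y, |Γ.2 e x y - B e x y| ≤
        2 * (∑ x, |ν.1 e x|) + ∑ y, |ν.2 e y|) := by
    intro e he
    obtain ⟨p1, p2, p3, p4⟩ := Stmt14Aux.proj_facts (Nat.lt_of_lt_of_le Nat.zero_lt_one hd)
      (fun x => hpos1 e.1 x) (fun y => hpos1 e.2 y) (hsum1 e.1) (hsum1 e.2) (hpos2 e he)
    refine ⟨p1, p2, p3, ?_⟩
    have e1 : ∀ x : Fin d, |(∑ y, Γ.2 e x y) - Γ.1 e.1 x| = |ν.1 e x| := by
      intro x
      rw [hrow e he x]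
      congr 1
      ring
    have e2 : ∀ y : Fin d, |(∑ x, Γ.2 e x y) - Γ.1 e.2 y| = |ν.2 e y| := by
      intro y
      rw [hcol e he y]
      congr 1
      ring
    calc ∑ x, ∑ y, |Γ.2 e x y - B e x y|
        ≤ 2 * (∑ x, |(∑ y, Γ.2 e x y) - Γ.1 e.1 x|) +
            ∑ y, |(∑ x, Γ.2 e x y) - Γ.1 e.2 y| := p4
      _ = 2 * (∑ x, |ν.1 e x|) + ∑ y, |ν.2 e y| := by
          rw [Finset.sum_congr rfl fun x _ => e1 x, Finset.sum_congr rfl fun y _ => e2 y]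
  refine ⟨(fun i x => (1 - l) * Γ.1 i x + l / d,
           fun e x y => (1 - l) * B e x y + l / (d:ℝ)^2), ?_, ?_, ?_, ?_⟩
  · -- membership in 𝕃₂
    refine ⟨?_, ?_, ?_, ?_, ?_, ?_⟩
    · intro i x
      have := hpos1 i x
      have h1 : 0 ≤ l / (d:ℝ) := by positivity
      nlinarith
    · intro i
      show ∑ x, ((1 - l) * Γ.1 i x + l / d) = 1
      rw [Finset.sum_add_distrib, ← Finset.mul_sum, hsum1 i, hsum_const, hld]
      ring
    · intro e he x y
      have h1 := (hedge e he).1 x y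
      have h2 : 0 ≤ l / (d:ℝ)^2 := by positivity
      nlinarith
    · intro e he x
      show ∑ y, ((1 - l) * B e x y + l / (d:ℝ)^2) = _
      rw [Finset.sum_add_distrib, ← Finset.mul_sum, (hedge e he).2.1 x, hsum_const, hld2]
      simp
    · intro e he y
      show ∑ x, ((1 - l) * B e x y + l / (d:ℝ)^2) = _
      rw [Finset.sum_add_distrib, ← Finset.mul_sum, (hedge e he).2.2.1 y, hsum_const, hld2]
      simp
    · intro e he
      show ∑ x, ∑ y, ((1 - l) * B e x y + l / (d:ℝ)^2) = 1
      have hr : ∀ x : Fin d, ∑ y, ((1 - l) * B e x y + l / (d:ℝ)^2)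
          = (1 - l) * Γ.1 e.1 x + l / d := by
        intro x
        rw [Finset.sum_add_distrib, ← Finset.mul_sum, (hedge e he).2.1 x, hsum_const, hld2]
      rw [Finset.sum_congr rfl fun x _ => hr x, Finset.sum_add_distrib, ← Finset.mul_sum,
        hsum1 e.1, hsum_const, hld]
      ring
  · -- vertex entries ≥ τ
    intro i x
    have h1 : τ ≤ l / d := by
      rw [hldef]
      have : (d:ℝ)^2 * τ / d = d * τ := by field_simp
      rw [this]
      have hd1 : (1:ℝ) ≤ (d:ℝ) := by exact_mod_cast hd
      nlinarith [mul_le_mul_of_nonneg_right hd1 hτ0.le]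
    have h2 : 0 ≤ (1 - l) * Γ.1 i x := mul_nonneg (by linarith) (hpos1 i x)
    show τ ≤ (1 - l) * Γ.1 i x + l / d
    linarith
  · -- edge entries ≥ τ
    intro e he x y
    have h2 : 0 ≤ (1 - l) * B e x y := mul_nonneg (by linarith) ((hedge e he).1 x y)
    show τ ≤ (1 - l) * B e x y + l / (d:ℝ)^2
    rw [hltau]
    linarith
  · -- L1 distance
    have hvert : ∀ i : V, ∑ x, |Γ.1 i x - ((1 - l) * Γ.1 i x + l / d)| ≤ 2 * l := by
      intro i
      have hb : ∀ x : Fin d, |Γ.1 i x - ((1 - l) * Γ.1 i x + l / d)|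
          ≤ l * Γ.1 i x + l / d := by
        intro x
        have h1 : Γ.1 i x - ((1 - l) * Γ.1 i x + l / d) = l * Γ.1 i x - l / d := by ring
        rw [h1]
        have h2 : 0 ≤ l * Γ.1 i x := mul_nonneg hl0.le (hpos1 i x)
        have h3 : 0 ≤ l / (d:ℝ) := by positivity
        exact abs_le.mpr ⟨by linarith, by linarith⟩
      calc ∑ x, |Γ.1 i x - ((1 - l) * Γ.1 i x + l / d)|
          ≤ ∑ x, (l * Γ.1 i x + l / d) := Finset.sum_le_sum fun x _ => hb x
        _ = l * 1 + l := by
            rw [Finset.sum_add_distrib, ← Finset.mul_sum, hsum1 i, hsum_const, hld]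
        _ = 2 * l := by ring
    have hedgeL1 : ∀ e ∈ E, ∑ x, ∑ y, |Γ.2 e x y - ((1 - l) * B e x y + l / (d:ℝ)^2)|
        ≤ (2 * (∑ x, |ν.1 e x|) + ∑ y, |ν.2 e y|) + 2 * l := by
      intro e he
      obtain ⟨q1, q2, q3, q4⟩ := hedge e he
      have hb : ∀ x y : Fin d, |Γ.2 e x y - ((1 - l) * B e x y + l / (d:ℝ)^2)|
          ≤ |Γ.2 e x y - B e x y| + (l * B e x y + l / (d:ℝ)^2) := by
        intro x y
        have h1 : Γ.2 e x y - ((1 - l) * B e x y + l / (d:ℝ)^2)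
            = (Γ.2 e x y - B e x y) + (l * B e x y - l / (d:ℝ)^2) := by ring
        rw [h1]
        have h2 : 0 ≤ l * B e x y := mul_nonneg hl0.le (q1 x y)
        have h3 : 0 ≤ l / (d:ℝ)^2 := by positivity
        calc |(Γ.2 e x y - B e x y) + (l * B e x y - l / (d:ℝ)^2)|
            ≤ |Γ.2 e x y - B e x y| + |l * B e x y - l / (d:ℝ)^2| := abs_add_le _ _
          _ ≤ |Γ.2 e x y - B e x y| + (l * B e x y + l / (d:ℝ)^2) := by
              have := abs_le.mpr (show -(l * B e x y + l / (d:ℝ)^2) ≤ l * B e x y - l / (d:ℝ)^2 ∧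
                l * B e x y - l / (d:ℝ)^2 ≤ l * B e x y + l / (d:ℝ)^2 from ⟨by linarith, by linarith⟩)
              linarith
      have hBtot : ∑ x, ∑ y, B e x y = 1 := by
        rw [Finset.sum_congr rfl fun x _ => q2 x, hsum1 e.1]
      calc ∑ x, ∑ y, |Γ.2 e x y - ((1 - l) * B e x y + l / (d:ℝ)^2)|
          ≤ ∑ x, ∑ y, (|Γ.2 e x y - B e x y| + (l * B e x y + l / (d:ℝ)^2)) :=
            Finset.sum_le_sum fun x _ => Finset.sum_le_sum fun y _ => hb x y
        _ = (∑ x, ∑ y, |Γ.2 e x y - B e x y|) + (l * 1 + l) := by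
            have inner : ∀ x : Fin d,
                ∑ y, (|Γ.2 e x y - B e x y| + (l * B e x y + l / (d:ℝ)^2))
                = (∑ y, |Γ.2 e x y - B e x y|) +
                    ((l * (∑ y, B e x y)) + (d:ℝ) * (l / (d:ℝ)^2)) := by
              intro x
              rw [Finset.sum_add_distrib, Finset.sum_add_distrib, ← Finset.mul_sum, hsum_const]
            rw [Finset.sum_congr rfl fun x _ => inner x, Finset.sum_add_distrib,
              Finset.sum_add_distrib, ← Finset.mul_sum, hsum_const, hld2, hld, hBtot]
        _ ≤ (2 * (∑ x, |ν.1 e x|) + ∑ y, |ν.2 e y|) + 2 * l := by linarith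
    -- assemble the full L1 bound
    have hv : ∑ i : V, ∑ x, |Γ.1 i x - ((1 - l) * Γ.1 i x + l / d)|
        ≤ (Fintype.card V : ℝ) * (2 * l) := by
      calc ∑ i : V, ∑ x, |Γ.1 i x - ((1 - l) * Γ.1 i x + l / d)|
          ≤ ∑ _i : V, 2 * l := Finset.sum_le_sum fun i _ => hvert i
        _ = (Fintype.card V : ℝ) * (2 * l) := by
            rw [Finset.sum_const, Finset.card_univ, nsmul_eq_mul]
    have he2 : ∑ e ∈ E, ∑ x, ∑ y, |Γ.2 e x y - ((1 - l) * B e x y + l / (d:ℝ)^2)|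
        ≤ 2 * slkL1 E ν + (E.card : ℝ) * (2 * l) := by
      calc ∑ e ∈ E, ∑ x, ∑ y, |Γ.2 e x y - ((1 - l) * B e x y + l / (d:ℝ)^2)|
          ≤ ∑ e ∈ E, ((2 * (∑ x, |ν.1 e x|) + ∑ y, |ν.2 e y|) + 2 * l) :=
            Finset.sum_le_sum fun e he => hedgeL1 e he
        _ = (∑ e ∈ E, (2 * (∑ x, |ν.1 e x|) + ∑ y, |ν.2 e y|)) + (E.card : ℝ) * (2 * l) := by
            rw [Finset.sum_add_distrib, Finset.sum_const, nsmul_eq_mul]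
        _ ≤ 2 * slkL1 E ν + (E.card : ℝ) * (2 * l) := by
            have h1 : ∑ e ∈ E, (2 * (∑ x, |ν.1 e x|) + ∑ y, |ν.2 e y|)
                ≤ 2 * ∑ e ∈ E, ((∑ x, |ν.1 e x|) + ∑ x, |ν.2 e x|) := by
              rw [Finset.mul_sum]
              refine Finset.sum_le_sum fun e he => ?_
              have h0 : (0:ℝ) ≤ ∑ y, |ν.2 e y| :=
                Finset.sum_nonneg fun y _ => abs_nonneg _
              have h0' : (0:ℝ) ≤ ∑ x, |ν.1 e x| :=
                Finset.sum_nonneg fun x _ => abs_nonneg _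
              linarith
            rw [slkL1]
            linarith
    have hrhs : 2 * ((E.card : ℝ) + Fintype.card V) * (d:ℝ) ^ 2 * τ
        = (E.card : ℝ) * (2 * l) + (Fintype.card V : ℝ) * (2 * l) := by
      rw [hldef]; ring
    simp only [mvL1, Prod.fst_sub, Prod.snd_sub, Pi.sub_apply]
    rw [hrhs]
    linarith
end
end

section
/- Fix τ with 0 < τ ≤ 1/(8d²) and a slack vector ν with ‖ν‖_∞ ≤ 1/(4d). If Γ ∈ 𝕃₂, then there exists a marginal vector Γ' ∈ 𝕃₂^ν such that Γ'_i(x_i) ≥ τ for all i∈V and x_i∈χ, Γ'_{ij}(x_i,x_j) ≥ τ for all ij∈E and x_i,x_j∈χ, and ‖Γ − Γ'‖₁ ≤ 6·d·deg(G)·‖ν‖₁ + 8(|E|+n)d²τ. -/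
noncomputable section

/-- If the coordinates of `v` sum to zero, each entry is at most half the L1 norm. -/
lemma abs_le_half_sum {d : ℕ} (v : Fin d → ℝ) (h : ∑ x, v x = 0) (x : Fin d) :
    |v x| ≤ (∑ y, |v y|) / 2 := by
  have h1 : v x + ∑ y ∈ Finset.univ.erase x, v y = ∑ y, v y :=
    Finset.add_sum_erase _ v (Finset.mem_univ x)
  have h2 : |v x| + ∑ y ∈ Finset.univ.erase x, |v y| = ∑ y, |v y| :=
    Finset.add_sum_erase _ (fun y => |v y|) (Finset.mem_univ x)
  have h3 : |v x| = |∑ y ∈ Finset.univ.erase x, v y| := by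
    rw [h] at h1
    have : v x = -∑ y ∈ Finset.univ.erase x, v y := by linarith
    rw [this, abs_neg]
  have h4 : |∑ y ∈ Finset.univ.erase x, v y| ≤ ∑ y ∈ Finset.univ.erase x, |v y| :=
    Finset.abs_sum_le_sum_abs _ _
  linarith

/-- Sum of a constant over `Fin d`. -/
lemma sum_const_fin {d : ℕ} (c : ℝ) : ∑ _x : Fin d, c = d * c := by
  simp [Finset.sum_const, mul_comm]



/-- Each vertex is incident to at most 2 endpoints per edge: summing
incident-edge quantities over all vertices counts each edge at most twice. -/
lemma sum_incidence_le {V : Type} [Fintype V] [DecidableEq V] (E : Finset (V × V))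
    (g : V × V → ℝ) (hg : ∀ f, 0 ≤ g f) :
    ∑ i : V, ∑ f ∈ E.filter (fun f => f.1 = i ∨ f.2 = i), g f ≤ 2 * ∑ f ∈ E, g f := by
  have h1 : ∀ i : V, ∑ f ∈ E.filter (fun f => f.1 = i ∨ f.2 = i), g f
      = ∑ f ∈ E, if f.1 = i ∨ f.2 = i then g f else 0 := fun i => Finset.sum_filter _ _
  simp only [h1]
  rw [Finset.sum_comm]
  rw [Finset.mul_sum]
  apply Finset.sum_le_sum
  intro f hf
  have h2 : ∑ i : V, (if f.1 = i ∨ f.2 = i then g f else 0)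
      = ∑ i ∈ Finset.univ.filter (fun i => f.1 = i ∨ f.2 = i), g f :=
    (Finset.sum_filter _ _).symm
  rw [h2, Finset.sum_const]
  have hsub : Finset.univ.filter (fun i => f.1 = i ∨ f.2 = i) ⊆ {f.1, f.2} := by
    intro i hi
    simp only [Finset.mem_filter] at hi
    rcases hi.2 with h | h <;> simp [h.symm]
  have hcard : (Finset.univ.filter (fun i => f.1 = i ∨ f.2 = i)).card ≤ 2 := by
    calc _ ≤ ({f.1, f.2} : Finset V).card := Finset.card_le_card hsub
    _ ≤ 2 := Finset.card_insert_le _ _ |>.trans (by simp)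
  calc (Finset.univ.filter (fun i => f.1 = i ∨ f.2 = i)).card • g f
      = (Finset.univ.filter (fun i => f.1 = i ∨ f.2 = i)).card * g f := by
        simp [nsmul_eq_mul]
    _ ≤ 2 * g f := by
        apply mul_le_mul_of_nonneg_right _ (hg f)
        exact_mod_cast hcard

/-- Summing, over edges `e`, incident-edge quantities at an endpoint `π e`,
counts each edge at most `2 · deg` times. -/
lemma sum_endpoint_le {V : Type} [Fintype V] [DecidableEq V] (E : Finset (V × V))
    (g : V × V → ℝ) (hg : ∀ f, 0 ≤ g f) (π : V × V → V) (hπ : ∀ e, π e = e.1 ∨ π e = e.2) :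
    ∑ e ∈ E, ∑ f ∈ E.filter (fun f => f.1 = π e ∨ f.2 = π e), g f
      ≤ 2 * (degG E : ℝ) * ∑ f ∈ E, g f := by
  have h1 : ∀ e : V × V, ∑ f ∈ E.filter (fun f => f.1 = π e ∨ f.2 = π e), g f
      = ∑ f ∈ E, if f.1 = π e ∨ f.2 = π e then g f else 0 := fun e => Finset.sum_filter _ _
  simp only [h1]
  rw [Finset.sum_comm]
  rw [Finset.mul_sum]
  apply Finset.sum_le_sum
  intro f hf
  have h2 : ∑ e ∈ E, (if f.1 = π e ∨ f.2 = π e then g f else 0)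
      = ∑ e ∈ E.filter (fun e => f.1 = π e ∨ f.2 = π e), g f :=
    (Finset.sum_filter _ _).symm
  rw [h2, Finset.sum_const]
  have hsub : E.filter (fun e => f.1 = π e ∨ f.2 = π e)
      ⊆ (E.filter fun e => e.1 = f.1 ∨ e.2 = f.1) ∪ (E.filter fun e => e.1 = f.2 ∨ e.2 = f.2) := by
    intro e he
    simp only [Finset.mem_filter] at he
    rcases he.2 with h | h <;> rcases hπ e with hp | hp <;>
      simp only [Finset.mem_union, Finset.mem_filter] <;>
      [left; left; right; right] <;>
      exact ⟨he.1, by rw [hp] at h; simp [h.symm]⟩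
  have hd1 : ∀ v : V, (E.filter fun e => e.1 = v ∨ e.2 = v).card ≤ degG E := fun v => by
    have := Finset.le_sup (f := fun i : V => (E.filter fun e => e.1 = i ∨ e.2 = i).card)
      (Finset.mem_univ v)
    exact this
  have hcard : (E.filter (fun e => f.1 = π e ∨ f.2 = π e)).card ≤ 2 * degG E := by
    calc _ ≤ ((E.filter fun e => e.1 = f.1 ∨ e.2 = f.1)
          ∪ (E.filter fun e => e.1 = f.2 ∨ e.2 = f.2)).card := Finset.card_le_card hsub
      _ ≤ _ + _ := Finset.card_union_le _ _
      _ ≤ degG E + degG E := Nat.add_le_add (hd1 f.1) (hd1 f.2)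
      _ = 2 * degG E := (two_mul _).symm
  calc (E.filter (fun e => f.1 = π e ∨ f.2 = π e)).card • g f
      = ((E.filter (fun e => f.1 = π e ∨ f.2 = π e)).card : ℝ) * g f := by simp [nsmul_eq_mul]
    _ ≤ 2 * (degG E : ℝ) * g f := by
        apply mul_le_mul_of_nonneg_right _ (hg f)
        calc ((E.filter (fun e => f.1 = π e ∨ f.2 = π e)).card : ℝ)
            ≤ ((2 * degG E : ℕ) : ℝ) := by exact_mod_cast hcard
          _ = 2 * (degG E : ℝ) := by push_cast; ring



section constr

variable {V : Type} [Fintype V] [DecidableEq V] {d : ℕ}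

/-- Half of the local slack L1 mass at a vertex. -/
def TV (E : Finset (V × V)) (ν : Slk V d) (i : V) : ℝ :=
  ∑ f ∈ E.filter (fun f => f.1 = i ∨ f.2 = i), ((∑ x, |ν.1 f x|) + ∑ x, |ν.2 f x|) / 2

/-- Vertex mixing weight. -/
def dlt (E : Finset (V × V)) (ν : Slk V d) (τ : ℝ) (i : V) : ℝ :=
  d * min (TV E ν i) (1 / (4 * (d:ℝ))) + (d:ℝ)^2 * τ

/-- Edge mixing weight. -/
def eps (E : Finset (V × V)) (ν : Slk V d) (τ : ℝ) (e : V × V) : ℝ :=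
  dlt E ν τ e.1 + dlt E ν τ e.2

def pfun (E : Finset (V × V)) (ν : Slk V d) (τ : ℝ) (Γ : MV V d) (e : V × V) (x : Fin d) : ℝ :=
  dlt E ν τ e.2 * Γ.1 e.1 x + dlt E ν τ e.1 / d + ν.1 e x

def qfun (E : Finset (V × V)) (ν : Slk V d) (τ : ℝ) (Γ : MV V d) (e : V × V) (y : Fin d) : ℝ :=
  dlt E ν τ e.1 * Γ.1 e.2 y + dlt E ν τ e.2 / d + ν.2 e y

/-- The final marginal vector: mix the slack-corrected point with weight
`θ = 2d²τ` of the uniform-ish point of `𝕃₂^ν`. -/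
def GamF (E : Finset (V × V)) (ν : Slk V d) (τ : ℝ) (Γ : MV V d) : MV V d :=
  (fun i x => (1 - 2*(d:ℝ)^2*τ) * ((1 - dlt E ν τ i) * Γ.1 i x + dlt E ν τ i / d)
      + 2*(d:ℝ)^2*τ * (1 / d),
   fun e x y => (1 - 2*(d:ℝ)^2*τ) * ((1 - eps E ν τ e) * Γ.2 e x y
      + pfun E ν τ Γ e x * qfun E ν τ Γ e y / eps E ν τ e)
      + 2*(d:ℝ)^2*τ * (1 / (d:ℝ)^2 + ν.1 e x / d + ν.2 e y / d))

set_option linter.unusedSectionVars false in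
lemma TV_nonneg (E : Finset (V × V)) (ν : Slk V d) (i : V) : 0 ≤ TV E ν i := by
  apply Finset.sum_nonneg
  intro f _
  have h1 : 0 ≤ ∑ x, |ν.1 f x| := Finset.sum_nonneg fun x _ => abs_nonneg _
  have h2 : 0 ≤ ∑ x, |ν.2 f x| := Finset.sum_nonneg fun x _ => abs_nonneg _
  linarith

lemma dlt_bounds (E : Finset (V × V)) (ν : Slk V d) (τ : ℝ) (hd : 1 ≤ d)
    (hτ0 : 0 < τ) (hτ' : (d:ℝ)^2 * τ ≤ 1/8) (i : V) :
    (d:ℝ)^2 * τ ≤ dlt E ν τ i ∧ dlt E ν τ i ≤ 3/8 := by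
  have hd0 : (0:ℝ) < d := by exact_mod_cast Nat.lt_of_lt_of_le Nat.zero_lt_one hd
  have hd1 : (1:ℝ) ≤ d := by exact_mod_cast hd
  have hmin0 : 0 ≤ min (TV E ν i) (1 / (4 * (d:ℝ))) :=
    le_min (TV_nonneg E ν i) (by positivity)
  have hminU : min (TV E ν i) (1 / (4 * (d:ℝ))) ≤ 1 / (4 * (d:ℝ)) := min_le_right _ _
  constructor
  · have : 0 ≤ (d:ℝ) * min (TV E ν i) (1 / (4 * (d:ℝ))) := by positivity
    unfold dlt; linarith
  · have h1 : (d:ℝ) * min (TV E ν i) (1 / (4 * (d:ℝ))) ≤ (d:ℝ) * (1 / (4 * (d:ℝ))) :=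
      mul_le_mul_of_nonneg_left hminU (le_of_lt hd0)
    have h2 : (d:ℝ) * (1 / (4 * (d:ℝ))) = 1/4 := by field_simp
    unfold dlt; rw [h2] at h1; linarith

lemma eps_bounds (E : Finset (V × V)) (ν : Slk V d) (τ : ℝ) (hd : 1 ≤ d)
    (hτ0 : 0 < τ) (hτ' : (d:ℝ)^2 * τ ≤ 1/8) (e : V × V) :
    0 < eps E ν τ e ∧ eps E ν τ e ≤ 3/4 := by
  obtain ⟨a1, a2⟩ := dlt_bounds E ν τ hd hτ0 hτ' e.1
  obtain ⟨b1, b2⟩ := dlt_bounds E ν τ hd hτ0 hτ' e.2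
  have hd0 : (0:ℝ) < d := by exact_mod_cast Nat.lt_of_lt_of_le Nat.zero_lt_one hd
  have : 0 < (d:ℝ)^2 * τ := by positivity
  unfold eps
  constructor <;> linarith

lemma entry_bound1 (E : Finset (V × V)) (ν : Slk V d) (hν : isSlack E ν)
    (hinf : ∀ e ∈ E, ∀ x : Fin d, |ν.1 e x| ≤ 1 / (4 * d) ∧ |ν.2 e x| ≤ 1 / (4 * d))
    {e : V × V} (he : e ∈ E) (x : Fin d) :
    |ν.1 e x| ≤ min (TV E ν e.1) (1 / (4 * (d:ℝ))) := by
  apply le_min _ (hinf e he x).1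
  have h1 : |ν.1 e x| ≤ (∑ y, |ν.1 e y|) / 2 := abs_le_half_sum _ (hν e he).1 x
  have h2 : (0:ℝ) ≤ ∑ y, |ν.2 e y| := Finset.sum_nonneg fun y _ => abs_nonneg _
  have hmem : e ∈ E.filter (fun f => f.1 = e.1 ∨ f.2 = e.1) := by
    simp [Finset.mem_filter, he]
  have h3 : ((∑ y, |ν.1 e y|) + ∑ y, |ν.2 e y|) / 2 ≤ TV E ν e.1 := by
    apply Finset.single_le_sum (f := fun f => ((∑ y, |ν.1 f y|) + ∑ y, |ν.2 f y|) / 2) _ hmem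
    intro f _
    have a1 : (0:ℝ) ≤ ∑ y, |ν.1 f y| := Finset.sum_nonneg fun y _ => abs_nonneg _
    have a2 : (0:ℝ) ≤ ∑ y, |ν.2 f y| := Finset.sum_nonneg fun y _ => abs_nonneg _
    linarith
  linarith

lemma entry_bound2 (E : Finset (V × V)) (ν : Slk V d) (hν : isSlack E ν)
    (hinf : ∀ e ∈ E, ∀ x : Fin d, |ν.1 e x| ≤ 1 / (4 * d) ∧ |ν.2 e x| ≤ 1 / (4 * d))
    {e : V × V} (he : e ∈ E) (y : Fin d) :
    |ν.2 e y| ≤ min (TV E ν e.2) (1 / (4 * (d:ℝ))) := by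
  apply le_min _ (hinf e he y).2
  have h1 : |ν.2 e y| ≤ (∑ z, |ν.2 e z|) / 2 := abs_le_half_sum _ (hν e he).2 y
  have h2 : (0:ℝ) ≤ ∑ z, |ν.1 e z| := Finset.sum_nonneg fun z _ => abs_nonneg _
  have hmem : e ∈ E.filter (fun f => f.1 = e.2 ∨ f.2 = e.2) := by
    simp [Finset.mem_filter, he]
  have h3 : ((∑ z, |ν.1 e z|) + ∑ z, |ν.2 e z|) / 2 ≤ TV E ν e.2 := by
    apply Finset.single_le_sum (f := fun f => ((∑ z, |ν.1 f z|) + ∑ z, |ν.2 f z|) / 2) _ hmem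
    intro f _
    have a1 : (0:ℝ) ≤ ∑ z, |ν.1 f z| := Finset.sum_nonneg fun z _ => abs_nonneg _
    have a2 : (0:ℝ) ≤ ∑ z, |ν.2 f z| := Finset.sum_nonneg fun z _ => abs_nonneg _
    linarith
  linarith

/-- `dlt i / d` exceeds the local min-capped slack entry bound by `d·τ`. -/
lemma dlt_div (E : Finset (V × V)) (ν : Slk V d) (τ : ℝ) (hd : 1 ≤ d) (i : V) :
    dlt E ν τ i / d = min (TV E ν i) (1 / (4 * (d:ℝ))) + d * τ := by
  have hd0 : (d:ℝ) ≠ 0 := by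
    have : (1:ℝ) ≤ d := by exact_mod_cast hd
    linarith
  unfold dlt; field_simp

lemma pfun_nonneg (E : Finset (V × V)) (ν : Slk V d) (τ : ℝ) (Γ : MV V d)
    (hd : 1 ≤ d) (hτ0 : 0 < τ) (hν : isSlack E ν)
    (hinf : ∀ e ∈ E, ∀ x : Fin d, |ν.1 e x| ≤ 1 / (4 * d) ∧ |ν.2 e x| ≤ 1 / (4 * d))
    (hΓ1 : ∀ i x, 0 ≤ Γ.1 i x)
    {e : V × V} (he : e ∈ E) (x : Fin d) : 0 ≤ pfun E ν τ Γ e x := by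
  have hd0 : (0:ℝ) < d := by exact_mod_cast Nat.lt_of_lt_of_le Nat.zero_lt_one hd
  have h1 : |ν.1 e x| ≤ min (TV E ν e.1) (1 / (4 * (d:ℝ))) := entry_bound1 E ν hν hinf he x
  have h2 : -ν.1 e x ≤ |ν.1 e x| := neg_le_abs _
  have h3 : dlt E ν τ e.1 / d = min (TV E ν e.1) (1 / (4 * (d:ℝ))) + d * τ := dlt_div E ν τ hd e.1
  have h4 : 0 ≤ dlt E ν τ e.2 * Γ.1 e.1 x := by
    apply mul_nonneg _ (hΓ1 e.1 x)
    have hmin0 : 0 ≤ min (TV E ν e.2) (1 / (4 * (d:ℝ))) :=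
      le_min (TV_nonneg E ν e.2) (by positivity)
    unfold dlt; positivity
  have h5 : 0 < (d:ℝ) * τ := by positivity
  unfold pfun
  linarith

lemma qfun_nonneg (E : Finset (V × V)) (ν : Slk V d) (τ : ℝ) (Γ : MV V d)
    (hd : 1 ≤ d) (hτ0 : 0 < τ) (hν : isSlack E ν)
    (hinf : ∀ e ∈ E, ∀ x : Fin d, |ν.1 e x| ≤ 1 / (4 * d) ∧ |ν.2 e x| ≤ 1 / (4 * d))
    (hΓ1 : ∀ i x, 0 ≤ Γ.1 i x)
    {e : V × V} (he : e ∈ E) (y : Fin d) : 0 ≤ qfun E ν τ Γ e y := by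
  have hd0 : (0:ℝ) < d := by exact_mod_cast Nat.lt_of_lt_of_le Nat.zero_lt_one hd
  have h1 : |ν.2 e y| ≤ min (TV E ν e.2) (1 / (4 * (d:ℝ))) := entry_bound2 E ν hν hinf he y
  have h2 : -ν.2 e y ≤ |ν.2 e y| := neg_le_abs _
  have h3 : dlt E ν τ e.2 / d = min (TV E ν e.2) (1 / (4 * (d:ℝ))) + d * τ := dlt_div E ν τ hd e.2
  have h4 : 0 ≤ dlt E ν τ e.1 * Γ.1 e.2 y := by
    apply mul_nonneg _ (hΓ1 e.2 y)
    have hmin0 : 0 ≤ min (TV E ν e.1) (1 / (4 * (d:ℝ))) :=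
      le_min (TV_nonneg E ν e.1) (by positivity)
    unfold dlt; positivity
  have h5 : 0 < (d:ℝ) * τ := by positivity
  unfold qfun
  linarith

lemma sum_pfun (E : Finset (V × V)) (ν : Slk V d) (τ : ℝ) (Γ : MV V d) (hd : 1 ≤ d)
    (hΓ2 : ∀ i, ∑ x, Γ.1 i x = 1) {e : V × V} (hνs : ∑ x, ν.1 e x = 0) :
    ∑ x, pfun E ν τ Γ e x = eps E ν τ e := by
  have hd0 : (d:ℝ) ≠ 0 := by
    have : (1:ℝ) ≤ d := by exact_mod_cast hd
    linarith
  unfold pfun eps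
  rw [Finset.sum_add_distrib, Finset.sum_add_distrib, ← Finset.mul_sum, hΓ2, hνs,
    sum_const_fin]
  field_simp
  try ring

lemma sum_qfun (E : Finset (V × V)) (ν : Slk V d) (τ : ℝ) (Γ : MV V d) (hd : 1 ≤ d)
    (hΓ2 : ∀ i, ∑ x, Γ.1 i x = 1) {e : V × V} (hνs : ∑ y, ν.2 e y = 0) :
    ∑ y, qfun E ν τ Γ e y = eps E ν τ e := by
  have hd0 : (d:ℝ) ≠ 0 := by
    have : (1:ℝ) ≤ d := by exact_mod_cast hd
    linarith
  unfold qfun eps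
  rw [Finset.sum_add_distrib, Finset.sum_add_distrib, ← Finset.mul_sum, hΓ2, hνs,
    sum_const_fin]
  field_simp
  try ring

lemma vertex_sum_GamF (E : Finset (V × V)) (ν : Slk V d) (τ : ℝ) (Γ : MV V d)
    (hd : 1 ≤ d) (hΓ2 : ∀ i, ∑ x, Γ.1 i x = 1) (i : V) :
    ∑ x, (GamF E ν τ Γ).1 i x = 1 := by
  have hd0 : (d:ℝ) ≠ 0 := by
    have : (1:ℝ) ≤ d := by exact_mod_cast hd
    linarith
  have expand : ∀ x, (GamF E ν τ Γ).1 i x =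
      ((1 - 2*(d:ℝ)^2*τ) * (1 - dlt E ν τ i)) * Γ.1 i x
      + ((1 - 2*(d:ℝ)^2*τ) * (dlt E ν τ i / d) + 2*(d:ℝ)^2*τ * (1/d)) := by
    intro x; simp only [GamF]; ring
  rw [Finset.sum_congr rfl (fun x _ => expand x), Finset.sum_add_distrib,
    ← Finset.mul_sum, hΓ2, sum_const_fin]
  field_simp
  ring

lemma row_sum_GamF (E : Finset (V × V)) (ν : Slk V d) (τ : ℝ) (Γ : MV V d)
    (hd : 1 ≤ d) (hτ0 : 0 < τ) (hτ' : (d:ℝ)^2 * τ ≤ 1/8)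
    (hν : isSlack E ν) (hΓ2 : ∀ i, ∑ x, Γ.1 i x = 1)
    {e : V × V} (he : e ∈ E) (hΓrow : ∀ x, ∑ y, Γ.2 e x y = Γ.1 e.1 x) (x : Fin d) :
    ∑ y, (GamF E ν τ Γ).2 e x y = (GamF E ν τ Γ).1 e.1 x + ν.1 e x := by
  have hd0 : (d:ℝ) ≠ 0 := by
    have : (1:ℝ) ≤ d := by exact_mod_cast hd
    linarith
  have hq : ∑ y, qfun E ν τ Γ e y = eps E ν τ e := sum_qfun E ν τ Γ hd hΓ2 (hν e he).2
  have hε : eps E ν τ e ≠ 0 := ne_of_gt (eps_bounds E ν τ hd hτ0 hτ' e).1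
  have expand : ∀ y, (GamF E ν τ Γ).2 e x y =
      ((1 - 2*(d:ℝ)^2*τ) * (1 - eps E ν τ e)) * Γ.2 e x y
      + ((1 - 2*(d:ℝ)^2*τ) * pfun E ν τ Γ e x / eps E ν τ e) * qfun E ν τ Γ e y
      + (2*(d:ℝ)^2*τ * (1/(d:ℝ)^2) + 2*(d:ℝ)^2*τ * (ν.1 e x / d))
      + (2*(d:ℝ)^2*τ / d) * ν.2 e y := by
    intro y; simp only [GamF]; ring
  rw [Finset.sum_congr rfl (fun y _ => expand y), Finset.sum_add_distrib,
    Finset.sum_add_distrib, Finset.sum_add_distrib, ← Finset.mul_sum, ← Finset.mul_sum,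
    ← Finset.mul_sum, hq, hΓrow, (hν e he).2, sum_const_fin]
  simp only [GamF]
  unfold pfun eps at *
  field_simp
  ring

lemma col_sum_GamF (E : Finset (V × V)) (ν : Slk V d) (τ : ℝ) (Γ : MV V d)
    (hd : 1 ≤ d) (hτ0 : 0 < τ) (hτ' : (d:ℝ)^2 * τ ≤ 1/8)
    (hν : isSlack E ν) (hΓ2 : ∀ i, ∑ x, Γ.1 i x = 1)
    {e : V × V} (he : e ∈ E) (hΓcol : ∀ y, ∑ x, Γ.2 e x y = Γ.1 e.2 y) (y : Fin d) :
    ∑ x, (GamF E ν τ Γ).2 e x y = (GamF E ν τ Γ).1 e.2 y + ν.2 e y := by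
  have hd0 : (d:ℝ) ≠ 0 := by
    have : (1:ℝ) ≤ d := by exact_mod_cast hd
    linarith
  have hp : ∑ x, pfun E ν τ Γ e x = eps E ν τ e := sum_pfun E ν τ Γ hd hΓ2 (hν e he).1
  have hε : eps E ν τ e ≠ 0 := ne_of_gt (eps_bounds E ν τ hd hτ0 hτ' e).1
  have expand : ∀ x, (GamF E ν τ Γ).2 e x y =
      ((1 - 2*(d:ℝ)^2*τ) * (1 - eps E ν τ e)) * Γ.2 e x y
      + ((1 - 2*(d:ℝ)^2*τ) * qfun E ν τ Γ e y / eps E ν τ e) * pfun E ν τ Γ e x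
      + (2*(d:ℝ)^2*τ * (1/(d:ℝ)^2) + 2*(d:ℝ)^2*τ * (ν.2 e y / d))
      + (2*(d:ℝ)^2*τ / d) * ν.1 e x := by
    intro x; simp only [GamF]; ring
  rw [Finset.sum_congr rfl (fun x _ => expand x), Finset.sum_add_distrib,
    Finset.sum_add_distrib, Finset.sum_add_distrib, ← Finset.mul_sum, ← Finset.mul_sum,
    ← Finset.mul_sum, hp, hΓcol, (hν e he).1, sum_const_fin]
  simp only [GamF]
  unfold qfun eps at *
  field_simp
  ring

lemma tot_sum_GamF (E : Finset (V × V)) (ν : Slk V d) (τ : ℝ) (Γ : MV V d)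
    (hd : 1 ≤ d) (hτ0 : 0 < τ) (hτ' : (d:ℝ)^2 * τ ≤ 1/8)
    (hν : isSlack E ν) (hΓ2 : ∀ i, ∑ x, Γ.1 i x = 1)
    {e : V × V} (he : e ∈ E) (hΓrow : ∀ x, ∑ y, Γ.2 e x y = Γ.1 e.1 x) :
    ∑ x, ∑ y, (GamF E ν τ Γ).2 e x y = 1 := by
  rw [Finset.sum_congr rfl
    (fun x _ => row_sum_GamF E ν τ Γ hd hτ0 hτ' hν hΓ2 he hΓrow x)]
  rw [Finset.sum_add_distrib, vertex_sum_GamF E ν τ Γ hd hΓ2, (hν e he).1]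
  norm_num

/-- Lower bound on `W`'s edge entries. -/
lemma W_lb (E : Finset (V × V)) (ν : Slk V d) (hd : 1 ≤ d)
    (hinf : ∀ e ∈ E, ∀ x : Fin d, |ν.1 e x| ≤ 1 / (4 * d) ∧ |ν.2 e x| ≤ 1 / (4 * d))
    {e : V × V} (he : e ∈ E) (x y : Fin d) :
    1 / (2*(d:ℝ)^2) ≤ 1 / (d:ℝ)^2 + ν.1 e x / d + ν.2 e y / d := by
  have hd0 : (0:ℝ) < d := by exact_mod_cast Nat.lt_of_lt_of_le Nat.zero_lt_one hd
  have h1 : -(1 / (4 * (d:ℝ))) ≤ ν.1 e x := neg_le_of_abs_le (hinf e he x).1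
  have h2 : -(1 / (4 * (d:ℝ))) ≤ ν.2 e y := neg_le_of_abs_le (hinf e he y).2
  have h3 : -(1 / (4 * (d:ℝ))) / d ≤ ν.1 e x / d := by
    apply div_le_div_of_nonneg_right h1 hd0.le
  have h4 : -(1 / (4 * (d:ℝ))) / d ≤ ν.2 e y / d := by
    apply div_le_div_of_nonneg_right h2 hd0.le
  have h5 : -(1 / (4 * (d:ℝ))) / d = -(1 / (4 * (d:ℝ)^2)) := by field_simp
  have h6 : 1 / (2*(d:ℝ)^2) = 1 / (d:ℝ)^2 - 1 / (4 * (d:ℝ)^2) - 1 / (4 * (d:ℝ)^2) := by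
    field_simp; ring
  rw [h5] at h3 h4
  linarith

lemma W_nonneg (E : Finset (V × V)) (ν : Slk V d) (hd : 1 ≤ d)
    (hinf : ∀ e ∈ E, ∀ x : Fin d, |ν.1 e x| ≤ 1 / (4 * d) ∧ |ν.2 e x| ≤ 1 / (4 * d))
    {e : V × V} (he : e ∈ E) (x y : Fin d) :
    0 ≤ 1 / (d:ℝ)^2 + ν.1 e x / d + ν.2 e y / d := by
  have hd0 : (0:ℝ) < d := by exact_mod_cast Nat.lt_of_lt_of_le Nat.zero_lt_one hd
  have := W_lb E ν hd hinf he x y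
  have : (0:ℝ) < 1 / (2*(d:ℝ)^2) := by positivity
  linarith [W_lb E ν hd hinf he x y]

lemma vertex_floor_GamF (E : Finset (V × V)) (ν : Slk V d) (τ : ℝ) (Γ : MV V d)
    (hd : 1 ≤ d) (hτ0 : 0 < τ) (hτ' : (d:ℝ)^2 * τ ≤ 1/8)
    (hΓ1 : ∀ i x, 0 ≤ Γ.1 i x) (i : V) (x : Fin d) :
    τ ≤ (GamF E ν τ Γ).1 i x := by
  have hd0 : (0:ℝ) < d := by exact_mod_cast Nat.lt_of_lt_of_le Nat.zero_lt_one hd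
  have hd1 : (1:ℝ) ≤ d := by exact_mod_cast hd
  obtain ⟨a1, a2⟩ := dlt_bounds E ν τ hd hτ0 hτ' i
  have hθ0 : 0 ≤ 2*(d:ℝ)^2*τ := by positivity
  have hθ1 : 2*(d:ℝ)^2*τ ≤ 1/4 := by linarith
  have hδ0 : 0 ≤ dlt E ν τ i := le_trans (by positivity) a1
  have hterm1 : 0 ≤ (1 - 2*(d:ℝ)^2*τ) * ((1 - dlt E ν τ i) * Γ.1 i x + dlt E ν τ i / d) := by
    apply mul_nonneg (by linarith)
    have := mul_nonneg (show (0:ℝ) ≤ 1 - dlt E ν τ i by linarith) (hΓ1 i x)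
    have : 0 ≤ dlt E ν τ i / d := by positivity
    linarith [mul_nonneg (show (0:ℝ) ≤ 1 - dlt E ν τ i by linarith) (hΓ1 i x)]
  have hterm2 : τ ≤ 2*(d:ℝ)^2*τ * (1/d) := by
    have : 2*(d:ℝ)^2*τ * (1/d) = 2*(d*τ) := by field_simp
    rw [this]
    nlinarith
  simp only [GamF]
  linarith

lemma edge_floor_GamF (E : Finset (V × V)) (ν : Slk V d) (τ : ℝ) (Γ : MV V d)
    (hd : 1 ≤ d) (hτ0 : 0 < τ) (hτ' : (d:ℝ)^2 * τ ≤ 1/8)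
    (hν : isSlack E ν)
    (hinf : ∀ e ∈ E, ∀ x : Fin d, |ν.1 e x| ≤ 1 / (4 * d) ∧ |ν.2 e x| ≤ 1 / (4 * d))
    (hΓ1 : ∀ i x, 0 ≤ Γ.1 i x) (hΓ3 : ∀ e ∈ E, ∀ x y, 0 ≤ Γ.2 e x y)
    {e : V × V} (he : e ∈ E) (x y : Fin d) :
    τ ≤ (GamF E ν τ Γ).2 e x y := by
  have hd0 : (0:ℝ) < d := by exact_mod_cast Nat.lt_of_lt_of_le Nat.zero_lt_one hd
  obtain ⟨hε0, hε1⟩ := eps_bounds E ν τ hd hτ0 hτ' e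
  have hθ0 : 0 < 2*(d:ℝ)^2*τ := by positivity
  have hθ1 : 2*(d:ℝ)^2*τ ≤ 1/4 := by linarith
  have hterm1 : 0 ≤ (1 - 2*(d:ℝ)^2*τ) * ((1 - eps E ν τ e) * Γ.2 e x y
      + pfun E ν τ Γ e x * qfun E ν τ Γ e y / eps E ν τ e) := by
    apply mul_nonneg (by linarith)
    have t1 : 0 ≤ (1 - eps E ν τ e) * Γ.2 e x y :=
      mul_nonneg (by linarith) (hΓ3 e he x y)
    have t2 : 0 ≤ pfun E ν τ Γ e x * qfun E ν τ Γ e y / eps E ν τ e :=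
      div_nonneg (mul_nonneg (pfun_nonneg E ν τ Γ hd hτ0 hν hinf hΓ1 he x)
        (qfun_nonneg E ν τ Γ hd hτ0 hν hinf hΓ1 he y)) (le_of_lt hε0)
    linarith
  have hterm2 : τ ≤ 2*(d:ℝ)^2*τ * (1 / (d:ℝ)^2 + ν.1 e x / d + ν.2 e y / d) := by
    have hW := W_lb E ν hd hinf he x y
    have step : 2*(d:ℝ)^2*τ * (1 / (2*(d:ℝ)^2)) ≤
        2*(d:ℝ)^2*τ * (1 / (d:ℝ)^2 + ν.1 e x / d + ν.2 e y / d) :=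
      mul_le_mul_of_nonneg_left hW (le_of_lt hθ0)
    have : 2*(d:ℝ)^2*τ * (1 / (2*(d:ℝ)^2)) = τ := by field_simp
    linarith
  simp only [GamF]
  linarith

lemma vertex_cost_GamF (E : Finset (V × V)) (ν : Slk V d) (τ : ℝ) (Γ : MV V d)
    (hd : 1 ≤ d) (hτ0 : 0 < τ) (hτ' : (d:ℝ)^2 * τ ≤ 1/8)
    (hΓ1 : ∀ i x, 0 ≤ Γ.1 i x) (hΓ2 : ∀ i, ∑ x, Γ.1 i x = 1) (i : V) :
    ∑ x, |Γ.1 i x - (GamF E ν τ Γ).1 i x| ≤ 2 * dlt E ν τ i + 2 * (2*(d:ℝ)^2*τ) := by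
  have hd0 : (0:ℝ) < d := by exact_mod_cast Nat.lt_of_lt_of_le Nat.zero_lt_one hd
  obtain ⟨a1, a2⟩ := dlt_bounds E ν τ hd hτ0 hτ' i
  have hδ0 : 0 ≤ dlt E ν τ i := le_trans (by positivity) a1
  have hθ0 : 0 ≤ 2*(d:ℝ)^2*τ := by positivity
  have hθ1 : 2*(d:ℝ)^2*τ ≤ 1/4 := by linarith
  set c : ℝ := (1 - 2*(d:ℝ)^2*τ) * dlt E ν τ i + 2*(d:ℝ)^2*τ with hc
  have hc0 : 0 ≤ c := by
    have : 0 ≤ (1 - 2*(d:ℝ)^2*τ) * dlt E ν τ i := mul_nonneg (by linarith) hδ0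
    rw [hc]; linarith
  have hcU : c ≤ dlt E ν τ i + 2*(d:ℝ)^2*τ := by
    have : 0 ≤ 2*(d:ℝ)^2*τ * dlt E ν τ i := mul_nonneg hθ0 hδ0
    rw [hc]; nlinarith
  have heq : ∀ x, Γ.1 i x - (GamF E ν τ Γ).1 i x = c * (Γ.1 i x - 1/d) := by
    intro x; rw [hc]; simp only [GamF]; ring
  have hbd : ∀ x, |Γ.1 i x - (GamF E ν τ Γ).1 i x| ≤ c * (Γ.1 i x + 1/d) := by
    intro x
    rw [heq x, abs_mul, abs_of_nonneg hc0]
    apply mul_le_mul_of_nonneg_left _ hc0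
    rw [abs_le]
    have := hΓ1 i x
    have : (0:ℝ) < 1/d := by positivity
    constructor <;> linarith [hΓ1 i x]
  calc ∑ x, |Γ.1 i x - (GamF E ν τ Γ).1 i x| ≤ ∑ x, c * (Γ.1 i x + 1/d) :=
      Finset.sum_le_sum fun x _ => hbd x
    _ = c * (1 + d * (1/d)) := by
        rw [← Finset.mul_sum, Finset.sum_add_distrib, hΓ2, sum_const_fin]
    _ = 2 * c := by field_simp; ring
    _ ≤ 2 * dlt E ν τ i + 2 * (2*(d:ℝ)^2*τ) := by linarith

lemma edge_cost_GamF (E : Finset (V × V)) (ν : Slk V d) (τ : ℝ) (Γ : MV V d)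
    (hd : 1 ≤ d) (hτ0 : 0 < τ) (hτ' : (d:ℝ)^2 * τ ≤ 1/8)
    (hν : isSlack E ν)
    (hinf : ∀ e ∈ E, ∀ x : Fin d, |ν.1 e x| ≤ 1 / (4 * d) ∧ |ν.2 e x| ≤ 1 / (4 * d))
    (hΓ1 : ∀ i x, 0 ≤ Γ.1 i x) (hΓ2 : ∀ i, ∑ x, Γ.1 i x = 1)
    (hΓ3 : ∀ e ∈ E, ∀ x y, 0 ≤ Γ.2 e x y)
    {e : V × V} (he : e ∈ E) (hΓtot : ∑ x, ∑ y, Γ.2 e x y = 1) :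
    ∑ x, ∑ y, |Γ.2 e x y - (GamF E ν τ Γ).2 e x y|
      ≤ 2 * eps E ν τ e + 2 * (2*(d:ℝ)^2*τ) := by
  have hd0 : (0:ℝ) < d := by exact_mod_cast Nat.lt_of_lt_of_le Nat.zero_lt_one hd
  obtain ⟨hε0, hε1⟩ := eps_bounds E ν τ hd hτ0 hτ' e
  have hεne : eps E ν τ e ≠ 0 := ne_of_gt hε0
  have hθ0 : 0 ≤ 2*(d:ℝ)^2*τ := by positivity
  have hθ1 : 2*(d:ℝ)^2*τ ≤ 1/4 := by linarith
  set θ : ℝ := 2*(d:ℝ)^2*τ with hθ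
  set ε : ℝ := eps E ν τ e with hε
  set u : ℝ := (1 - θ) * ε + θ with hu
  set v : ℝ := (1 - θ) / ε with hv
  set Wf : Fin d → Fin d → ℝ := fun x y => 1/(d:ℝ)^2 + ν.1 e x / d + ν.2 e y / d with hWf
  -- pointwise bound
  have hpt : ∀ x y, |Γ.2 e x y - (GamF E ν τ Γ).2 e x y|
      ≤ u * Γ.2 e x y + v * (pfun E ν τ Γ e x * qfun E ν τ Γ e y) + θ * Wf x y := by
    intro x y
    have hp0 := pfun_nonneg E ν τ Γ hd hτ0 hν hinf hΓ1 he x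
    have hq0 := qfun_nonneg E ν τ Γ hd hτ0 hν hinf hΓ1 he y
    have hW0 : 0 ≤ Wf x y := W_nonneg E ν hd hinf he x y
    have hΓ0 := hΓ3 e he x y
    have hdiff : Γ.2 e x y - (GamF E ν τ Γ).2 e x y
        = (1 - θ) * (ε * Γ.2 e x y - pfun E ν τ Γ e x * qfun E ν τ Γ e y / ε)
          + θ * (Γ.2 e x y - Wf x y) := by
      rw [hθ, hε, hWf]; simp only [GamF]; ring
    have hpq0 : 0 ≤ pfun E ν τ Γ e x * qfun E ν τ Γ e y / ε :=
      div_nonneg (mul_nonneg hp0 hq0) (le_of_lt hε0)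
    have b1 : |ε * Γ.2 e x y - pfun E ν τ Γ e x * qfun E ν τ Γ e y / ε|
        ≤ ε * Γ.2 e x y + pfun E ν τ Γ e x * qfun E ν τ Γ e y / ε := by
      have h0 : 0 ≤ ε * Γ.2 e x y := mul_nonneg (le_of_lt hε0) hΓ0
      rw [abs_le]; constructor <;> linarith
    have b2 : |Γ.2 e x y - Wf x y| ≤ Γ.2 e x y + Wf x y := by
      rw [abs_le]; constructor <;> linarith
    calc |Γ.2 e x y - (GamF E ν τ Γ).2 e x y|
        ≤ |(1 - θ) * (ε * Γ.2 e x y - pfun E ν τ Γ e x * qfun E ν τ Γ e y / ε)|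
          + |θ * (Γ.2 e x y - Wf x y)| := by rw [hdiff]; exact abs_add_le _ _
      _ = (1 - θ) * |ε * Γ.2 e x y - pfun E ν τ Γ e x * qfun E ν τ Γ e y / ε|
          + θ * |Γ.2 e x y - Wf x y| := by
          rw [abs_mul, abs_mul, abs_of_nonneg (by linarith : (0:ℝ) ≤ 1 - θ),
            abs_of_nonneg hθ0]
      _ ≤ (1 - θ) * (ε * Γ.2 e x y + pfun E ν τ Γ e x * qfun E ν τ Γ e y / ε)
          + θ * (Γ.2 e x y + Wf x y) :=
          add_le_add (mul_le_mul_of_nonneg_left b1 (by linarith))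
            (mul_le_mul_of_nonneg_left b2 hθ0)
      _ = u * Γ.2 e x y + v * (pfun E ν τ Γ e x * qfun E ν τ Γ e y) + θ * Wf x y := by
          rw [hu, hv]; field_simp; ring
  -- sums of the three pieces
  have hp : ∑ x, pfun E ν τ Γ e x = ε := sum_pfun E ν τ Γ hd hΓ2 (hν e he).1
  have hq : ∑ y, qfun E ν τ Γ e y = ε := sum_qfun E ν τ Γ hd hΓ2 (hν e he).2
  have hpq : ∑ x, ∑ y, pfun E ν τ Γ e x * qfun E ν τ Γ e y = ε * ε := by
    rw [← Finset.sum_mul_sum, hp, hq]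
  have hWrow : ∀ x, ∑ y, Wf x y = 1/d + ν.1 e x := by
    intro x
    rw [hWf]
    simp only
    rw [Finset.sum_add_distrib, Finset.sum_add_distrib, sum_const_fin, sum_const_fin,
      ← Finset.sum_div, (hν e he).2]
    field_simp
    try ring
  have hWsum : ∑ x, ∑ y, Wf x y = 1 := by
    rw [Finset.sum_congr rfl (fun x _ => hWrow x), Finset.sum_add_distrib, sum_const_fin,
      (hν e he).1]
    field_simp
    norm_num
  have hsplit : ∑ x, ∑ y, (u * Γ.2 e x y
        + v * (pfun E ν τ Γ e x * qfun E ν τ Γ e y) + θ * Wf x y)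
      = u * (∑ x, ∑ y, Γ.2 e x y)
        + v * (∑ x, ∑ y, pfun E ν τ Γ e x * qfun E ν τ Γ e y)
        + θ * (∑ x, ∑ y, Wf x y) := by
    simp only [Finset.mul_sum, Finset.sum_add_distrib]
  calc ∑ x, ∑ y, |Γ.2 e x y - (GamF E ν τ Γ).2 e x y|
      ≤ ∑ x, ∑ y, (u * Γ.2 e x y
          + v * (pfun E ν τ Γ e x * qfun E ν τ Γ e y) + θ * Wf x y) :=
        Finset.sum_le_sum fun x _ => Finset.sum_le_sum fun y _ => hpt x y
    _ = u * 1 + v * (ε * ε) + θ * 1 := by rw [hsplit, hΓtot, hpq, hWsum]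
    _ ≤ 2 * ε + 2 * θ := by
        have hveps : v * (ε * ε) = (1 - θ) * ε := by rw [hv]; field_simp
        rw [hveps, hu]
        nlinarith [mul_nonneg hθ0 (le_of_lt hε0)]

end constr

/-- From `Γ ∈ 𝕃₂` one can find `Γ' ∈ 𝕃₂^ν` with all entries
at least `τ` and `‖Γ − Γ'‖₁ ≤ 6·d·deg(G)·‖ν‖₁ + 8(|E|+n)d²τ`. -/
theorem stmt_15 {V : Type} [Fintype V] [DecidableEq V] {d : ℕ} (hd : 1 ≤ d)
    (E : Finset (V × V))
    (hcover : ∀ i : V, ∃ e ∈ E, e.1 = i ∨ e.2 = i)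
    (τ : ℝ) (hτ0 : 0 < τ) (hτ : τ ≤ 1 / (8 * d ^ 2))
    (ν : Slk V d) (hν : isSlack E ν)
    (hinf : ∀ e ∈ E, ∀ x : Fin d,
      |ν.1 e x| ≤ 1 / (4 * d) ∧ |ν.2 e x| ≤ 1 / (4 * d))
    (Γ : MV V d) (hΓ : memSL2 E (0 : Slk V d) Γ) :
    ∃ Γ' : MV V d, memSL2 E ν Γ' ∧
      (∀ i x, τ ≤ Γ'.1 i x) ∧
      (∀ e ∈ E, ∀ x y, τ ≤ Γ'.2 e x y) ∧
      mvL1 E (Γ - Γ') ≤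
        6 * d * degG E * slkL1 E ν +
          8 * ((E.card : ℝ) + Fintype.card V) * d ^ 2 * τ := by
  classical
  have hd0 : (0:ℝ) < d := by exact_mod_cast Nat.lt_of_lt_of_le Nat.zero_lt_one hd
  have hsq : (0:ℝ) < (d:ℝ)^2 := by positivity
  have hτ' : (d:ℝ)^2 * τ ≤ 1/8 := by
    calc (d:ℝ)^2 * τ ≤ (d:ℝ)^2 * (1/(8*(d:ℝ)^2)) :=
          mul_le_mul_of_nonneg_left (by exact_mod_cast hτ) (le_of_lt hsq)
      _ = 1/8 := by field_simp
  obtain ⟨hΓ1, hΓ2, hΓ3, hΓ4, hΓ5, hΓ6⟩ := hΓ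
  have hΓrow : ∀ e ∈ E, ∀ x, ∑ y, Γ.2 e x y = Γ.1 e.1 x := fun e he x => by
    simpa using hΓ4 e he x
  have hΓcol : ∀ e ∈ E, ∀ y, ∑ x, Γ.2 e x y = Γ.1 e.2 y := fun e he y => by
    simpa using hΓ5 e he y
  refine ⟨GamF E ν τ Γ, ⟨?_, ?_, ?_, ?_, ?_, ?_⟩, ?_, ?_, ?_⟩
  · exact fun i x => le_trans (le_of_lt hτ0)
      (vertex_floor_GamF E ν τ Γ hd hτ0 hτ' hΓ1 i x)
  · exact fun i => vertex_sum_GamF E ν τ Γ hd hΓ2 i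
  · exact fun e he x y => le_trans (le_of_lt hτ0)
      (edge_floor_GamF E ν τ Γ hd hτ0 hτ' hν hinf hΓ1 hΓ3 he x y)
  · exact fun e he x => row_sum_GamF E ν τ Γ hd hτ0 hτ' hν hΓ2 he (hΓrow e he) x
  · exact fun e he y => col_sum_GamF E ν τ Γ hd hτ0 hτ' hν hΓ2 he (hΓcol e he) y
  · exact fun e he => tot_sum_GamF E ν τ Γ hd hτ0 hτ' hν hΓ2 he (hΓrow e he)
  · exact fun i x => vertex_floor_GamF E ν τ Γ hd hτ0 hτ' hΓ1 i x
  · exact fun e he x y => edge_floor_GamF E ν τ Γ hd hτ0 hτ' hν hinf hΓ1 hΓ3 he x y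
  -- the L1 estimate
  have hKnn : 0 ≤ slkL1 E ν := by
    apply Finset.sum_nonneg
    intro f _
    have a1 : (0:ℝ) ≤ ∑ x, |ν.1 f x| := Finset.sum_nonneg fun x _ => abs_nonneg _
    have a2 : (0:ℝ) ≤ ∑ x, |ν.2 f x| := Finset.sum_nonneg fun x _ => abs_nonneg _
    linarith
  have hgnn : ∀ f : V × V, 0 ≤ ((∑ x, |ν.1 f x|) + ∑ x, |ν.2 f x|)/2 := by
    intro f
    have a1 : (0:ℝ) ≤ ∑ x, |ν.1 f x| := Finset.sum_nonneg fun x _ => abs_nonneg _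
    have a2 : (0:ℝ) ≤ ∑ x, |ν.2 f x| := Finset.sum_nonneg fun x _ => abs_nonneg _
    linarith
  have hgsum : ∑ f ∈ E, ((∑ x, |ν.1 f x|) + ∑ x, |ν.2 f x|)/2 = slkL1 E ν / 2 := by
    rw [eq_div_iff (by norm_num : (2:ℝ) ≠ 0), Finset.sum_mul]
    unfold slkL1
    exact Finset.sum_congr rfl fun f _ => by ring
  -- (A) vertex weights
  have hTV : ∑ i : V, TV E ν i ≤ slkL1 E ν := by
    have h := sum_incidence_le E (fun f => ((∑ x, |ν.1 f x|) + ∑ x, |ν.2 f x|)/2)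
      hgnn
    calc ∑ i : V, TV E ν i
        ≤ 2 * ∑ f ∈ E, ((∑ x, |ν.1 f x|) + ∑ x, |ν.2 f x|)/2 := h
      _ = slkL1 E ν := by rw [hgsum]; ring
  have hdltsum : ∑ i : V, dlt E ν τ i
      ≤ (d:ℝ) * slkL1 E ν + (Fintype.card V : ℝ) * ((d:ℝ)^2 * τ) := by
    unfold dlt
    have expand0 : ∑ i : V, ((d:ℝ) * min (TV E ν i) (1 / (4 * (d:ℝ))) + (d:ℝ)^2*τ)
        = (d:ℝ) * (∑ i : V, min (TV E ν i) (1 / (4 * (d:ℝ))))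
          + (Fintype.card V : ℝ) * ((d:ℝ)^2*τ) := by
      simp only [Finset.sum_add_distrib, Finset.sum_const, nsmul_eq_mul,
        Finset.mul_sum, Finset.card_univ]
    rw [expand0]
    have h1 : ∑ i : V, min (TV E ν i) (1 / (4 * (d:ℝ))) ≤ ∑ i : V, TV E ν i :=
      Finset.sum_le_sum fun i _ => min_le_left _ _
    have h2 : (d:ℝ) * ∑ i : V, min (TV E ν i) (1 / (4 * (d:ℝ)))
        ≤ (d:ℝ) * slkL1 E ν :=
      mul_le_mul_of_nonneg_left (le_trans h1 hTV) (le_of_lt hd0)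
    linarith
  -- (B) edge weights
  have hends : ∀ (π : V × V → V), (∀ e : V × V, π e = e.1 ∨ π e = e.2) →
      ∑ e ∈ E, TV E ν (π e) ≤ (degG E : ℝ) * slkL1 E ν := by
    intro π hπ
    have h := sum_endpoint_le E (fun f => ((∑ x, |ν.1 f x|) + ∑ x, |ν.2 f x|)/2)
      hgnn π hπ
    calc ∑ e ∈ E, TV E ν (π e)
        ≤ 2 * (degG E : ℝ) * ∑ f ∈ E, ((∑ x, |ν.1 f x|) + ∑ x, |ν.2 f x|)/2 := h
      _ = (degG E : ℝ) * slkL1 E ν := by rw [hgsum]; ring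
  have hepsum : ∑ e ∈ E, eps E ν τ e
      ≤ 2 * (d:ℝ) * (degG E : ℝ) * slkL1 E ν + 2 * (E.card : ℝ) * ((d:ℝ)^2 * τ) := by
    unfold eps dlt
    have h1 := hends Prod.fst (fun e => Or.inl rfl)
    have h2 := hends Prod.snd (fun e => Or.inr rfl)
    have m1 : ∑ e ∈ E, min (TV E ν e.1) (1 / (4 * (d:ℝ))) ≤ ∑ e ∈ E, TV E ν e.1 :=
      Finset.sum_le_sum fun e _ => min_le_left _ _
    have m2 : ∑ e ∈ E, min (TV E ν e.2) (1 / (4 * (d:ℝ))) ≤ ∑ e ∈ E, TV E ν e.2 :=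
      Finset.sum_le_sum fun e _ => min_le_left _ _
    have expand : ∑ e ∈ E, ((d:ℝ) * min (TV E ν e.1) (1 / (4 * (d:ℝ))) + (d:ℝ)^2*τ
        + ((d:ℝ) * min (TV E ν e.2) (1 / (4 * (d:ℝ))) + (d:ℝ)^2*τ))
        = (d:ℝ) * (∑ e ∈ E, min (TV E ν e.1) (1 / (4 * (d:ℝ))))
          + (d:ℝ) * (∑ e ∈ E, min (TV E ν e.2) (1 / (4 * (d:ℝ))))
          + (E.card : ℝ) * (2 * ((d:ℝ)^2*τ)) := by
      simp only [Finset.sum_add_distrib, Finset.sum_const, nsmul_eq_mul,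
        Finset.mul_sum]
      ring
    rw [expand]
    have b1 : (d:ℝ) * (∑ e ∈ E, min (TV E ν e.1) (1 / (4 * (d:ℝ))))
        ≤ (d:ℝ) * ((degG E : ℝ) * slkL1 E ν) :=
      mul_le_mul_of_nonneg_left (le_trans m1 h1) (le_of_lt hd0)
    have b2 : (d:ℝ) * (∑ e ∈ E, min (TV E ν e.2) (1 / (4 * (d:ℝ))))
        ≤ (d:ℝ) * ((degG E : ℝ) * slkL1 E ν) :=
      mul_le_mul_of_nonneg_left (le_trans m2 h2) (le_of_lt hd0)
    linarith
  -- slkL1 ≤ deg · slkL1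
  have hdegK : slkL1 E ν ≤ (degG E : ℝ) * slkL1 E ν := by
    rcases E.eq_empty_or_nonempty with hE | ⟨e, he⟩
    · simp [slkL1, hE]
    · have h1 : 1 ≤ degG E := by
        have hm : e ∈ E.filter (fun f => f.1 = e.1 ∨ f.2 = e.1) := by
          simp [Finset.mem_filter, he]
        have : 1 ≤ (E.filter (fun f => f.1 = e.1 ∨ f.2 = e.1)).card :=
          Finset.card_pos.mpr ⟨e, hm⟩
        calc 1 ≤ (E.filter (fun f => f.1 = e.1 ∨ f.2 = e.1)).card := this
          _ ≤ degG E := Finset.le_sup (f := fun i : V =>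
              (E.filter fun f => f.1 = i ∨ f.2 = i).card) (Finset.mem_univ e.1)
      have h1' : (1:ℝ) ≤ (degG E : ℝ) := by exact_mod_cast h1
      nlinarith
  -- assemble
  have hcostV : ∑ i : V, ∑ x, |(Γ - GamF E ν τ Γ).1 i x|
      ≤ ∑ i : V, (2 * dlt E ν τ i + 2 * (2*(d:ℝ)^2*τ)) := by
    apply Finset.sum_le_sum
    intro i _
    have : ∀ x, (Γ - GamF E ν τ Γ).1 i x = Γ.1 i x - (GamF E ν τ Γ).1 i x :=
      fun x => rfl
    simp only [this]
    exact vertex_cost_GamF E ν τ Γ hd hτ0 hτ' hΓ1 hΓ2 i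
  have hcostE : ∑ e ∈ E, ∑ x, ∑ y, |(Γ - GamF E ν τ Γ).2 e x y|
      ≤ ∑ e ∈ E, (2 * eps E ν τ e + 2 * (2*(d:ℝ)^2*τ)) := by
    apply Finset.sum_le_sum
    intro e he
    have : ∀ x y, (Γ - GamF E ν τ Γ).2 e x y = Γ.2 e x y - (GamF E ν τ Γ).2 e x y :=
      fun x y => rfl
    simp only [this]
    exact edge_cost_GamF E ν τ Γ hd hτ0 hτ' hν hinf hΓ1 hΓ2 hΓ3 he (hΓ6 e he)
  have hsum1 : ∑ i : V, (2 * dlt E ν τ i + 2 * (2*(d:ℝ)^2*τ))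
      = 2 * (∑ i : V, dlt E ν τ i) + (Fintype.card V : ℝ) * (4*(d:ℝ)^2*τ) := by
    simp only [Finset.sum_add_distrib, Finset.sum_const, nsmul_eq_mul,
      Finset.mul_sum, Finset.card_univ]
    ring
  have hsum2 : ∑ e ∈ E, (2 * eps E ν τ e + 2 * (2*(d:ℝ)^2*τ))
      = 2 * (∑ e ∈ E, eps E ν τ e) + (E.card : ℝ) * (4*(d:ℝ)^2*τ) := by
    simp only [Finset.sum_add_distrib, Finset.sum_const, nsmul_eq_mul,
      Finset.mul_sum]
    ring
  have hdK : (d:ℝ) * slkL1 E ν ≤ (d:ℝ) * ((degG E : ℝ) * slkL1 E ν) :=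
    mul_le_mul_of_nonneg_left hdegK (le_of_lt hd0)
  have hn0 : (0:ℝ) ≤ (Fintype.card V : ℝ) := by positivity
  have hm0 : (0:ℝ) ≤ (E.card : ℝ) := by positivity
  unfold mvL1
  calc (∑ i : V, ∑ x, |(Γ - GamF E ν τ Γ).1 i x|)
        + ∑ e ∈ E, ∑ x, ∑ y, |(Γ - GamF E ν τ Γ).2 e x y|
      ≤ (2 * (∑ i : V, dlt E ν τ i) + (Fintype.card V : ℝ) * (4*(d:ℝ)^2*τ))
        + (2 * (∑ e ∈ E, eps E ν τ e) + (E.card : ℝ) * (4*(d:ℝ)^2*τ)) := by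
        rw [← hsum1, ← hsum2]; exact add_le_add hcostV hcostE
    _ ≤ 6 * d * degG E * slkL1 E ν + 8 * ((E.card : ℝ) + Fintype.card V) * d ^ 2 * τ := by
        nlinarith [hdltsum, hepsum, hdK, mul_nonneg hn0 (le_of_lt (mul_pos hsq hτ0)),
          mul_nonneg hm0 (le_of_lt (mul_pos hsq hτ0))]
end
end
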